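/- arXiv:1801.04233 — 5 statements merged into one kernel-verified Lean document; each statement's English description precedes it below -/
import Mathlib

section
/- For any Coxeter system (W,S), any I, J ⊆ S, and any w ∈ W, the right projection P^J and left projection Q^I commute: P^J(Q^I(w)) = Q^I(P^J(w)). -/
open CoxeterSystem

variable {B W : Type*} [Group W] {M : CoxeterMatrix B}

/-- The standard parabolic subgroup `W_J`. -/
def CoxeterSystem.parabolic (cs : CoxeterSystem M W) (J : Set B) : Subgroup W :=
  Subgroup.closure (cs.simple '' J)

/-- The set of minimal-length left coset representatives `W^J`. -/
def CoxeterSystem.minReps (cs : CoxeterSystem M W) (J : Set B) : Set W :=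
  {w : W | ∀ s ∈ J, cs.length w < cs.length (w * cs.simple s)}

/-- The set of minimal-length right coset representatives `^J W`. -/
def CoxeterSystem.minRepsLeft (cs : CoxeterSystem M W) (J : Set B) : Set W :=
  {w : W | ∀ s ∈ J, cs.length w < cs.length (cs.simple s * w)}

/-- `P` is the family of right parabolic projections `P^J : W → W`,
`w ↦ w^J` where `w = w^J * w_J`, `w^J ∈ W^J`, `w_J ∈ W_J`. -/
def CoxeterSystem.IsProjFamily (cs : CoxeterSystem M W) (P : Set B → W → W) : Prop :=
  ∀ (J : Set B) (w : W), P J w ∈ cs.minReps J ∧ (P J w)⁻¹ * w ∈ cs.parabolic J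

/-- `Q` is the family of left parabolic projections `Q^J : W → W`,
`w ↦ ^J w` where `w = w_J' * ^J w`, `^J w ∈ ^J W`, `w_J' ∈ W_J`. -/
def CoxeterSystem.IsLProjFamily (cs : CoxeterSystem M W) (Q : Set B → W → W) : Prop :=
  ∀ (J : Set B) (w : W), Q J w ∈ cs.minRepsLeft J ∧ w * (Q J w)⁻¹ ∈ cs.parabolic J


open List

open scoped Classical

namespace MyCox

variable (cs : CoxeterSystem M W)

local prefix:100 "s" => cs.simple
local prefix:100 "π" => cs.wordProd
local prefix:100 "ℓ" => cs.length
local prefix:100 "ris" => cs.rightInvSeq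
local prefix:100 "lis" => cs.leftInvSeq

private lemma zmod2_add_self (x : ZMod 2) : x + x = 0 := by revert x; decide

/-- The basic function underlying the reflection-parity representation. -/
noncomputable def permMapFun (i : B) : W × ZMod 2 → W × ZMod 2 :=
  fun p => (s i * p.1 * s i, p.2 + if p.1 = s i then 1 else 0)

lemma simple_conj_eq_simple_iff (i : B) (t : W) :
    (s i * t * s i = s i) ↔ (t = s i) := by
  constructor
  · intro h
    have := congrArg (fun x => s i * x * s i) h
    simpa [mul_assoc, cs.simple_mul_simple_cancel_left,
      cs.simple_mul_simple_cancel_right] using this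
  · intro h; simp [h, cs.simple_mul_simple_cancel_right, cs.simple_mul_simple_self]

lemma permMapFun_involutive (i : B) : Function.Involutive (permMapFun cs i) := by
  intro p
  obtain ⟨t, ε⟩ := p
  simp only [permMapFun, Prod.mk.injEq]
  constructor
  · simp [mul_assoc, cs.simple_mul_simple_cancel_left, cs.simple_mul_simple_cancel_right]
  · simp only [MyCox.simple_conj_eq_simple_iff cs i]; rw [add_assoc]
    rcases em (t = s i) with ht | ht <;> simp [ht, zmod2_add_self]

/-- The permutation of `W × ZMod 2` attached to a simple generator. -/
noncomputable def permMap (i : B) : Equiv.Perm (W × ZMod 2) :=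
  (permMapFun_involutive cs i).toPerm

@[simp] lemma permMap_apply (i : B) (p : W × ZMod 2) :
    permMap cs i p = (s i * p.1 * s i, p.2 + if p.1 = s i then 1 else 0) := rfl

lemma prodPermMap_eval (ω : List B) (t : W) (ε : ZMod 2) :
    ((ω.map (permMap cs)).prod) (t, ε) =
      (π ω * t * (π ω)⁻¹, ε + (List.count t (ris ω) : ZMod 2)) := by
  induction ω generalizing ε with
  | nil => simp
  | cons i ω ih =>
    rw [List.map_cons, List.prod_cons, cs.wordProd_cons]
    have h0 : (permMap cs i * (List.map (permMap cs) ω).prod) (t, ε)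
        = permMap cs i (((List.map (permMap cs) ω).prod) (t, ε)) := rfl
    rw [h0, ih, permMap_apply]
    simp only [Prod.mk.injEq]
    constructor
    · simp [mul_assoc]
    · have hris : ris (i :: ω) = ((π ω)⁻¹ * (s i) * (π ω)) :: ris ω := rfl
      rw [hris, List.count_cons]
      have hiff : (π ω * t * (π ω)⁻¹ = s i) ↔ ((π ω)⁻¹ * (s i) * (π ω) = t) := by
        constructor
        · intro h; rw [← h]; group
        · intro h; rw [← h]; group
      push_cast
      rw [add_assoc]
      congr 1
      rcases em ((π ω)⁻¹ * (s i) * (π ω) = t) with h | h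
      · simp [h, hiff, beq_iff_eq, add_comm]
      · have h2 : ¬ (π ω * t * (π ω)⁻¹ = s i) := fun hc => h (hiff.mp hc)
        simp [h, h2, beq_iff_eq]

lemma drop_alternatingWord (i j : B) (c n : ℕ) :
    (alternatingWord i j n).drop c = alternatingWord i j (n - c) := by
  induction n generalizing c with
  | zero => simp [alternatingWord]
  | succ n ih =>
    cases c with
    | zero => simp
    | succ c =>
      rw [alternatingWord_succ' i j n, List.drop_succ_cons, ih c]
      congr 1
      omega

lemma simple_mul_q_pow (i j : B) (n : ℕ) :
    s j * (s i * s j) ^ n = ((s i * s j) ^ n)⁻¹ * s j := by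
  induction n with
  | zero => simp
  | succ n ih =>
    have h1 : s j * (s i * s j) = (s i * s j)⁻¹ * s j := by
      rw [mul_inv_rev, cs.inv_simple, cs.inv_simple]
      group
    calc s j * (s i * s j) ^ (n + 1)
        = (s j * (s i * s j)) * (s i * s j) ^ n := by
          rw [pow_succ']; simp only [mul_assoc]
      _ = ((s i * s j)⁻¹ * s j) * (s i * s j) ^ n := by rw [h1]
      _ = (s i * s j)⁻¹ * (((s i * s j) ^ n)⁻¹ * s j) := by rw [mul_assoc, ih]
      _ = ((s i * s j) ^ n * (s i * s j))⁻¹ * s j := by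
          rw [mul_inv_rev ((s i * s j) ^ n) (s i * s j), mul_assoc]
      _ = ((s i * s j) ^ (n + 1))⁻¹ * s j := by rw [← pow_succ]

lemma getD_ris_alternatingWord (i j : B) (n k : ℕ) (hk : k < n) :
    (ris (alternatingWord i j n)).getD k 1 = s j * (s i * s j) ^ (n - 1 - k) := by
  rw [cs.getD_rightInvSeq]
  set d := n - 1 - k with hd
  clear_value d
  have hdrop : (alternatingWord i j n).drop (k + 1) = alternatingWord i j d := by
    rw [drop_alternatingWord]; congr 1; omega
  have hget : (alternatingWord i j n)[k]? = some (if Even d then j else i) := by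
    have h1 : (alternatingWord i j n)[k]? = ((alternatingWord i j n).drop k)[0]? := by
      simp [List.getElem?_drop]
    rw [h1, drop_alternatingWord]
    have h2 : n - k = d + 1 := by omega
    rw [h2, alternatingWord_succ']
    rfl
  rw [hdrop, hget]
  simp only [Option.map_some, Option.getD_some]
  rw [cs.prod_alternatingWord_eq_mul_pow]
  rcases Nat.even_or_odd d with he | ho
  · obtain ⟨e, rfl⟩ : ∃ e, d = 2 * e := by
      obtain ⟨e, he'⟩ := he; exact ⟨e, by omega⟩
    have h3 : Even (2 * e) := even_two_mul e
    rw [if_pos h3, if_pos h3, one_mul]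
    have h4 : 2 * e / 2 = e := by omega
    rw [h4]
    calc ((s i * s j) ^ e)⁻¹ * s j * (s i * s j) ^ e
        = ((s i * s j) ^ e)⁻¹ * (((s i * s j) ^ e)⁻¹ * s j) := by
          rw [mul_assoc, simple_mul_q_pow cs i j e]
      _ = (((s i * s j) ^ e) * ((s i * s j) ^ e))⁻¹ * s j := by
          rw [mul_inv_rev, mul_assoc]
      _ = (((s i * s j) ^ (2 * e)))⁻¹ * s j := by
          rw [← pow_add]
          have he2 : e + e = 2 * e := by omega
          rw [he2]
      _ = s j * (s i * s j) ^ (2 * e) := (simple_mul_q_pow cs i j (2*e)).symm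
  · obtain ⟨e, rfl⟩ : ∃ e, d = 2 * e + 1 := by
      obtain ⟨e, he'⟩ := ho; exact ⟨e, by omega⟩
    have h3 : ¬ Even (2 * e + 1) := by simp [Nat.even_add_one, Nat.even_mul]
    rw [if_neg h3, if_neg h3]
    have h4 : (2 * e + 1) / 2 = e := by omega
    rw [h4]
    have hjij : s j * s i * s j = (s i * s j)⁻¹ * s j := by
      rw [mul_inv_rev, cs.inv_simple, cs.inv_simple]
    calc (s j * (s i * s j) ^ e)⁻¹ * s i * (s j * (s i * s j) ^ e)
        = ((s i * s j) ^ e)⁻¹ * (s j * s i * s j) * (s i * s j) ^ e := by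
          rw [mul_inv_rev (s j) ((s i * s j) ^ e), cs.inv_simple j]
          simp only [mul_assoc]
      _ = ((s i * s j) ^ e)⁻¹ * ((s i * s j)⁻¹ * s j) * (s i * s j) ^ e := by rw [hjij]
      _ = ((s i * s j) ^ (e+1))⁻¹ * (s j * (s i * s j) ^ e) := by
          rw [pow_succ' (s i * s j) e, mul_inv_rev (s i * s j) ((s i * s j) ^ e)]
          simp only [mul_assoc]
      _ = ((s i * s j) ^ (e+1))⁻¹ * (((s i * s j) ^ e)⁻¹ * s j) := by
          rw [simple_mul_q_pow cs i j e]
      _ = ((s i * s j) ^ e * (s i * s j) ^ (e+1))⁻¹ * s j := by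
          rw [mul_inv_rev ((s i * s j) ^ e) ((s i * s j) ^ (e+1)), mul_assoc]
      _ = ((s i * s j) ^ (2 * e + 1))⁻¹ * s j := by
          rw [← pow_add]
          have he2 : e + (e + 1) = 2 * e + 1 := by omega
          rw [he2]
      _ = s j * (s i * s j) ^ (2 * e + 1) := (simple_mul_q_pow cs i j (2*e+1)).symm

lemma take_m_eq_drop_m (i j : B) (m : ℕ) (hq : (s i * s j) ^ m = 1) :
    (ris (alternatingWord i j (2 * m))).take m = (ris (alternatingWord i j (2 * m))).drop m := by
  set l := ris (alternatingWord i j (2 * m)) with hl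
  have hlen : l.length = 2 * m := by
    rw [hl, cs.length_rightInvSeq, length_alternatingWord]
  apply List.ext_getElem
  · simp only [List.length_take, List.length_drop, hlen]
    omega
  · intro k h1 h2
    have hk : k < m := by simp [hlen] at h1; omega
    rw [List.getElem_take, List.getElem_drop]
    rw [← List.getD_eq_getElem l 1, ← List.getD_eq_getElem l 1]
    rw [hl, getD_ris_alternatingWord cs i j _ k (by omega),
      getD_ris_alternatingWord cs i j _ (m + k) (by omega)]
    have h5 : 2 * m - 1 - k = m + (m - 1 - k) := by omega
    have h6 : 2 * m - 1 - (m + k) = m - 1 - k := by omega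
    rw [h5, h6, pow_add, hq, one_mul]

lemma count_ris_alternatingWord_even (i j : B) (m : ℕ) (hq : (s i * s j) ^ m = 1) (t : W) :
    ((List.count t (ris (alternatingWord i j (2 * m)))) : ZMod 2) = 0 := by
  set l := ris (alternatingWord i j (2 * m)) with hl
  have h0 : l = l.take m ++ l.drop m := (List.take_append_drop m l).symm
  rw [h0, List.count_append, ← take_m_eq_drop_m cs i j m hq]
  push_cast
  exact zmod2_add_self _

lemma prod_permMap_alternatingWord (i j : B) (m : ℕ) :
    ((alternatingWord i j (2 * m)).map (permMap cs)).prod = (permMap cs i * permMap cs j) ^ m := by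
  induction m with
  | zero => simp [alternatingWord]
  | succ m ih =>
    have h1 : alternatingWord i j (2 * (m + 1)) = i :: j :: alternatingWord i j (2 * m) := by
      have e1 : 2 * (m + 1) = (2 * m + 1) + 1 := by omega
      rw [e1, alternatingWord_succ', alternatingWord_succ']
      simp [Nat.even_add_one, Nat.even_mul]
    rw [h1, List.map_cons, List.map_cons, List.prod_cons, List.prod_cons, ih, pow_succ']
    rw [mul_assoc]

lemma permMap_liftable : CoxeterMatrix.IsLiftable M (permMap cs) := by
  intro i j
  rw [← prod_permMap_alternatingWord]
  apply Equiv.ext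
  rintro ⟨t, ε⟩
  rw [prodPermMap_eval]
  have hπ : π (alternatingWord i j (2 * M i j)) = 1 := by
    rw [cs.prod_alternatingWord_eq_mul_pow]
    rw [if_pos (even_two_mul _), one_mul]
    have h2 : 2 * M i j / 2 = M i j := by omega
    rw [h2, cs.simple_mul_simple_pow]
  rw [hπ, count_ris_alternatingWord_even cs i j (M i j) (cs.simple_mul_simple_pow i j) t]
  simp

/-- The parity representation as a homomorphism. -/
noncomputable def phi : W →* Equiv.Perm (W × ZMod 2) :=
  cs.lift ⟨permMap cs, permMap_liftable cs⟩

lemma phi_wordProd (ω : List B) : phi cs (π ω) = (ω.map (permMap cs)).prod := by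
  induction ω with
  | nil => simp [phi]
  | cons i ω ih =>
    rw [cs.wordProd_cons, map_mul, ih, List.map_cons, List.prod_cons]
    congr 1
    exact cs.lift_apply_simple (permMap_liftable cs) i

/-- The parity of the number of times `t` occurs in the right inversion sequence
of any word for `w`. -/
noncomputable def eta (w t : W) : ZMod 2 := ((phi cs w) (t, 0)).2

lemma eta_eq_count (ω : List B) (t : W) :
    eta cs (π ω) t = (List.count t (ris ω) : ZMod 2) := by
  unfold eta
  rw [phi_wordProd, prodPermMap_eval]
  simp

lemma phi_apply (w t : W) (ε : ZMod 2) :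
    phi cs w (t, ε) = (w * t * w⁻¹, ε + eta cs w t) := by
  obtain ⟨ω, rfl⟩ := cs.wordProd_surjective w
  rw [phi_wordProd, prodPermMap_eval, eta_eq_count]

private lemma zmod2_ne_zero {x : ZMod 2} (h : x ≠ 0) : x = 1 := by
  revert h; revert x; decide

lemma eta_mul (x y t : W) :
    eta cs (x * y) t = eta cs y t + eta cs x (y * t * y⁻¹) := by
  have h2 : phi cs (x * y) (t, 0) = phi cs x (phi cs y (t, 0)) := by
    rw [map_mul]; rfl
  rw [phi_apply cs y, phi_apply cs x, phi_apply cs (x * y)] at h2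
  have h3 := congrArg Prod.snd h2
  simpa using h3

lemma eta_one (t : W) : eta cs 1 t = 0 := by
  unfold eta
  rw [map_one]
  rfl

private lemma zmod2_eq_of_add_eq_zero {x y : ZMod 2} (h : x + y = 0) : x = y := by
  revert h; revert x y; decide

lemma eta_inv (w t : W) : eta cs w⁻¹ t = eta cs w (w⁻¹ * t * w) := by
  have h := eta_mul cs w w⁻¹ t
  rw [mul_inv_cancel, eta_one, inv_inv] at h
  exact zmod2_eq_of_add_eq_zero h.symm

lemma eta_simple (i : B) (t : W) : eta cs (s i) t = if t = s i then 1 else 0 := by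
  have h := eta_eq_count cs [i] t
  rw [cs.wordProd_singleton, cs.rightInvSeq_singleton] at h
  rw [h]
  rcases em (t = s i) with ht | ht
  · simp [ht]
  · have : s i ≠ t := fun hc => ht hc.symm
    simp [List.count_cons, this, ht]

lemma eta_refl_self {t : W} (ht : cs.IsReflection t) : eta cs t t = 1 := by
  obtain ⟨u, i, rfl⟩ := ht
  set t := u * s i * u⁻¹ with hht
  have huiu : u⁻¹ * t * u = s i := by
    rw [hht]
    simp [mul_assoc]
  have e0 : t = u * (s i * u⁻¹) := by rw [hht, mul_assoc]
  have e1 : (s i * u⁻¹) * t * (s i * u⁻¹)⁻¹ = s i := by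
    rw [mul_inv_rev, inv_inv, cs.inv_simple, hht]
    simp only [mul_assoc]
    simp [cs.simple_mul_simple_cancel_left]
  have e2 : eta cs t t = eta cs (s i * u⁻¹) t + eta cs u (s i) := by
    nth_rw 1 [e0]
    rw [eta_mul, e1]
  have e3 : eta cs (s i * u⁻¹) t = eta cs u⁻¹ t + 1 := by
    rw [eta_mul]
    have : u⁻¹ * t * u⁻¹⁻¹ = s i := by rw [inv_inv]; exact huiu
    rw [this, eta_simple]
    simp
  have e4 : eta cs u⁻¹ t = eta cs u (s i) := by rw [eta_inv, huiu]
  rw [e2, e3, e4]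
  generalize eta cs u (s i) = a
  revert a; decide

lemma length_mul_lt_of_eta_eq_one {w t : W} (h : eta cs w t = 1) : ℓ (w * t) < ℓ w := by
  obtain ⟨ω, hlen, hw⟩ := cs.exists_reduced_word w
  have hred : cs.IsReduced ω := hlen
  have hcount : (List.count t (ris ω) : ZMod 2) = 1 := by
    rw [← eta_eq_count, ← hw, h]
  have hmem : t ∈ ris ω := by
    by_contra hmem
    rw [List.count_eq_zero_of_not_mem hmem] at hcount
    simp at hcount
  have := (cs.isRightInversion_of_mem_rightInvSeq hred hmem).2
  rwa [← hw] at this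

lemma isRightInversion_iff_eta {w t : W} (ht : cs.IsReflection t) :
    cs.IsRightInversion w t ↔ eta cs w t = 1 := by
  constructor
  · rintro ⟨-, hlt⟩
    have hut : (w * t) * t = w := by
      rw [mul_assoc, ht.mul_self, mul_one]
    have e1 : eta cs w t = eta cs t t + eta cs (w * t) (t * t * t⁻¹) := by
      nth_rw 1 [← hut]
      rw [eta_mul]
    rw [ht.mul_self, one_mul, ht.inv, eta_refl_self cs ht] at e1
    have e2 : eta cs (w * t) t = 0 := by
      by_contra hc
      have h1 : eta cs (w * t) t = 1 := zmod2_ne_zero hc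
      have := length_mul_lt_of_eta_eq_one cs h1
      rw [hut] at this
      omega
    rw [e2] at e1
    rw [e1]
    decide
  · intro h
    exact ⟨ht, length_mul_lt_of_eta_eq_one cs h⟩

theorem mem_rightInvSeq_of_isRightInversion {ω : List B} {t : W}
    (h : cs.IsRightInversion (π ω) t) : t ∈ ris ω := by
  have h1 : eta cs (π ω) t = 1 := (isRightInversion_iff_eta cs h.1).mp h
  rw [eta_eq_count] at h1
  by_contra hmem
  rw [List.count_eq_zero_of_not_mem hmem] at h1
  simp at h1

theorem exists_eraseIdx_of_isRightInversion {ω : List B} {t : W}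
    (h : cs.IsRightInversion (π ω) t) :
    ∃ j < ω.length, π ω * t = π (ω.eraseIdx j) := by
  obtain ⟨j, hj, hjt⟩ := List.mem_iff_getElem.mp (mem_rightInvSeq_of_isRightInversion cs h)
  rw [cs.length_rightInvSeq] at hj
  refine ⟨j, hj, ?_⟩
  rw [← cs.wordProd_mul_getD_rightInvSeq ω j]
  congr 1
  rw [← hjt, List.getD_eq_getElem]

theorem exists_eraseIdx_of_isLeftInversion {ω : List B} {t : W}
    (h : cs.IsLeftInversion (π ω) t) :
    ∃ j < ω.length, t * π ω = π (ω.eraseIdx j) := by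
  have h1 : cs.IsRightInversion (π ω.reverse) t := by
    rw [cs.wordProd_reverse]
    exact cs.isRightInversion_inv_iff.mpr h
  have h2 : t ∈ ris ω.reverse := mem_rightInvSeq_of_isRightInversion cs h1
  rw [cs.rightInvSeq_reverse, List.mem_reverse] at h2
  obtain ⟨j, hj, hjt⟩ := List.mem_iff_getElem.mp h2
  rw [cs.length_leftInvSeq] at hj
  refine ⟨j, hj, ?_⟩
  rw [← cs.getD_leftInvSeq_mul_wordProd ω j]
  congr 1
  rw [← hjt, List.getD_eq_getElem]

/-! ### Parabolic subgroups and minimal coset representatives -/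

lemma wordProd_mem_parabolic {J : Set B} {ω : List B} (hω : ∀ i ∈ ω, i ∈ J) :
    π ω ∈ cs.parabolic J := by
  induction ω with
  | nil => simp [one_mem]
  | cons i ω ih =>
    rw [cs.wordProd_cons]
    exact mul_mem (Subgroup.subset_closure ⟨i, hω i (by simp), rfl⟩)
      (ih fun k hk => hω k (by simp [hk]))

lemma exists_word_of_mem_parabolic {J : Set B} {v : W} (hv : v ∈ cs.parabolic J) :
    ∃ ω : List B, (∀ i ∈ ω, i ∈ J) ∧ π ω = v := by
  induction hv using Subgroup.closure_induction with
  | mem g hg =>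
    obtain ⟨i, hi, rfl⟩ := hg
    exact ⟨[i], by simpa using hi, cs.wordProd_singleton i⟩
  | one => exact ⟨[], by simp, cs.wordProd_nil⟩
  | mul g h _ _ ihg ihh =>
    obtain ⟨ω₁, h1, rfl⟩ := ihg
    obtain ⟨ω₂, h2, rfl⟩ := ihh
    exact ⟨ω₁ ++ ω₂, fun i hi => ((List.mem_append.mp hi).elim (h1 i) (h2 i)),
      cs.wordProd_append ω₁ ω₂⟩
  | inv g _ ihg =>
    obtain ⟨ω₁, h1, rfl⟩ := ihg
    exact ⟨ω₁.reverse, fun i hi => h1 i (List.mem_reverse.mp hi), cs.wordProd_reverse ω₁⟩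

/-- Key lemma: if `x` has minimal length in its coset `x W_J`, then multiplying by an
element of `W_J` increases length additively along a suitable word. -/
lemma exists_nice_word {J : Set B} {x : W}
    (hmin : ∀ v ∈ cs.parabolic J, ℓ x ≤ ℓ (x * v))
    (ω : List B) (hω : ∀ i ∈ ω, i ∈ J) :
    ∃ ω' : List B, (∀ i ∈ ω', i ∈ J) ∧ π ω' = π ω ∧
      ℓ (x * π ω) = ℓ x + ω'.length := by
  induction ω using List.reverseRecOn with
  | nil => exact ⟨[], by simp, rfl, by simp⟩
  | append_singleton ω₀ i ih =>
    have hω₀ : ∀ k ∈ ω₀, k ∈ J := fun k hk => hω k (by simp [hk])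
    have hi : i ∈ J := hω i (by simp)
    obtain ⟨ω₀', hω₀', hπ₀', hlen₀'⟩ := ih hω₀
    obtain ⟨ρ, hρlen, hρ⟩ : ∃ ρ, ℓ x = ρ.length ∧ x = π ρ := by
        obtain ⟨ρ, h1, h2⟩ := cs.exists_reduced_word x
        exact ⟨ρ, by rw [h2]; exact h1, h2⟩
    have hprod : π (ρ ++ ω₀') = x * π ω₀ := by
      rw [cs.wordProd_append, ← hρ, hπ₀']
    have hsplit : π (ω₀ ++ [i]) = π ω₀ * s i := by
      rw [cs.wordProd_append, cs.wordProd_singleton]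
    rcases cs.length_mul_simple (x * π ω₀) i with hasc | hdesc
    · refine ⟨ω₀' ++ [i], ?_, ?_, ?_⟩
      · intro k hk
        rcases List.mem_append.mp hk with h | h
        · exact hω₀' k h
        · simp at h; subst h; exact hi
      · rw [cs.wordProd_append, cs.wordProd_singleton, hπ₀', hsplit]
      · rw [hsplit, ← mul_assoc, hasc, hlen₀', List.length_append]
        have h9 : ([i] : List B).length = 1 := rfl
        omega
    · -- descent case
      have hinv : cs.IsRightInversion (π (ρ ++ ω₀')) (s i) := by
        rw [hprod]
        exact ⟨cs.isReflection_simple i, by omega⟩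
      obtain ⟨j, hj, hjer⟩ := exists_eraseIdx_of_isRightInversion cs hinv
      rcases lt_or_ge j ρ.length with hjρ | hjρ
      · exfalso
        rw [List.eraseIdx_append_of_lt_length hjρ,
          cs.wordProd_append (ρ.eraseIdx j) ω₀'] at hjer
        rw [hprod] at hjer
        have hv₀ : π (ρ.eraseIdx j) = x * (π ω₀ * (s i * (π ω₀')⁻¹)) := by
          have h' : (x * π ω₀ * s i) * (π ω₀')⁻¹ = π (ρ.eraseIdx j) := by
            rw [hjer]; group
          rw [← h']; group
        have hv₀mem : π ω₀ * (s i * (π ω₀')⁻¹) ∈ cs.parabolic J :=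
          mul_mem (wordProd_mem_parabolic cs hω₀)
            (mul_mem (Subgroup.subset_closure ⟨i, hi, rfl⟩)
              (inv_mem (wordProd_mem_parabolic cs hω₀')))
        have h1 := hmin _ hv₀mem
        rw [← hv₀] at h1
        have h2 : ℓ (π (ρ.eraseIdx j)) ≤ (ρ.eraseIdx j).length :=
          cs.length_wordProd_le _
        have h3 : (ρ.eraseIdx j).length + 1 = ρ.length :=
          List.length_eraseIdx_add_one hjρ
        omega
      · rw [List.eraseIdx_append_of_length_le hjρ,
          cs.wordProd_append ρ (ω₀'.eraseIdx (j - ρ.length))] at hjer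
        refine ⟨ω₀'.eraseIdx (j - ρ.length), ?_, ?_, ?_⟩
        · exact fun k hk => hω₀' k (List.mem_of_mem_eraseIdx hk)
        · have h8 : x * π (ω₀'.eraseIdx (j - ρ.length)) = x * π (ω₀ ++ [i]) := by
            rw [← hρ] at hjer
            rw [← hjer, hprod, hsplit, mul_assoc]
          exact mul_left_cancel h8
        · have hlt : j - ρ.length < ω₀'.length := by
            rw [List.length_append] at hj; omega
          have h3 : (ω₀'.eraseIdx (j - ρ.length)).length + 1 = ω₀'.length :=
            List.length_eraseIdx_add_one hlt
          rw [hsplit, ← mul_assoc]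
          omega

lemma minReps_min {J : Set B} {x : W} (hx : x ∈ cs.minReps J) :
    ∀ v ∈ cs.parabolic J, ℓ x ≤ ℓ (x * v) := by
  -- take a minimal length element of the coset
  set T : Set ℕ := {n | ∃ v ∈ cs.parabolic J, ℓ (x * v) = n} with hT
  have hTne : T.Nonempty := ⟨ℓ x, 1, one_mem _, by rw [mul_one]⟩
  obtain ⟨v₀, hv₀, hv₀len⟩ := Nat.sInf_mem hTne
  have hmin₀ : ∀ v ∈ cs.parabolic J, ℓ (x * v₀) ≤ ℓ ((x * v₀) * v) := by
    intro v hv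
    rw [hv₀len, mul_assoc]
    exact Nat.sInf_le ⟨v₀ * v, mul_mem hv₀ hv, rfl⟩
  obtain ⟨ωv, hωv, hπv⟩ := exists_word_of_mem_parabolic cs (inv_mem hv₀)
  obtain ⟨ω', hω', hπ', hlen'⟩ := exists_nice_word cs hmin₀ ωv hωv
  rw [hπv] at hlen'
  have hxx : x * v₀ * v₀⁻¹ = x := by group
  rw [hxx] at hlen'
  rcases List.eq_nil_or_concat ω' with rfl | ⟨l, b, rfl⟩
  · -- v₀ = 1, so x itself is minimal
    have hv1 : v₀ = 1 := by
      have : π ([] : List B) = v₀⁻¹ := by rw [hπ', hπv]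
      simp only [cs.wordProd_nil] at this
      rw [← inv_inv v₀, ← this, inv_one]
    intro v hv
    have := hmin₀ v hv
    rwa [hv1, mul_one] at this
  · exfalso
    have hb : b ∈ J := hω' b (by simp)
    have hπlb : π (l.concat b) = π l * s b := cs.wordProd_concat b l
    have h1 : x * v₀ * (π l * s b) = x := by
      rw [← hπlb, hπ', hπv, mul_assoc, mul_inv_cancel, mul_one]
    have hxb : x * s b = x * v₀ * π l := by
      calc x * s b = (x * v₀ * (π l * s b)) * s b := by rw [h1]
        _ = x * v₀ * π l := by rw [mul_assoc, cs.simple_mul_simple_cancel_right]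
    have h2 : ℓ (x * s b) ≤ ℓ (x * v₀) + l.length := by
      rw [hxb]
      calc ℓ (x * v₀ * π l) ≤ ℓ (x * v₀) + ℓ (π l) := cs.length_mul_le _ _
        _ ≤ ℓ (x * v₀) + l.length := by
            have := cs.length_wordProd_le l; omega
    have h3 := hx b hb
    have h4 : (l.concat b).length = l.length + 1 := by simp
    omega

/-- If `x` is minimal in its coset and `v ∈ W_J` is nontrivial,
then `x * v` is strictly longer. -/
lemma minReps_lt {J : Set B} {x : W} (hx : x ∈ cs.minReps J) {v : W}
    (hv : v ∈ cs.parabolic J) (hv1 : v ≠ 1) : ℓ x < ℓ (x * v) := by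
  obtain ⟨ωv, hωv, hπv⟩ := exists_word_of_mem_parabolic cs hv
  obtain ⟨ω', hω', hπ', hlen'⟩ := exists_nice_word cs (minReps_min cs hx) ωv hωv
  rw [hπv] at hlen'
  rcases List.eq_nil_or_concat ω' with rfl | ⟨l, b, rfl⟩
  · exfalso
    apply hv1
    rw [← hπv, ← hπ', cs.wordProd_nil]
  · have : (l.concat b).length = l.length + 1 := by simp
    omega

lemma minReps_unique {J : Set B} {x y : W} (hx : x ∈ cs.minReps J)
    (hy : y ∈ cs.minReps J) (hxy : x⁻¹ * y ∈ cs.parabolic J) : x = y := by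
  by_contra hne
  have h1 : x⁻¹ * y ≠ 1 := fun hc => hne (by
    have h0 := congrArg (fun z => x * z) hc
    simp at h0
    exact h0.symm)
  have h2 : y⁻¹ * x ≠ 1 := fun hc => hne (by
    have h0 := congrArg (fun z => y * z) hc
    simpa using h0)
  have h3 := minReps_lt cs hx hxy h1
  have h4 := minReps_lt cs hy (by simpa using inv_mem hxy) h2
  rw [mul_inv_cancel_left] at h3 h4
  omega

lemma minRepsLeft_iff {J : Set B} {x : W} :
    x ∈ cs.minRepsLeft J ↔ x⁻¹ ∈ cs.minReps J := by
  unfold CoxeterSystem.minRepsLeft CoxeterSystem.minReps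
  simp only [Set.mem_setOf_eq]
  apply forall_congr'
  intro i
  apply imp_congr_right
  intro _
  rw [cs.length_inv]
  constructor
  · intro h
    have : ℓ (x⁻¹ * s i) = ℓ (s i * x) := by
      rw [← cs.length_inv, mul_inv_rev, cs.inv_simple, inv_inv]
    omega
  · intro h
    have : ℓ (x⁻¹ * s i) = ℓ (s i * x) := by
      rw [← cs.length_inv, mul_inv_rev, cs.inv_simple, inv_inv]
    omega

lemma minRepsLeft_unique {J : Set B} {x y : W} (hx : x ∈ cs.minRepsLeft J)
    (hy : y ∈ cs.minRepsLeft J) (hxy : y * x⁻¹ ∈ cs.parabolic J) : x = y := by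
  have h := minReps_unique cs (minRepsLeft_iff cs |>.mp hx) (minRepsLeft_iff cs |>.mp hy)
    (by rw [inv_inv]; simpa using inv_mem hxy)
  exact inv_injective h

section Projections

variable {Q : Set B → W → W} (hQ : cs.IsLProjFamily Q)

include hQ

lemma Q_eq_of_same_coset {I : Set B} {w₁ w₂ : W} (h : w₁ * w₂⁻¹ ∈ cs.parabolic I) :
    Q I w₁ = Q I w₂ := by
  apply minRepsLeft_unique cs (hQ I w₁).1 (hQ I w₂).1
  have key : Q I w₂ * (Q I w₁)⁻¹ =
      ((w₂ * (Q I w₂)⁻¹)⁻¹) * ((w₁ * w₂⁻¹)⁻¹ * (w₁ * (Q I w₁)⁻¹)) := by group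
  rw [key]
  exact mul_mem (inv_mem (hQ I w₂).2) (mul_mem (inv_mem h) (hQ I w₁).2)

lemma Q_eq_self {I : Set B} {v : W} (hv : v ∈ cs.minRepsLeft I) : Q I v = v := by
  apply minRepsLeft_unique cs (hQ I v).1 hv
  exact (hQ I v).2

/-- Key lemma: if `x ∈ ^I W ∩ W^J`, then for any `v ∈ x W_J`,
the projection `Q I v` also lies in `x W_J`. -/
lemma key_lemma {I J : Set B} {x : W} (hx1 : x ∈ cs.minRepsLeft I)
    (hx2 : x ∈ cs.minReps J) :
    ∀ v : W, x⁻¹ * v ∈ cs.parabolic J → x⁻¹ * Q I v ∈ cs.parabolic J := by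
  suffices H : ∀ n : ℕ, ∀ v : W, ℓ v = n → x⁻¹ * v ∈ cs.parabolic J →
      x⁻¹ * Q I v ∈ cs.parabolic J by
    intro v hv
    exact H (ℓ v) v rfl hv
  intro n
  induction n using Nat.strong_induction_on with
  | _ n ih =>
    intro v hn hv
    by_cases hvmem : v ∈ cs.minRepsLeft I
    · rw [Q_eq_self cs hQ hvmem]
      exact hv
    · -- v has a left descent in I
      obtain ⟨i, hiI, hdesc⟩ : ∃ i ∈ I, ℓ (s i * v) < ℓ v := by
        unfold CoxeterSystem.minRepsLeft at hvmem
        simp only [Set.mem_setOf_eq, not_forall] at hvmem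
        obtain ⟨i, hiI, h⟩ := hvmem
        refine ⟨i, hiI, ?_⟩
        rcases cs.length_simple_mul v i with h1 | h1 <;> omega
      have hsi : s i ∈ cs.parabolic I := Subgroup.subset_closure ⟨i, hiI, rfl⟩
      have hQeq : Q I (s i * v) = Q I v := by
        apply Q_eq_of_same_coset cs hQ
        have : s i * v * v⁻¹ = s i := by group
        rw [this]
        exact hsi
      -- show that s i * v is still in x W_J, using strong exchange
      obtain ⟨ωd, hωd, hπd⟩ := exists_word_of_mem_parabolic cs hv
      obtain ⟨τ, hτ, hπτ, hlenτ⟩ := exists_nice_word cs (minReps_min cs hx2) ωd hωd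
      obtain ⟨ρ, hρlen, hρ⟩ : ∃ ρ, ℓ x = ρ.length ∧ x = π ρ := by
        obtain ⟨ρ, h1, h2⟩ := cs.exists_reduced_word x
        exact ⟨ρ, by rw [h2]; exact h1, h2⟩
      have hxd : x * (x⁻¹ * v) = v := by group
      have hprod : π (ρ ++ τ) = v := by
        rw [cs.wordProd_append, ← hρ, hπτ, hπd, hxd]
      have hlv : ℓ v = ℓ x + τ.length := by
        rw [hπd, hxd] at hlenτ
        exact hlenτ
      have hinv : cs.IsLeftInversion (π (ρ ++ τ)) (s i) := by
        rw [hprod]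
        exact ⟨cs.isReflection_simple i, hdesc⟩
      obtain ⟨j, hj, hjer⟩ := exists_eraseIdx_of_isLeftInversion cs hinv
      rw [hprod] at hjer
      have hpar' : x⁻¹ * (s i * v) ∈ cs.parabolic J := by
        rcases lt_or_ge j ρ.length with hjρ | hjρ
        · exfalso
          rw [List.eraseIdx_append_of_lt_length hjρ,
            cs.wordProd_append (ρ.eraseIdx j) τ] at hjer
          -- s i * v = π (ρ.eraseIdx j) * π τ, and v = x * π τ
          have hvx : v = x * π τ := by
            rw [hπτ, hπd, hxd]
          have h5 : s i * x * π τ = π (ρ.eraseIdx j) * π τ := by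
            rw [mul_assoc, ← hvx, hjer]
          have h6 : s i * x = π (ρ.eraseIdx j) := mul_right_cancel h5
          have h7 : ℓ (s i * x) ≤ (ρ.eraseIdx j).length := by
            rw [h6]; exact cs.length_wordProd_le _
          have h8 : (ρ.eraseIdx j).length + 1 = ρ.length :=
            List.length_eraseIdx_add_one hjρ
          have h9 := hx1 i hiI
          omega
        · rw [List.eraseIdx_append_of_length_le hjρ,
            cs.wordProd_append ρ (τ.eraseIdx (j - ρ.length))] at hjer
          rw [← hρ] at hjer
          have h5 : x⁻¹ * (s i * v) = π (τ.eraseIdx (j - ρ.length)) := by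
            rw [hjer]; group
          rw [h5]
          exact wordProd_mem_parabolic cs
            (fun k hk => hτ k (List.mem_of_mem_eraseIdx hk))
      have := ih (ℓ (s i * v)) (by omega) (s i * v) rfl hpar'
      rwa [hQeq] at this

lemma Q_mem_minReps {I J : Set B} {u : W} (hu : u ∈ cs.minReps J) :
    Q I u ∈ cs.minReps J := by
  set x := Q I u with hxdef
  have hx : x ∈ cs.minRepsLeft I := (hQ I u).1
  have hb : u * x⁻¹ ∈ cs.parabolic I := (hQ I u).2
  set b := u * x⁻¹ with hbdef
  have hbx : b * x = u := by rw [hbdef]; group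
  -- ℓ u ≥ ℓ x + ℓ b
  have hxinv : x⁻¹ ∈ cs.minReps I := (minRepsLeft_iff cs).mp hx
  obtain ⟨ωb, hωb, hπb⟩ := exists_word_of_mem_parabolic cs (inv_mem hb)
  obtain ⟨τ, hτ, hπτ, hlenτ⟩ := exists_nice_word cs (minReps_min cs hxinv) ωb hωb
  rw [hπb] at hlenτ
  have h1 : ℓ (x⁻¹ * b⁻¹) = ℓ u := by
    rw [← mul_inv_rev, ← hbx, cs.length_inv]
  have h2 : ℓ b ≤ τ.length := by
    have h3 := cs.length_wordProd_le τ
    rw [hπτ, hπb, cs.length_inv] at h3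
    exact h3
  have h4 : ℓ x + ℓ b ≤ ℓ u := by
    rw [← h1, hlenτ, cs.length_inv]
    omega
  -- now show x has no right descent in J
  intro i hiJ
  by_contra hcon
  have h5 : ℓ (x * s i) < ℓ x := by
    rcases cs.length_mul_simple x i with h | h
    · omega
    · omega
  have h6 : ℓ (u * s i) ≤ ℓ b + ℓ (x * s i) := by
    have : u * s i = b * (x * s i) := by rw [← hbx]; group
    rw [this]
    exact cs.length_mul_le b (x * s i)
  have h7 := hu i hiJ
  omega

end Projections

end MyCox

theorem stmt_1 (cs : CoxeterSystem M W) (P Q : Set B → W → W)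
    (hP : cs.IsProjFamily P) (hQ : cs.IsLProjFamily Q)
    (I J : Set B) (w : W) :
    P J (Q I w) = Q I (P J w) := by
  classical
  obtain ⟨hu1, hu2⟩ := hP J w
  set u := P J w with hudef
  set x := Q I u with hxdef
  have hx1 : x ∈ cs.minRepsLeft I := (hQ I u).1
  have hxb : u * x⁻¹ ∈ cs.parabolic I := (hQ I u).2
  have hx2 : x ∈ cs.minReps J := MyCox.Q_mem_minReps cs hQ hu1
  set z := Q I w with hzdef
  have hzeq : Q I (x * (u⁻¹ * w)) = z := by
    apply MyCox.Q_eq_of_same_coset cs hQ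
    have h0 : x * (u⁻¹ * w) * w⁻¹ = (u * x⁻¹)⁻¹ := by group
    rw [h0]
    exact inv_mem hxb
  have hxz : x⁻¹ * z ∈ cs.parabolic J := by
    rw [← hzeq]
    apply MyCox.key_lemma cs hQ hx1 hx2
    have h0 : x⁻¹ * (x * (u⁻¹ * w)) = u⁻¹ * w := by group
    rw [h0]
    exact hu2
  obtain ⟨hy1, hy2⟩ := hP J z
  apply MyCox.minReps_unique cs hy1 hx2
  have h0 : (P J z)⁻¹ * x = ((P J z)⁻¹ * z) * (x⁻¹ * z)⁻¹ := by group
  rw [h0]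
  exact mul_mem hy2 (inv_mem hxz)
end

section
/- Let (W,S) be a Coxeter system and let I, J ⊆ S with I ∩ J = ∅ and m(s,t) ≤ 2 for all s ∈ I, t ∈ J (i.e., every element of I commutes with every element of J). Then the projections P^I and P^J commute: P^I(P^J(w)) = P^J(P^I(w)) for all w ∈ W. -/
open CoxeterSystem List

variable {B W : Type*} [Group W] {M : CoxeterMatrix B}

namespace CoxeterSystem

open scoped Classical

set_option linter.unusedSectionVars false

noncomputable section

variable (cs : CoxeterSystem M W)

local prefix:100 "σ" => cs.simple
local prefix:100 "π" => cs.wordProd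
local prefix:100 "ℓ" => cs.length

private lemma prod_range_two_add {Mo : Type*} [CommMonoid Mo] (f : ℕ → Mo) (n : ℕ) :
    ∏ u ∈ Finset.range (2 + n), f u = f 0 * f 1 * ∏ u ∈ Finset.range n, f (u + 2) := by
  rw [Finset.prod_range_add]
  congr 1
  · rw [show (2 : ℕ) = 1 + 1 from rfl, Finset.prod_range_succ, Finset.prod_range_one]
  · exact Finset.prod_congr rfl fun x _ => by rw [Nat.add_comm]

private lemma conj_eq_iff {a t d : W} : a * t * a⁻¹ = d ↔ t = a⁻¹ * d * a := by
  constructor <;> rintro rfl <;> group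

/-! ### The sign function, used to prove the exchange property -/

/-- The sign of `t` relative to a list of group elements. -/
def listSgn (t : W) (l : List W) : ℤˣ :=
  (l.map (fun r => if t = r then (-1 : ℤˣ) else 1)).prod

theorem listSgn_nil (t : W) : listSgn t ([] : List W) = 1 := rfl

theorem listSgn_cons (t x : W) (l : List W) :
    listSgn t (x :: l) = (if t = x then (-1 : ℤˣ) else 1) * listSgn t l := by
  simp [listSgn]

theorem listSgn_eq_one_of_not_mem {t : W} {l : List W} (h : t ∉ l) : listSgn t l = 1 := by
  induction l with
  | nil => rfl
  | cons x l ih =>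
    have hx : t ≠ x := fun hh => h (by rw [hh]; exact mem_cons_self)
    rw [listSgn_cons, if_neg hx, ih (fun hh => h (mem_cons_of_mem x hh)), one_mul]

theorem listSgn_eq_neg_one {t : W} {l : List W} (hn : l.Nodup) (h : t ∈ l) :
    listSgn t l = -1 := by
  induction l with
  | nil => simp at h
  | cons x l ih =>
    rcases List.mem_cons.mp h with rfl | h'
    · rw [listSgn_cons, if_pos rfl, listSgn_eq_one_of_not_mem (List.nodup_cons.mp hn).1, mul_one]
    · have hx : t ≠ x := fun hh => (List.nodup_cons.mp hn).1 (by rw [← hh]; exact h')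
      rw [listSgn_cons, ih (List.nodup_cons.mp hn).2 h', if_neg hx, one_mul]

theorem mem_of_listSgn_eq_neg_one {t : W} {l : List W} (h : listSgn t l = -1) : t ∈ l := by
  by_contra hc
  rw [listSgn_eq_one_of_not_mem hc] at h
  exact absurd h (by decide)

/-! ### The Tits sign action -/

/-- The function underlying the Tits permutation for the generator `i`. -/
def titsFun (i : B) : W × ℤˣ → W × ℤˣ :=
  fun x => (σ i * x.1 * σ i, if x.1 = σ i then -x.2 else x.2)

private lemma simple_conj_conj (i : B) (t : W) : σ i * (σ i * t * σ i) * σ i = t := by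
  rw [mul_assoc (σ i) t (σ i), cs.simple_mul_simple_cancel_left,
    cs.simple_mul_simple_cancel_right]

private lemma simple_conj_eq_iff (i : B) (t x : W) :
    σ i * t * σ i = x ↔ t = σ i * x * σ i := by
  constructor
  · intro h; rw [← h, cs.simple_conj_conj]
  · rintro rfl; rw [cs.simple_conj_conj]

theorem titsFun_involutive (i : B) : Function.Involutive (cs.titsFun i) := by
  rintro ⟨t, ε⟩
  simp only [titsFun]
  refine Prod.ext (cs.simple_conj_conj i t) ?_
  have h2 : (σ i * t * σ i = σ i) ↔ t = σ i := by
    rw [cs.simple_conj_eq_iff, cs.simple_mul_simple_self, one_mul]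
  by_cases ht : t = σ i
  · simp only [if_pos ht, if_pos (h2.mpr ht), neg_neg]
  · simp only [if_neg ht, if_neg (fun hh => ht (h2.mp hh))]

/-- The Tits permutation for the generator `i`. -/
def titsPerm (i : B) : Equiv.Perm (W × ℤˣ) := (cs.titsFun_involutive i).toPerm

theorem titsPerm_apply (i : B) (x : W × ℤˣ) : cs.titsPerm i x = cs.titsFun i x := rfl

/-- The sequence of reflections of the dihedral subgroup generated by `σ i` and `σ j`. -/
def dihedralSeq (i j : B) (u : ℕ) : W := (σ j * σ i) ^ u * σ j

private lemma dihedralSeq_mul (i j : B) (u : ℕ) :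
    cs.dihedralSeq i j u * (σ i * σ j) = cs.dihedralSeq i j (u + 1) := by
  simp only [dihedralSeq, pow_succ, mul_assoc]

private lemma conj_dihedralSeq (i j : B) (u : ℕ) :
    (σ j * σ i) * cs.dihedralSeq i j (u + 1) = cs.dihedralSeq i j (u + 2) := by
  simp only [dihedralSeq]
  rw [← mul_assoc, ← pow_succ']

private lemma cond_shift (i j : B) (t : W) (u : ℕ) :
    ((σ i * σ j) * t * (σ i * σ j)⁻¹ = cs.dihedralSeq i j u) ↔
      (t = cs.dihedralSeq i j (u + 2)) := by
  rw [conj_eq_iff]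
  have ha : (σ i * σ j)⁻¹ = σ j * σ i := by rw [mul_inv_rev, cs.inv_simple, cs.inv_simple]
  rw [ha, mul_assoc, cs.dihedralSeq_mul, cs.conj_dihedralSeq]

theorem titsPerm_mul_pow_apply (i j : B) (k : ℕ) (t : W) (ε : ℤˣ) :
    ((cs.titsPerm i * cs.titsPerm j) ^ k) (t, ε) =
      ((σ i * σ j) ^ k * t * ((σ i * σ j) ^ k)⁻¹,
        ε * ∏ u ∈ Finset.range (2 * k), (if t = cs.dihedralSeq i j u then (-1 : ℤˣ) else 1)) := by
  induction k generalizing t ε with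
  | zero => simp
  | succ k ih =>
    rw [pow_succ, Equiv.Perm.mul_apply]
    have step : (cs.titsPerm i * cs.titsPerm j) (t, ε) =
        ((σ i * σ j) * t * (σ i * σ j)⁻¹,
          ε * ((if t = cs.dihedralSeq i j 0 then (-1 : ℤˣ) else 1)
             * (if t = cs.dihedralSeq i j 1 then (-1 : ℤˣ) else 1))) := by
      rw [Equiv.Perm.mul_apply, titsPerm_apply, titsPerm_apply]
      simp only [titsFun]
      have hc0 : (t = σ j) ↔ (t = cs.dihedralSeq i j 0) := by
        simp [dihedralSeq]
      have hc1 : (σ j * t * σ j = σ i) ↔ (t = cs.dihedralSeq i j 1) := by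
        rw [cs.simple_conj_eq_iff]
        simp only [dihedralSeq, pow_one, mul_assoc]
      refine Prod.ext ?_ ?_
      · show σ i * (σ j * t * σ j) * σ i = (σ i * σ j) * t * (σ i * σ j)⁻¹
        rw [mul_inv_rev, cs.inv_simple, cs.inv_simple]
        group
      · show (if σ j * t * σ j = σ i then -(if t = σ j then -ε else ε)
            else (if t = σ j then -ε else ε)) = _
        simp only [hc0, hc1]
        by_cases h0 : t = cs.dihedralSeq i j 0 <;> by_cases h1 : t = cs.dihedralSeq i j 1 <;>
          simp [h0, h1]
    rw [step, ih]
    refine Prod.ext ?_ ?_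
    · show (σ i * σ j) ^ k * ((σ i * σ j) * t * (σ i * σ j)⁻¹) * ((σ i * σ j) ^ k)⁻¹ =
        (σ i * σ j) ^ (k + 1) * t * ((σ i * σ j) ^ (k + 1))⁻¹
      generalize σ i * σ j = a
      rw [pow_succ']
      group
    · show ε * _ * _ = ε * _
      simp only [cs.cond_shift i j t]
      rw [show 2 * (k + 1) = 2 + 2 * k by ring, prod_range_two_add, mul_assoc]

theorem titsPerm_liftable : M.IsLiftable cs.titsPerm := by
  intro i j
  apply Equiv.ext
  rintro ⟨t, ε⟩
  rw [titsPerm_mul_pow_apply, Equiv.Perm.one_apply]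
  have hpow : (σ i * σ j) ^ M i j = 1 := cs.simple_mul_simple_pow i j
  have hpow' : (σ j * σ i) ^ M i j = 1 := cs.simple_mul_simple_pow' i j
  refine Prod.ext ?_ ?_
  · show (σ i * σ j) ^ M i j * t * ((σ i * σ j) ^ M i j)⁻¹ = t
    rw [hpow]; group
  · show ε * _ = ε
    have hper : ∀ u : ℕ, cs.dihedralSeq i j (M i j + u) = cs.dihedralSeq i j u := by
      intro u
      simp only [dihedralSeq, pow_add, hpow', one_mul]
    rw [two_mul, Finset.prod_range_add]
    have : ∀ u ∈ Finset.range (M i j),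
        (if t = cs.dihedralSeq i j (M i j + u) then (-1 : ℤˣ) else 1) =
        (if t = cs.dihedralSeq i j u then (-1 : ℤˣ) else 1) := by
      intro u _; rw [hper u]
    rw [Finset.prod_congr rfl this, Int.units_mul_self, mul_one]

/-- The Tits sign homomorphism. -/
def titsHom : W →* Equiv.Perm (W × ℤˣ) := cs.lift ⟨cs.titsPerm, cs.titsPerm_liftable⟩

theorem titsHom_simple (i : B) : cs.titsHom (σ i) = cs.titsPerm i :=
  cs.lift_apply_simple cs.titsPerm_liftable i

theorem titsHom_wordProd (ω : List B) (t : W) (ε : ℤˣ) :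
    cs.titsHom (π ω) (t, ε) = (π ω * t * (π ω)⁻¹, ε * listSgn t (cs.rightInvSeq ω)) := by
  induction ω generalizing ε with
  | nil => simp [listSgn_nil]
  | cons i ω ih =>
    rw [wordProd_cons, map_mul, Equiv.Perm.mul_apply, ih, titsHom_simple, titsPerm_apply]
    simp only [titsFun]
    have hris : cs.rightInvSeq (i :: ω) = ((π ω)⁻¹ * σ i * π ω) :: cs.rightInvSeq ω := rfl
    refine Prod.ext ?_ ?_
    · show σ i * (π ω * t * (π ω)⁻¹) * σ i = (σ i * π ω) * t * (σ i * π ω)⁻¹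
      rw [mul_inv_rev, cs.inv_simple]
      group
    · show (if π ω * t * (π ω)⁻¹ = σ i then -(ε * listSgn t (cs.rightInvSeq ω))
          else ε * listSgn t (cs.rightInvSeq ω)) = ε * listSgn t (cs.rightInvSeq (i :: ω))
      have hcond : (π ω * t * (π ω)⁻¹ = σ i) ↔ (t = (π ω)⁻¹ * σ i * π ω) := conj_eq_iff
      rw [hris, listSgn_cons]
      by_cases hc : t = (π ω)⁻¹ * σ i * π ω
      · rw [if_pos (hcond.mpr hc), if_pos hc, neg_one_mul, mul_neg]
      · rw [if_neg (fun hh => hc (hcond.mp hh)), if_neg hc, one_mul]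

/-! ### The exchange property -/

theorem mem_rightInvSeq_of_isReduced {ω ω' : List B} (hω : cs.IsReduced ω)
    (hω' : cs.IsReduced ω') (hp : π ω = π ω') {t : W} (ht : t ∈ cs.rightInvSeq ω') :
    t ∈ cs.rightInvSeq ω := by
  have h1 := cs.titsHom_wordProd ω t 1
  have h2 := cs.titsHom_wordProd ω' t 1
  rw [hp] at h1
  have hsgn : listSgn t (cs.rightInvSeq ω) = listSgn t (cs.rightInvSeq ω') := by
    have := (h1.symm.trans h2)
    have := congrArg Prod.snd this
    simpa using this
  apply mem_of_listSgn_eq_neg_one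
  rw [hsgn]
  exact listSgn_eq_neg_one (hω'.nodup_rightInvSeq) ht

theorem right_exchange' {ω : List B} (hω : cs.IsReduced ω) {k : B}
    (h : ℓ (π ω * σ k) < ℓ (π ω)) :
    ∃ ω₂ : List B, ω₂.Sublist ω ∧ ω₂.length + 1 = ω.length ∧ π ω₂ = π ω * σ k := by
  obtain ⟨ω₁, hω₁red, hw'⟩ := cs.exists_reduced_word' (π ω * σ k)
  have hπ : π (ω₁.concat k) = π ω := by
    rw [wordProd_concat, ← hw', mul_assoc, cs.simple_mul_simple_self, mul_one]
  have hlen : ℓ (π ω * σ k) + 1 = ℓ (π ω) := by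
    rcases cs.length_mul_simple (π ω) k with h1 | h1
    · omega
    · exact h1
  have hred' : cs.IsReduced (ω₁.concat k) := by
    show ℓ (π (ω₁.concat k)) = _
    rw [hπ, List.length_concat, ← hω₁red, ← hw', hlen]
  have hmem : σ k ∈ cs.rightInvSeq (ω₁.concat k) := by
    rw [cs.rightInvSeq_concat, List.concat_eq_append]
    exact List.mem_append_right _ (List.mem_singleton_self _)
  have hmem2 : σ k ∈ cs.rightInvSeq ω := cs.mem_rightInvSeq_of_isReduced hω hred' hπ.symm hmem
  obtain ⟨⟨j, hj⟩, hget⟩ := List.mem_iff_get.mp hmem2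
  rw [cs.length_rightInvSeq] at hj
  have hgd : (cs.rightInvSeq ω).getD j 1 = σ k := by
    rw [List.getD_eq_getElem _ _ (by rw [cs.length_rightInvSeq]; exact hj)]
    exact hget
  refine ⟨ω.eraseIdx j, List.eraseIdx_sublist ω j, List.length_eraseIdx_add_one hj, ?_⟩
  rw [← cs.wordProd_mul_getD_rightInvSeq ω j, hgd]

theorem left_exchange' {ω : List B} (hω : cs.IsReduced ω) {k : B}
    (h : ℓ (σ k * π ω) < ℓ (π ω)) :
    ∃ ω₂ : List B, ω₂.Sublist ω ∧ ω₂.length + 1 = ω.length ∧ π ω₂ = σ k * π ω := by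
  have hrev : cs.IsReduced ω.reverse := (cs.isReduced_reverse_iff ω).mpr hω
  have h2 : ℓ (π ω.reverse * σ k) < ℓ (π ω.reverse) := by
    rw [wordProd_reverse]
    have : (π ω)⁻¹ * σ k = (σ k * π ω)⁻¹ := by
      rw [mul_inv_rev, cs.inv_simple]
    rw [this, cs.length_inv, cs.length_inv]
    exact h
  obtain ⟨ω₂, hsub, hlen, hπ⟩ := cs.right_exchange' hrev h2
  refine ⟨ω₂.reverse, ?_, ?_, ?_⟩
  · have := hsub.reverse
    rwa [List.reverse_reverse] at this
  · rw [List.length_reverse]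
    rwa [List.length_reverse] at hlen
  · rw [wordProd_reverse, hπ, wordProd_reverse, mul_inv_rev, inv_inv, cs.inv_simple]

/-- The deletion property. -/
theorem exists_reduced_sublist (ω : List B) :
    ∃ ω' : List B, ω'.Sublist ω ∧ cs.IsReduced ω' ∧ π ω' = π ω := by
  induction ω with
  | nil => exact ⟨[], List.Sublist.refl _, by simp [IsReduced], rfl⟩
  | cons i ω ih =>
    obtain ⟨ω', hsub, hred, hπ⟩ := ih
    by_cases hr : cs.IsReduced (i :: ω')
    · exact ⟨i :: ω', hsub.cons₂ i, hr, by rw [wordProd_cons, wordProd_cons, hπ]⟩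
    · have hlt : ℓ (σ i * π ω') + 1 = ℓ (π ω') := by
        rcases cs.length_simple_mul (π ω') i with h1 | h1
        · exfalso
          apply hr
          show ℓ (π (i :: ω')) = _
          rw [wordProd_cons, h1, hred, List.length_cons]
        · exact h1
      obtain ⟨ω₂, hsub₂, hlen₂, hπ₂⟩ := cs.left_exchange' hred (k := i) (by omega)
      refine ⟨ω₂, (hsub₂.trans hsub).cons i, ?_, ?_⟩
      · show ℓ (π ω₂) = _
        rw [hπ₂]
        have := hred
        unfold IsReduced at this
        omega
      · rw [hπ₂, wordProd_cons, hπ]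

/-! ### Parabolic subgroups -/

theorem wordProd_mem_parabolic {J : Set B} {ω : List B} (h : ∀ i ∈ ω, i ∈ J) :
    π ω ∈ cs.parabolic J := by
  induction ω with
  | nil => rw [wordProd_nil]; exact one_mem _
  | cons i ω ih =>
    rw [wordProd_cons]
    exact mul_mem (Subgroup.subset_closure ⟨i, h i mem_cons_self, rfl⟩)
      (ih fun x hx => h x (mem_cons_of_mem i hx))

theorem exists_word_of_mem_parabolic {J : Set B} {v : W} (hv : v ∈ cs.parabolic J) :
    ∃ ω : List B, (∀ i ∈ ω, i ∈ J) ∧ π ω = v := by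
  refine Subgroup.closure_induction ?_ ?_ ?_ ?_ hv
  · rintro x ⟨i, hi, rfl⟩
    exact ⟨[i], by simpa using hi, by simp⟩
  · exact ⟨[], by simp, by simp⟩
  · rintro x y _ _ ⟨ωx, hx, rfl⟩ ⟨ωy, hy, rfl⟩
    refine ⟨ωx ++ ωy, ?_, by rw [wordProd_append]⟩
    intro a ha
    rcases List.mem_append.mp ha with h | h
    · exact hx a h
    · exact hy a h
  · rintro x _ ⟨ωx, hx, rfl⟩
    exact ⟨ωx.reverse, fun a ha => hx a (List.mem_reverse.mp ha), by rw [wordProd_reverse]⟩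

theorem exists_reduced_word_of_mem_parabolic {J : Set B} {v : W} (hv : v ∈ cs.parabolic J) :
    ∃ ω : List B, (∀ i ∈ ω, i ∈ J) ∧ cs.IsReduced ω ∧ π ω = v := by
  obtain ⟨ω, hJ, hπ⟩ := cs.exists_word_of_mem_parabolic hv
  obtain ⟨ω', hsub, hred, hπ'⟩ := cs.exists_reduced_sublist ω
  exact ⟨ω', fun i hi => hJ i (hsub.subset hi), hred, by rw [hπ', hπ]⟩

theorem parabolic_mono {J K : Set B} (h : J ⊆ K) : cs.parabolic J ≤ cs.parabolic K :=
  Subgroup.closure_mono (Set.image_mono h)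

/-- Right descent of a nontrivial element of a parabolic subgroup. -/
theorem exists_parabolic_descent {J : Set B} {v : W} (hv : v ∈ cs.parabolic J) (hne : v ≠ 1) :
    ∃ t ∈ J, ℓ (v * σ t) + 1 = ℓ v ∧ v * σ t ∈ cs.parabolic J := by
  obtain ⟨ω, hJ, hred, hπ⟩ := cs.exists_reduced_word_of_mem_parabolic hv
  have hωne : ω ≠ [] := by
    rintro rfl
    rw [wordProd_nil] at hπ
    exact hne hπ.symm
  refine ⟨ω.getLast hωne, hJ _ (List.getLast_mem hωne), ?_, ?_⟩
  · have hsplit : ω.dropLast ++ [ω.getLast hωne] = ω := List.dropLast_append_getLast hωne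
    have hv' : v * σ (ω.getLast hωne) = π ω.dropLast := by
      have hω2 : π ω = π ω.dropLast * σ (ω.getLast hωne) := by
        conv_lhs => rw [← hsplit]
        rw [wordProd_append, wordProd_singleton]
      rw [← hπ, hω2, mul_assoc, cs.simple_mul_simple_self, mul_one]
    have hle : ℓ (v * σ (ω.getLast hωne)) ≤ ω.length - 1 := by
      rw [hv']
      calc ℓ (π ω.dropLast) ≤ ω.dropLast.length := cs.length_wordProd_le _
        _ = ω.length - 1 := List.length_dropLast
    have hlv : ℓ v = ω.length := by rw [← hπ]; exact hred
    have hωpos : 0 < ω.length := List.length_pos_iff.mpr hωne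
    rcases cs.length_mul_simple v (ω.getLast hωne) with h1 | h1 <;> omega
  · exact mul_mem hv (Subgroup.subset_closure ⟨_, hJ _ (List.getLast_mem hωne), rfl⟩)

/-! ### Lengths in cosets -/

theorem length_mul_eq_of_min {J : Set B} {u : W}
    (hmin : ∀ v ∈ cs.parabolic J, ℓ u ≤ ℓ (u * v)) :
    ∀ v ∈ cs.parabolic J, ℓ (u * v) = ℓ u + ℓ v := by
  suffices H : ∀ n (v : W), v ∈ cs.parabolic J → ℓ v = n → ℓ (u * v) = ℓ u + ℓ v by
    intro v hv
    exact H (ℓ v) v hv rfl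
  intro n
  induction n using Nat.strong_induction_on with
  | _ n ihn =>
    intro v hv hn
    by_cases hv1 : v = 1
    · subst hv1; simp
    obtain ⟨t, htJ, hdesc, hv'mem⟩ := cs.exists_parabolic_descent hv hv1
    have hIH : ℓ (u * (v * σ t)) = ℓ u + ℓ (v * σ t) :=
      ihn (ℓ (v * σ t)) (by omega) _ hv'mem rfl
    have huv : u * (v * σ t) * σ t = u * v := by
      rw [mul_assoc u, cs.simple_mul_simple_cancel_right]
    rcases cs.length_mul_simple (u * (v * σ t)) t with hup | hdown
    · rw [← huv, hup, hIH]
      omega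
    · -- derive a contradiction
      exfalso
      rw [huv] at hdown
      obtain ⟨ωu, hredu, hπu⟩ := cs.exists_reduced_word' u
      obtain ⟨ωv, hJv, hredv, hπv⟩ := cs.exists_reduced_word_of_mem_parabolic hv'mem
      have hπuv : π (ωu ++ ωv) = u * (v * σ t) := by rw [wordProd_append, ← hπu, hπv]
      have hconcat_red : cs.IsReduced (ωu ++ ωv) := by
        show ℓ (π (ωu ++ ωv)) = _
        rw [hπuv, hIH, List.length_append, ← hredu, ← hredv, ← hπu, hπv]
      have hlt' : ℓ (π (ωu ++ ωv) * σ t) < ℓ (π (ωu ++ ωv)) := by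
        have h2 : π (ωu ++ ωv) * σ t = u * v := by rw [hπuv, huv]
        rw [h2, hπuv]
        omega
      obtain ⟨ω₂, hsub, hlen₂, hπ₂⟩ := cs.right_exchange' hconcat_red hlt'
      rw [hπuv] at hπ₂
      rw [huv] at hπ₂
      rw [List.sublist_append_iff] at hsub
      obtain ⟨a, b, rfl, ha, hb⟩ := hsub
      have hal := ha.length_le
      have hbl := hb.length_le
      rw [List.length_append, List.length_append] at hlen₂
      rw [wordProd_append] at hπ₂
      have hlu : ℓ u = ωu.length := by rw [hπu]; exact hredu
      have hlv' : ℓ (v * σ t) = ωv.length := by rw [← hπv]; exact hredv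
      by_cases hcase : b.length = ωv.length
      · -- the deleted letter is in the `u` part
        have hbv : b = ωv := hb.eq_of_length hcase
        subst hbv
        have h : π a * (v * σ t) = u * v := by rw [← hπv]; exact hπ₂
        have hπa : π a = u * (v * σ t * v⁻¹) := by
          calc π a = (π a * (v * σ t)) * (v * σ t)⁻¹ := by group
            _ = (u * v) * (v * σ t)⁻¹ := by rw [h]
            _ = u * (v * σ t * v⁻¹) := by rw [mul_inv_rev, cs.inv_simple]; group
        have hmem' : v * σ t * v⁻¹ ∈ cs.parabolic J := mul_mem hv'mem (inv_mem hv)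
        have h1 := hmin _ hmem'
        rw [← hπa] at h1
        have h2 : ℓ (π a) ≤ a.length := cs.length_wordProd_le a
        omega
      · -- the deleted letter is in the `v` part
        have hacase : a.length = ωu.length := by omega
        have hav : a = ωu := ha.eq_of_length hacase
        have hπb : π b = v := by
          have h : π a * π b = u * v := hπ₂
          rw [hav, ← hπu] at h
          exact mul_left_cancel h
        have h1 : ℓ v ≤ b.length := by rw [← hπb]; exact cs.length_wordProd_le b
        omega

theorem exists_coset_min (J : Set B) (w : W) :
    ∃ u : W, u⁻¹ * w ∈ cs.parabolic J ∧ ∀ v ∈ cs.parabolic J, ℓ u ≤ ℓ (u * v) := by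
  have hne : {n : ℕ | ∃ v ∈ cs.parabolic J, ℓ (w * v) = n}.Nonempty :=
    ⟨ℓ (w * 1), 1, one_mem _, rfl⟩
  obtain ⟨v₀, hv₀, hlv₀⟩ := Nat.sInf_mem hne
  refine ⟨w * v₀, ?_, ?_⟩
  · have : (w * v₀)⁻¹ * w = v₀⁻¹ := by group
    rw [this]
    exact inv_mem hv₀
  · intro v hv
    rw [mul_assoc]
    rw [hlv₀]
    exact Nat.sInf_le ⟨v₀ * v, mul_mem hv₀ hv, rfl⟩

theorem minReps_min {J : Set B} {u : W} (hu : u ∈ cs.minReps J) :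
    ∀ v ∈ cs.parabolic J, ℓ u ≤ ℓ (u * v) := by
  obtain ⟨u₀, hu₀w, hu₀min⟩ := cs.exists_coset_min J u
  have huu : u = u₀ * (u₀⁻¹ * u) := by group
  by_cases h1 : u₀⁻¹ * u = 1
  · have : u₀ = u := by
      rw [huu, h1, mul_one]
    rw [← this]
    exact hu₀min
  · exfalso
    obtain ⟨t, htJ, hdesc, hmem⟩ := cs.exists_parabolic_descent hu₀w h1
    have hadd1 : ℓ (u₀ * (u₀⁻¹ * u)) = ℓ u₀ + ℓ (u₀⁻¹ * u) :=
      cs.length_mul_eq_of_min hu₀min _ hu₀w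
    have hadd2 : ℓ (u₀ * (u₀⁻¹ * u * σ t)) = ℓ u₀ + ℓ (u₀⁻¹ * u * σ t) :=
      cs.length_mul_eq_of_min hu₀min _ hmem
    have he1 : u₀ * (u₀⁻¹ * u) = u := by group
    have he2 : u₀ * (u₀⁻¹ * u * σ t) = u * σ t := by group
    rw [he1] at hadd1
    rw [he2] at hadd2
    have := hu t htJ
    omega

theorem minReps_length_mul {J : Set B} {u : W} (hu : u ∈ cs.minReps J)
    {v : W} (hv : v ∈ cs.parabolic J) : ℓ (u * v) = ℓ u + ℓ v :=
  cs.length_mul_eq_of_min (cs.minReps_min hu) v hv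

theorem minReps_unique {J : Set B} {u₁ u₂ : W} (h1 : u₁ ∈ cs.minReps J)
    (h2 : u₂ ∈ cs.minReps J) (h : u₁⁻¹ * u₂ ∈ cs.parabolic J) : u₁ = u₂ := by
  have e1 : ℓ u₂ = ℓ u₁ + ℓ (u₁⁻¹ * u₂) := by
    have := cs.minReps_length_mul h1 h
    rwa [show u₁ * (u₁⁻¹ * u₂) = u₂ by group] at this
  have h' : u₂⁻¹ * u₁ ∈ cs.parabolic J := by
    have : u₂⁻¹ * u₁ = (u₁⁻¹ * u₂)⁻¹ := by group
    rw [this]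
    exact inv_mem h
  have e2 : ℓ u₁ = ℓ u₂ + ℓ (u₂⁻¹ * u₁) := by
    have := cs.minReps_length_mul h2 h'
    rwa [show u₂ * (u₂⁻¹ * u₁) = u₁ by group] at this
  have hz : ℓ (u₁⁻¹ * u₂) = 0 := by omega
  have : u₁⁻¹ * u₂ = 1 := (cs.length_eq_zero_iff).mp hz
  have : u₂ = u₁ * 1 := by rw [← this]; group
  rw [this, mul_one]

theorem parabolic_commute {I : Set B} {t : B}
    (h : ∀ i ∈ I, Commute (cs.simple i) (cs.simple t)) {v : W} (hv : v ∈ cs.parabolic I) :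
    Commute v (cs.simple t) := by
  refine Subgroup.closure_induction ?_ ?_ ?_ ?_ hv
  · rintro x ⟨i, hi, rfl⟩
    exact h i hi
  · exact Commute.one_left _
  · intro x y _ _ hx hy
    exact hx.mul_left hy
  · intro x _ hx
    exact hx.inv_left

/-- Main lemma: commuting projections, abstract form. -/
theorem proj_comm_aux {I J : Set B}
    (hcomm : ∀ s ∈ I, ∀ t ∈ J, Commute (cs.simple s) (cs.simple t))
    {w a b c d : W}
    (haJ : a ∈ cs.minReps J) (hax : a⁻¹ * w ∈ cs.parabolic J)
    (hbI : b ∈ cs.minReps I) (hby : b⁻¹ * a ∈ cs.parabolic I)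
    (hcI : c ∈ cs.minReps I) (hcp : c⁻¹ * w ∈ cs.parabolic I)
    (hdJ : d ∈ cs.minReps J) (hdq : d⁻¹ * c ∈ cs.parabolic J) :
    b = d := by
  have hbIJ : b ∈ cs.minReps (I ∪ J) := by
    intro t ht
    rcases ht with htI | htJ
    · exact hbI t htI
    · have hcy : Commute (b⁻¹ * a) (σ t) :=
        cs.parabolic_commute (fun i hi => hcomm i hi t htJ) hby
      have hab : b * (b⁻¹ * a) = a := by group
      have hlen : ℓ a = ℓ b + ℓ (b⁻¹ * a) := by
        have := cs.minReps_length_mul hbI hby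
        rwa [hab] at this
      have h1 : ℓ a < ℓ (a * σ t) := haJ t htJ
      have h2 : a * σ t = (b * σ t) * (b⁻¹ * a) := by
        calc a * σ t = b * ((b⁻¹ * a) * σ t) := by group
          _ = b * (σ t * (b⁻¹ * a)) := by rw [hcy.eq]
          _ = (b * σ t) * (b⁻¹ * a) := by group
      have h3 : ℓ (a * σ t) ≤ ℓ (b * σ t) + ℓ (b⁻¹ * a) := by
        rw [h2]; exact cs.length_mul_le _ _
      omega
  have hdIJ : d ∈ cs.minReps (I ∪ J) := by
    intro t ht
    rcases ht with htI | htJ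
    · have hcy : Commute (d⁻¹ * c) (σ t) :=
        cs.parabolic_commute (fun j hj => (hcomm t htI j hj).symm) hdq
      have hdc : d * (d⁻¹ * c) = c := by group
      have hlen : ℓ c = ℓ d + ℓ (d⁻¹ * c) := by
        have := cs.minReps_length_mul hdJ hdq
        rwa [hdc] at this
      have h1 : ℓ c < ℓ (c * σ t) := hcI t htI
      have h2 : c * σ t = (d * σ t) * (d⁻¹ * c) := by
        calc c * σ t = d * ((d⁻¹ * c) * σ t) := by group
          _ = d * (σ t * (d⁻¹ * c)) := by rw [hcy.eq]
          _ = (d * σ t) * (d⁻¹ * c) := by group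
      have h3 : ℓ (c * σ t) ≤ ℓ (d * σ t) + ℓ (d⁻¹ * c) := by
        rw [h2]; exact cs.length_mul_le _ _
      omega
    · exact hdJ t htJ
  have hbd : b⁻¹ * d ∈ cs.parabolic (I ∪ J) := by
    have key : b⁻¹ * d = (b⁻¹ * a) * ((a⁻¹ * w) * ((c⁻¹ * w)⁻¹ * (d⁻¹ * c)⁻¹)) := by group
    rw [key]
    have m1 := cs.parabolic_mono (Set.subset_union_left (s := I) (t := J)) hby
    have m2 := cs.parabolic_mono (Set.subset_union_right (s := I) (t := J)) hax
    have m3 := cs.parabolic_mono (Set.subset_union_left (s := I) (t := J)) hcp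
    have m4 := cs.parabolic_mono (Set.subset_union_right (s := I) (t := J)) hdq
    exact mul_mem m1 (mul_mem m2 (mul_mem (inv_mem m3) (inv_mem m4)))
  exact cs.minReps_unique hbIJ hdIJ hbd

end

end CoxeterSystem

theorem stmt_3 (cs : CoxeterSystem M W) (P : Set B → W → W) (hP : cs.IsProjFamily P)
    (I J : Set B) (hdisj : I ∩ J = ∅)
    (hcomm : ∀ s ∈ I, ∀ t ∈ J, Commute (cs.simple s) (cs.simple t)) (w : W) :
    P I (P J w) = P J (P I w) := by
  obtain ⟨haJ, hax⟩ := hP J w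
  obtain ⟨hbI, hby⟩ := hP I (P J w)
  obtain ⟨hcI, hcp⟩ := hP I w
  obtain ⟨hdJ, hdq⟩ := hP J (P I w)
  exact cs.proj_comm_aux hcomm haJ hax hbI hby hcI hcp hdJ hdq
end

section
/- Let (W,S) be a finite Coxeter system with longest element w₀, and let I, J ⊆ S. Then P^I(P^J(w₀)) = w₀^{I∪J} · P^I(P^J(w₀(I∪J))), where w₀(I∪J) is the longest element of W_{I∪J} and w₀^{I∪J} = P^{I∪J}(w₀). -/
open CoxeterSystem

variable {B W : Type*} [Group W] {M : CoxeterMatrix B}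

open List

namespace StExch

open scoped Classical

variable {B W : Type*} [Group W] {M : CoxeterMatrix B} (cs : CoxeterSystem M W)

local prefix:100 "s" => cs.simple
local prefix:100 "π" => cs.wordProd
local prefix:100 "ℓ" => cs.length

lemma conj_eq_iff (g t x : W) : g * t * g⁻¹ = x ↔ t = g⁻¹ * x * g := by
  constructor
  · rintro rfl; group
  · rintro rfl; group

lemma simple_conj_simple (i : B) (t : W) : s i * (s i * t * s i) * s i = t := by
  simp [mul_assoc, cs.simple_mul_simple_cancel_left, cs.simple_mul_simple_self]

lemma simple_conj_eq_simple_iff (i : B) (t : W) : (s i * t * s i = s i) ↔ (t = s i) := by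
  constructor
  · intro h
    have := congrArg (fun x => s i * x * s i) h
    simpa [simple_conj_simple, mul_assoc, cs.simple_mul_simple_cancel_left,
      cs.simple_mul_simple_self] using this
  · rintro rfl; simp [cs.simple_mul_simple_self]

lemma sigma_invol (i : B) :
    Function.Involutive
      (fun p : W × ZMod 2 => (s i * p.1 * s i, p.2 + if p.1 = s i then 1 else 0)) := by
  rintro ⟨t, e⟩
  simp only [Prod.mk.injEq, simple_conj_simple, simple_conj_eq_simple_iff]
  refine ⟨trivial, ?_⟩
  rw [add_assoc]
  split_ifs with h
  · have h11 : (1 : ZMod 2) + 1 = 0 := by decide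
    rw [h11, add_zero]
  · simp

noncomputable def sigma (i : B) : Equiv.Perm (W × ZMod 2) :=
  Function.Involutive.toPerm _ (sigma_invol cs i)

lemma sigma_apply (i : B) (t : W) (e : ZMod 2) :
    sigma cs i (t, e) = (s i * t * s i, e + if t = s i then 1 else 0) := rfl

lemma sigma_sq (i : B) : sigma cs i * sigma cs i = 1 := by
  have h := sigma_invol cs i
  ext p
  · show ((sigma cs i (sigma cs i p))).1 = (p : W × ZMod 2).1
    rw [show sigma cs i (sigma cs i p) = p from h p]
  · show ((sigma cs i (sigma cs i p))).2 = (p : W × ZMod 2).2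
    rw [show sigma cs i (sigma cs i p) = p from h p]


/-- `s j * p^k = p^{-k} * s j` where `p = s i * s j`. -/
lemma simple_mul_pow (i j : B) (k : ℕ) :
    s j * (s i * s j) ^ k = ((s i * s j)⁻¹) ^ k * s j := by
  induction k with
  | zero => simp
  | succ k ih =>
    have hstep : s j * (s i * s j) = (s i * s j)⁻¹ * s j := by
      rw [mul_inv_rev, cs.inv_simple, cs.inv_simple]; group
    rw [pow_succ, ← mul_assoc, ih, mul_assoc, hstep, ← mul_assoc, ← pow_succ]

/-- the `a` sequence of reflections. -/
private def aseq (i j : B) (r : ℕ) : W :=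
  ((s i * s j) ^ r)⁻¹ * s j * (s i * s j) ^ r

lemma sigma_mul_apply (i j : B) (t : W) (e : ZMod 2) :
    (sigma cs i * sigma cs j) (t, e) =
      ((s i * s j) * t * (s i * s j)⁻¹,
        e + ((if t = s j then 1 else 0) + (if s j * t * s j = s i then 1 else 0))) := by
  show sigma cs i (sigma cs j (t, e)) = _
  rw [sigma_apply, sigma_apply]
  congr 1
  · rw [mul_inv_rev, cs.inv_simple, cs.inv_simple]
    group
  · rw [add_assoc]

lemma sigma_mul_pow_apply (i j : B) (k : ℕ) (t : W) (e : ZMod 2) :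
    ((sigma cs i * sigma cs j) ^ k) (t, e) =
      ((s i * s j) ^ k * t * ((s i * s j) ^ k)⁻¹,
        e + ∑ r ∈ Finset.range k,
          ((if t = aseq cs i j r then 1 else 0) +
           (if t = aseq cs i j r * (s i * s j) then 1 else 0))) := by
  induction k with
  | zero => simp
  | succ k ih =>
    rw [pow_succ']
    show (sigma cs i * sigma cs j) (((sigma cs i * sigma cs j) ^ k) (t, e)) = _
    rw [ih, sigma_mul_apply]
    set p := s i * s j with hp
    have h1 : (p ^ k * t * (p ^ k)⁻¹ = s j) ↔ (t = aseq cs i j k) := by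
      rw [conj_eq_iff]; rfl
    have h2 : (s j * (p ^ k * t * (p ^ k)⁻¹) * s j = s i) ↔ (t = aseq cs i j k * p) := by
      have expand : s j * (p ^ k * t * (p ^ k)⁻¹) * s j = (s j * p ^ k) * t * (s j * p ^ k)⁻¹ := by
        rw [mul_inv_rev, cs.inv_simple]; group
      rw [expand, conj_eq_iff]
      have : (s j * p ^ k)⁻¹ * s i * (s j * p ^ k)
          = (p ^ k)⁻¹ * (s j * s i * s j) * p ^ k := by
        rw [mul_inv_rev, cs.inv_simple]; group
      rw [this]
      have hsisj : s j * s i * s j = s j * p := by rw [hp]; group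
      rw [hsisj]
      have : (p ^ k)⁻¹ * (s j * p) * p ^ k = aseq cs i j k * p := by
        show _ = (p ^ k)⁻¹ * s j * p ^ k * p
        have hcomm : p * p ^ k = p ^ k * p := ((Commute.refl p).pow_right k).eq
        calc (p ^ k)⁻¹ * (s j * p) * p ^ k = (p ^ k)⁻¹ * s j * (p * p ^ k) := by group
          _ = (p ^ k)⁻¹ * s j * (p ^ k * p) := by rw [hcomm]
          _ = (p ^ k)⁻¹ * s j * p ^ k * p := by group
      rw [this]
    congr 1
    · rw [pow_succ']; group
    · rw [h1, h2, Finset.sum_range_succ, add_assoc]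


lemma sum_shift_one {m : ℕ} (h : ℕ → ZMod 2) (hh : ∀ r, h (r + m) = h r) :
    ∑ r ∈ Finset.range m, h (r + 1) = ∑ r ∈ Finset.range m, h r := by
  have h1 := Finset.sum_range_succ h m
  have h2 := Finset.sum_range_succ' h m
  have h0 : h m = h 0 := by simpa using hh 0
  rw [h1, h0] at h2
  exact add_right_cancel h2.symm

lemma sum_shift {m : ℕ} (g : ℕ → ZMod 2) (hg : ∀ r, g (r + m) = g r) (c : ℕ) :
    ∑ r ∈ Finset.range m, g (r + c) = ∑ r ∈ Finset.range m, g r := by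
  induction c with
  | zero => simp
  | succ c ih =>
    have e1 : ∀ r ∈ Finset.range m, g (r + (c + 1)) = (fun x => g (x + c)) (r + 1) := by
      intro r _
      show g (r + (c + 1)) = g (r + 1 + c)
      congr 1
      omega
    rw [Finset.sum_congr rfl e1, sum_shift_one (fun x => g (x + c))
      (fun r => by
        show g (r + m + c) = g (r + c)
        rw [show r + m + c = (r + c) + m by omega, hg])]
    exact ih

lemma aseq_eq (i j : B) (k : ℕ) :
    aseq cs i j k = (((s i * s j) ^ (2 * k))⁻¹) * s j := by
  show ((s i * s j) ^ k)⁻¹ * s j * (s i * s j) ^ k = _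
  rw [mul_assoc, simple_mul_pow cs i j k, inv_pow, ← mul_assoc, ← mul_inv_rev,
    ← pow_add, two_mul]

lemma sigma_braid (i j : B) : (sigma cs i * sigma cs j) ^ M i j = 1 := by
  by_cases hij : i = j
  · subst hij
    rw [M.diagonal i, pow_one, sigma_sq]
  rcases Nat.eq_zero_or_pos (M i j) with h0 | hpos
  · rw [h0, pow_zero]
  set p := s i * s j with hp
  have hpm : p ^ M i j = 1 := cs.simple_mul_simple_pow i j
  have haper : ∀ r, aseq cs i j (r + M i j) = aseq cs i j r := by
    intro r
    rw [aseq_eq, aseq_eq]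
    rw [show 2 * (r + M i j) = 2 * r + M i j + M i j by ring]
    rw [pow_add, pow_add, hpm, mul_one, mul_one]
  apply Equiv.ext
  rintro ⟨t, e⟩
  rw [sigma_mul_pow_apply, hpm]
  have hsum : ∑ r ∈ Finset.range (M i j),
      ((if t = aseq cs i j r then (1 : ZMod 2) else 0) +
       (if t = aseq cs i j r * p then 1 else 0)) = 0 := by
    rcases Nat.even_or_odd (M i j) with ⟨l, hl⟩ | ⟨l, hl⟩
    · -- even case: aseq has period l
      have hl' : M i j = l + l := hl
      have haperl : ∀ r, aseq cs i j (r + l) = aseq cs i j r := by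
        intro r
        rw [aseq_eq, aseq_eq, show 2 * (r + l) = 2 * r + M i j by omega, pow_add, hpm, mul_one]
      have hfper : ∀ r, ((if t = aseq cs i j (r + l) then (1 : ZMod 2) else 0) +
          (if t = aseq cs i j (r + l) * p then 1 else 0)) =
          ((if t = aseq cs i j r then (1 : ZMod 2) else 0) +
          (if t = aseq cs i j r * p then 1 else 0)) := by
        intro r; rw [haperl]
      rw [hl', Finset.sum_range_add]
      have : ∀ x ∈ Finset.range l,
          ((if t = aseq cs i j (l + x) then (1 : ZMod 2) else 0) +
           (if t = aseq cs i j (l + x) * p then 1 else 0)) =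
          ((if t = aseq cs i j x then (1 : ZMod 2) else 0) +
           (if t = aseq cs i j x * p then 1 else 0)) := by
        intro x _
        rw [show l + x = x + l by omega, haperl]
      rw [Finset.sum_congr rfl this]
      exact CharTwo.add_self_eq_zero _
    · -- odd case: aseq r * p = aseq (r + (l + 1))
      have hsp : s j * p = p⁻¹ * s j := by
        have h := simple_mul_pow cs i j 1
        rw [pow_one, pow_one] at h
        exact h
      have hb : ∀ r, aseq cs i j r * p = aseq cs i j (r + (l + 1)) := by
        intro r
        rw [aseq_eq, aseq_eq, show 2 * (r + (l + 1)) = (2 * r + 1) + M i j by omega]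
        rw [pow_add, hpm, mul_one, mul_assoc, hsp]
        rw [← hp]
        group
      have hsplit : ∑ r ∈ Finset.range (M i j),
          ((if t = aseq cs i j r then (1 : ZMod 2) else 0) +
           (if t = aseq cs i j r * p then 1 else 0)) =
          (∑ r ∈ Finset.range (M i j), (if t = aseq cs i j r then (1 : ZMod 2) else 0)) +
          (∑ r ∈ Finset.range (M i j), (if t = aseq cs i j (r + (l + 1)) then (1 : ZMod 2) else 0)) := by
        rw [← Finset.sum_add_distrib]
        refine Finset.sum_congr rfl fun r _ => ?_
        rw [hb]
      rw [hsplit, sum_shift (fun r => if t = aseq cs i j r then (1 : ZMod 2) else 0)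
        (fun r => by simp only [haper]) (l + 1)]
      exact CharTwo.add_self_eq_zero _
  rw [hsum]
  simp


local prefix:100 "ris" => cs.rightInvSeq

noncomputable def phi : W →* Equiv.Perm (W × ZMod 2) :=
  cs.lift ⟨fun i => sigma cs i, fun i j => sigma_braid cs i j⟩

lemma phi_simple (i : B) : phi cs (s i) = sigma cs i := cs.lift_apply_simple _ i

noncomputable def eta (w t : W) : ZMod 2 := (phi cs w (t, 0)).2

lemma phi_wordProd (ω : List B) (t : W) (e : ZMod 2) :
    phi cs (π ω) (t, e) = (π ω * t * (π ω)⁻¹, e + ((ris ω).count t : ZMod 2)) := by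
  induction ω generalizing t e with
  | nil => simp
  | cons i ω ih =>
    rw [cs.wordProd_cons, map_mul]
    show phi cs (s i) (phi cs (π ω) (t, e)) = _
    rw [ih, phi_simple, sigma_apply]
    have hris : ris (i :: ω) = ((π ω)⁻¹ * s i * π ω) :: ris ω := rfl
    have hcond : (π ω * t * (π ω)⁻¹ = s i) ↔ ((π ω)⁻¹ * s i * π ω = t) := by
      rw [conj_eq_iff]
      constructor
      · rintro rfl; group
      · rintro rfl; group
    congr 1
    · rw [mul_inv_rev, cs.inv_simple]; group
    · rw [hris, List.count_cons, add_assoc]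
      congr 1
      push_cast
      congr 1
      split_ifs with h1 h2 h2
      · rfl
      · exact absurd (hcond.mp h1) (by simpa using h2)
      · refine absurd ?_ h1
        refine hcond.mpr ?_
        simpa using h2
      · rfl

lemma phi_apply (w t : W) (e : ZMod 2) :
    phi cs w (t, e) = (w * t * w⁻¹, e + eta cs w t) := by
  obtain ⟨ω, rfl⟩ := cs.wordProd_surjective w
  rw [phi_wordProd]
  unfold eta
  rw [phi_wordProd, zero_add]

lemma eta_wordProd (ω : List B) (t : W) :
    eta cs (π ω) t = ((ris ω).count t : ZMod 2) := by
  unfold eta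
  rw [phi_wordProd, zero_add]

lemma eta_one (t : W) : eta cs 1 t = 0 := by
  unfold eta
  rw [map_one]
  rfl

lemma eta_mul (u v t : W) : eta cs (u * v) t = eta cs v t + eta cs u (v * t * v⁻¹) := by
  unfold eta
  rw [map_mul]
  show (phi cs u (phi cs v (t, 0))).2 = _
  rw [phi_apply, phi_apply]
  simp only [zero_add]
  rfl

lemma eta_inv (v t : W) : eta cs v⁻¹ t = eta cs v (v⁻¹ * t * v) := by
  have h := eta_mul cs v v⁻¹ t
  rw [mul_inv_cancel, eta_one] at h
  have h2 : v⁻¹ * t * (v⁻¹)⁻¹ = v⁻¹ * t * v := by group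
  rw [h2] at h
  have := eq_neg_of_add_eq_zero_left h.symm
  rw [this, CharTwo.neg_eq]

lemma eta_simple (i : B) (t : W) : eta cs (s i) t = if t = s i then 1 else 0 := by
  have h : eta cs (s i) t = ((ris [i]).count t : ZMod 2) := by
    rw [← eta_wordProd]
    congr 1
    simp
  rw [h, show ris [i] = [s i] from by simp, List.count_singleton']
  by_cases h2 : t = s i
  · rw [if_pos h2.symm, if_pos h2]
    simp
  · rw [if_neg (fun hh => h2 hh.symm), if_neg h2]
    simp

lemma eta_refl_self {t : W} (ht : cs.IsReflection t) : eta cs t t = 1 := by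
  obtain ⟨v, i, hvi⟩ := ht
  have h1 : eta cs t t = eta cs v⁻¹ t + eta cs (v * s i) (v⁻¹ * t * v) := by
    have := eta_mul cs (v * s i) v⁻¹ t
    rw [show v * s i * v⁻¹ = t from hvi.symm] at this
    rw [this]
    congr 2
    group
  have h2 : v⁻¹ * t * v = s i := by rw [hvi]; group
  have h3 : eta cs v⁻¹ t = eta cs v (s i) := by rw [eta_inv, h2]
  have h4 : eta cs (v * s i) (s i) = 1 + eta cs v (s i) := by
    have := eta_mul cs v (s i) (s i)
    rw [this, eta_simple, if_pos rfl]
    congr 1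
    have : s i * s i * (s i)⁻¹ = s i := by group
    rw [this]
  rw [h1, h2, h3, h4]
  have : eta cs v (s i) + (1 + eta cs v (s i)) =
      (eta cs v (s i) + eta cs v (s i)) + 1 := by ring
  rw [this, CharTwo.add_self_eq_zero, zero_add]

lemma zmod2_cases (x : ZMod 2) : x = 0 ∨ x = 1 := by revert x; decide

lemma inversion_of_eta_one {w t : W} (h : eta cs w t = 1) : ℓ (w * t) < ℓ w := by
  obtain ⟨ω, hred, hw⟩ := cs.exists_reduced_word' w
  subst hw
  rw [eta_wordProd] at h
  have hne : (ris ω).count t ≠ 0 := by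
    intro h0
    rw [h0] at h
    simp at h
  have hmem : t ∈ ris ω := List.count_pos_iff.mp (Nat.pos_of_ne_zero hne)
  exact (cs.isRightInversion_of_mem_rightInvSeq hred hmem).2

lemma eta_one_of_inversion {w t : W} (ht : cs.IsReflection t) (h : ℓ (w * t) < ℓ w) :
    eta cs w t = 1 := by
  rcases zmod2_cases (eta cs w t) with h0 | h1
  · exfalso
    have hwt : eta cs (w * t) t = 1 := by
      rw [eta_mul, eta_refl_self cs ht, show t * t * t⁻¹ = t by group, h0]
      rfl
    have := inversion_of_eta_one cs hwt
    rw [mul_assoc, ht.mul_self, mul_one] at this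
    omega
  · exact h1

lemma mem_rightInvSeq_of_inversion {ω : List B} {t : W} (ht : cs.IsReflection t)
    (h : ℓ (π ω * t) < ℓ (π ω)) : t ∈ ris ω := by
  have h1 : eta cs (π ω) t = 1 := eta_one_of_inversion cs ht h
  rw [eta_wordProd] at h1
  have hne : (ris ω).count t ≠ 0 := by
    intro h0
    rw [h0] at h1
    simp at h1
  exact List.count_pos_iff.mp (Nat.pos_of_ne_zero hne)


/-! ### Parabolic subgroups: words -/

lemma mem_parabolic_of_forall_mem {ω : List B} {K : Set B} (h : ∀ b ∈ ω, b ∈ K) :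
    π ω ∈ cs.parabolic K := by
  induction ω with
  | nil => rw [cs.wordProd_nil]; exact one_mem _
  | cons i ω ih =>
    rw [cs.wordProd_cons]
    exact mul_mem (Subgroup.subset_closure ⟨i, h i (by simp), rfl⟩)
      (ih (fun b hb => h b (by simp [hb])))

lemma exists_word_of_mem_parabolic {K : Set B} {v : W} (hv : v ∈ cs.parabolic K) :
    ∃ ω : List B, (∀ b ∈ ω, b ∈ K) ∧ π ω = v := by
  induction hv using Subgroup.closure_induction with
  | mem x hx =>
    obtain ⟨i, hi, rfl⟩ := hx
    exact ⟨[i], by simpa using hi, by simp⟩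
  | one => exact ⟨[], by simp, by simp⟩
  | mul x y hx hy ihx ihy =>
    obtain ⟨ω₁, h₁, rfl⟩ := ihx
    obtain ⟨ω₂, h₂, rfl⟩ := ihy
    refine ⟨ω₁ ++ ω₂, ?_, by rw [cs.wordProd_append]⟩
    intro b hb
    rcases List.mem_append.mp hb with hb | hb
    · exact h₁ b hb
    · exact h₂ b hb
  | inv x hx ihx =>
    obtain ⟨ω, h₁, rfl⟩ := ihx
    exact ⟨ω.reverse, fun b hb => h₁ b (List.mem_reverse.mp hb), by rw [cs.wordProd_reverse]⟩

lemma shorten {ω : List B} (h : ¬ cs.IsReduced ω) :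
    ∃ ω' : List B, ω'.length + 2 = ω.length ∧ π ω' = π ω ∧ ∀ b ∈ ω', b ∈ ω := by
  have hne : ω ≠ [] := by
    rintro rfl
    exact h (by simp [CoxeterSystem.IsReduced])
  have hlenpos : 0 < ω.length := List.length_pos_iff.mpr hne
  have hex : ∃ m, ¬ cs.IsReduced (ω.take (m + 1)) := by
    refine ⟨ω.length - 1, ?_⟩
    rwa [show ω.length - 1 + 1 = ω.length by omega, List.take_length]
  set m := Nat.find hex with hmdef
  have hm1 : ¬ cs.IsReduced (ω.take (m + 1)) := Nat.find_spec hex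
  have hmred : cs.IsReduced (ω.take m) := by
    rcases Nat.eq_zero_or_pos m with h0 | hpos
    · rw [h0]
      show ℓ (π ([] : List B)) = _
      simp
    · have hmin := Nat.find_min hex (show m - 1 < m by omega)
      rw [show m - 1 + 1 = m by omega] at hmin
      exact not_not.mp hmin
  have hmlt : m < ω.length := by
    by_contra hge
    push_neg at hge
    have h1 := hmred
    rw [List.take_of_length_le hge] at h1
    rw [List.take_of_length_le (by omega)] at hm1
    exact hm1 h1
  set i := ω.get ⟨m, hmlt⟩ with hidef
  have htake : ω.take (m + 1) = ω.take m ++ [i] := by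
    rw [← List.concat_eq_append]
    exact (List.take_concat_get hmlt).symm
  set u := π (ω.take m) with hudef
  have hlu : ℓ u = m := by
    have hlen : (ω.take m).length = m := by
      rw [List.length_take]
      omega
    rw [hudef, hmred, hlen]
  have hlow : ℓ (u * s i) < ℓ u := by
    have hni : ℓ (u * s i) ≠ m + 1 := by
      intro hcc
      apply hm1
      show ℓ (π (ω.take (m + 1))) = (ω.take (m + 1)).length
      rw [htake, cs.wordProd_append, cs.wordProd_singleton]
      rw [← hudef, hcc, List.length_append, List.length_singleton, List.length_take]
      omega
    rcases cs.length_mul_simple u i with hc | hc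
    · omega
    · omega
  have hmem : s i ∈ ris (ω.take m) :=
    mem_rightInvSeq_of_inversion cs (cs.isReflection_simple i) (by rw [← hudef]; omega)
  obtain ⟨j, hj, hjt⟩ := List.getElem_of_mem hmem
  have hjlen : j < m := by
    have := cs.length_rightInvSeq (ω.take m)
    rw [this, List.length_take] at hj
    omega
  have herase : u * s i = π ((ω.take m).eraseIdx j) := by
    rw [← cs.wordProd_mul_getD_rightInvSeq]
    congr 1
    rw [List.getD_eq_getElem _ _ hj, hjt]
  refine ⟨(ω.take m).eraseIdx j ++ ω.drop (m + 1), ?_, ?_, ?_⟩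
  · have hjlt : j < (ω.take m).length := by
      rw [List.length_take]; omega
    rw [List.length_append, List.length_eraseIdx, if_pos hjlt]
    simp only [List.length_take, List.length_drop]
    omega
  · rw [cs.wordProd_append, ← herase]
    conv_rhs => rw [← List.take_append_drop (m + 1) ω]
    rw [cs.wordProd_append, htake, cs.wordProd_append, cs.wordProd_singleton, ← hudef]
  · intro b hb
    rcases List.mem_append.mp hb with hb | hb
    · exact List.take_subset m ω (List.eraseIdx_subset hb)
    · exact List.drop_subset _ ω hb


lemma exists_reduced_subword : ∀ (n : ℕ) (ω : List B), ω.length ≤ n →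
    ∃ ω' : List B, (∀ b ∈ ω', b ∈ ω) ∧ cs.IsReduced ω' ∧ π ω' = π ω := by
  intro n
  induction n with
  | zero =>
    intro ω hω
    have : ω = [] := List.length_eq_zero_iff.mp (by omega)
    subst this
    exact ⟨[], by simp, by show ℓ (π ([] : List B)) = _; simp, rfl⟩
  | succ n ih =>
    intro ω hω
    by_cases hred : cs.IsReduced ω
    · exact ⟨ω, fun b hb => hb, hred, rfl⟩
    · obtain ⟨ω₁, hlen, hprod, hsub⟩ := shorten cs hred
      obtain ⟨ω', hsub', hred', hprod'⟩ := ih ω₁ (by omega)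
      exact ⟨ω', fun b hb => hsub b (hsub' b hb), hred', by rw [hprod', hprod]⟩

lemma exists_reduced_word_mem_parabolic {K : Set B} {v : W} (hv : v ∈ cs.parabolic K) :
    ∃ ω : List B, (∀ b ∈ ω, b ∈ K) ∧ cs.IsReduced ω ∧ π ω = v := by
  obtain ⟨ω, hK, rfl⟩ := exists_word_of_mem_parabolic cs hv
  obtain ⟨ω', hsub, hred, hprod⟩ := exists_reduced_subword cs ω.length ω le_rfl
  exact ⟨ω', fun b hb => hK b (hsub b hb), hred, hprod⟩

lemma ris_subset_parabolic {ω : List B} {K : Set B} (hω : ∀ b ∈ ω, b ∈ K) {t : W}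
    (ht : t ∈ ris ω) : t ∈ cs.parabolic K := by
  obtain ⟨j, hj, rfl⟩ := List.getElem_of_mem ht
  rw [← List.getD_eq_getElem _ 1 hj, cs.getD_rightInvSeq]
  have hjω : j < ω.length := by rwa [cs.length_rightInvSeq] at hj
  have hdrop : π (ω.drop (j + 1)) ∈ cs.parabolic K :=
    mem_parabolic_of_forall_mem cs (fun b hb => hω b (List.drop_subset _ _ hb))
  have hget : ω[j]? = some (ω.get ⟨j, hjω⟩) := List.getElem?_eq_getElem hjω
  rw [hget]
  refine mul_mem (mul_mem (inv_mem hdrop) ?_) hdrop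
  simp only [Option.map_some, Option.getD_some]
  refine Subgroup.subset_closure ⟨ω.get ⟨j, hjω⟩, hω _ ?_, rfl⟩
  have : ω.get ⟨j, hjω⟩ = ω[j]'hjω := rfl
  rw [this]
  exact List.getElem_mem hjω

lemma inversion_mem_parabolic {K : Set B} {v t : W} (hv : v ∈ cs.parabolic K)
    (ht : cs.IsReflection t) (h : ℓ (v * t) < ℓ v) : t ∈ cs.parabolic K := by
  obtain ⟨ω, hK, hred, hprod⟩ := exists_reduced_word_mem_parabolic cs hv
  subst hprod
  exact ris_subset_parabolic cs hK (mem_rightInvSeq_of_inversion cs ht h)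

/-! ### Minimal coset representatives -/

lemma exists_min_rep (w : W) (K : Set B) :
    ∃ u₀ : W, u₀⁻¹ * w ∈ cs.parabolic K ∧
      ∀ u : W, u⁻¹ * w ∈ cs.parabolic K → ℓ u₀ ≤ ℓ u := by
  have hne : ∃ n, ∃ u : W, u⁻¹ * w ∈ cs.parabolic K ∧ ℓ u = n := by
    refine ⟨ℓ w, w, ?_, rfl⟩
    rw [inv_mul_cancel]
    exact one_mem _
  obtain ⟨u, hu, hlen⟩ := Nat.find_spec hne
  exact ⟨u, hu, fun u' hu' => hlen ▸ Nat.find_min' hne ⟨u', hu', rfl⟩⟩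

lemma min_rep_mul_length {w : W} {K : Set B} {u₀ : W}
    (hu₀ : u₀⁻¹ * w ∈ cs.parabolic K)
    (hmin : ∀ u : W, u⁻¹ * w ∈ cs.parabolic K → ℓ u₀ ≤ ℓ u) :
    ∀ v ∈ cs.parabolic K, ℓ (u₀ * v) = ℓ u₀ + ℓ v := by
  have main : ∀ (n : ℕ) (v : W), v ∈ cs.parabolic K → ℓ v ≤ n →
      ℓ (u₀ * v) = ℓ u₀ + ℓ v := by
    intro n
    induction n with
    | zero =>
      intro v hv hlv
      have hv1 : v = 1 := cs.length_eq_zero_iff.mp (by omega)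
      subst hv1
      simp
    | succ n ih =>
      intro v hv hlv
      by_cases hv1 : v = 1
      · subst hv1; simp
      obtain ⟨ω, hK, hred, hprod⟩ := exists_reduced_word_mem_parabolic cs hv
      have hωne : ω ≠ [] := by
        rintro rfl
        exact hv1 (by rw [← hprod]; simp)
      set i := ω.getLast hωne with hidef
      have hsplit : ω.dropLast ++ [i] = ω := List.dropLast_append_getLast hωne
      set ω' := ω.dropLast with hω'def
      have hK' : ∀ b ∈ ω', b ∈ K := fun b hb => hK b (List.dropLast_subset ω hb)
      have hiK : i ∈ K := hK i (List.getLast_mem hωne)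
      set v' := π ω' with hv'def
      have hv'mem : v' ∈ cs.parabolic K := mem_parabolic_of_forall_mem cs hK'
      have hred' : cs.IsReduced ω' := by
        rw [hω'def, List.dropLast_eq_take]
        exact hred.take _
      have hlv : ℓ v = ω.length := by rw [← hprod]; exact hred
      have hω'len : ω'.length = ω.length - 1 := by
        rw [hω'def, List.length_dropLast]
      have hωpos : 0 < ω.length := List.length_pos_iff.mpr hωne
      have hlv' : ℓ v' = ω.length - 1 := by
        rw [hv'def, hred', hω'len]
      have hvv' : v = v' * s i := by
        rw [← hprod, ← hsplit, cs.wordProd_append, cs.wordProd_singleton]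
      have ihv' : ℓ (u₀ * v') = ℓ u₀ + ℓ v' := ih v' hv'mem (by omega)
      rcases cs.length_mul_simple (u₀ * v') i with hc | hc
      · have hgoal : ℓ (u₀ * v) = ℓ (u₀ * v') + 1 := by
          rw [hvv', ← mul_assoc]
          exact hc
        omega
      · exfalso
        obtain ⟨ψ, hψred, hψprod⟩ := cs.exists_reduced_word' u₀
        have hψlen : ψ.length = ℓ u₀ := by rw [hψprod]; exact hψred.symm
        have hUV : π (ψ ++ ω') = u₀ * v' := by
          rw [cs.wordProd_append, ← hψprod, ← hv'def]
        have hinv : ℓ (π (ψ ++ ω') * s i) < ℓ (π (ψ ++ ω')) := by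
          rw [hUV]
          omega
        have hmem := mem_rightInvSeq_of_inversion cs (cs.isReflection_simple i) hinv
        obtain ⟨j, hj, hjt⟩ := List.getElem_of_mem hmem
        have hjlen : j < ψ.length + ω'.length := by
          rwa [cs.length_rightInvSeq, List.length_append] at hj
        have herase : u₀ * v' * s i = π ((ψ ++ ω').eraseIdx j) := by
          rw [← hUV, ← cs.wordProd_mul_getD_rightInvSeq]
          congr 1
          rw [List.getD_eq_getElem _ _ hj, hjt]
        by_cases hjψ : j < ψ.length
        · have he : (ψ ++ ω').eraseIdx j = ψ.eraseIdx j ++ ω' :=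
            List.eraseIdx_append_of_lt_length hjψ ω'
          have hu'eq : u₀ * v' * s i * v'⁻¹ = π (ψ.eraseIdx j) := by
            rw [herase, he, cs.wordProd_append, ← hv'def, mul_assoc, mul_inv_cancel, mul_one]
          have hu'l : ℓ (u₀ * v' * s i * v'⁻¹) ≤ ψ.length - 1 := by
            rw [hu'eq]
            have h1 := cs.length_wordProd_le (ψ.eraseIdx j)
            rwa [List.length_eraseIdx, if_pos hjψ] at h1
          have hu'w : (u₀ * v' * s i * v'⁻¹)⁻¹ * w ∈ cs.parabolic K := by
            have : (u₀ * v' * s i * v'⁻¹)⁻¹ * w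
                = v' * ((s i)⁻¹ * (v'⁻¹ * (u₀⁻¹ * w))) := by group
            rw [this]
            refine mul_mem hv'mem (mul_mem (inv_mem ?_) (mul_mem (inv_mem hv'mem) hu₀))
            exact Subgroup.subset_closure ⟨i, hiK, rfl⟩
          have := hmin _ hu'w
          omega
        · push_neg at hjψ
          have he : (ψ ++ ω').eraseIdx j = ψ ++ ω'.eraseIdx (j - ψ.length) :=
            List.eraseIdx_append_of_length_le hjψ ω'
          have hveq : v = π (ω'.eraseIdx (j - ψ.length)) := by
            have h2 : u₀ * (v' * s i) = u₀ * π (ω'.eraseIdx (j - ψ.length)) := by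
              rw [← mul_assoc, herase, he, cs.wordProd_append, ← hψprod]
            rw [hvv']
            exact mul_left_cancel h2
          have hlen2 : ℓ v ≤ ω'.length - 1 := by
            rw [hveq]
            have h1 := cs.length_wordProd_le (ω'.eraseIdx (j - ψ.length))
            rwa [List.length_eraseIdx, if_pos (by omega)] at h1
          omega
  intro v hv
  exact main (ℓ v) v hv le_rfl


lemma min_rep_unique {w : W} {K : Set B} {u₀ u : W}
    (hu₀ : u₀⁻¹ * w ∈ cs.parabolic K)
    (hmin : ∀ u' : W, u'⁻¹ * w ∈ cs.parabolic K → ℓ u₀ ≤ ℓ u')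
    (hu : u ∈ cs.minReps K) (huw : u⁻¹ * w ∈ cs.parabolic K) : u = u₀ := by
  set z := u₀⁻¹ * u with hz
  have hzmem : z ∈ cs.parabolic K := by
    have h1 : z = (u₀⁻¹ * w) * (u⁻¹ * w)⁻¹ := by rw [hz]; group
    rw [h1]
    exact mul_mem hu₀ (inv_mem huw)
  by_cases hz1 : z = 1
  · have : u₀ * z = u₀ * 1 := by rw [hz1]
    rw [hz, ← mul_assoc, mul_inv_cancel, one_mul, mul_one] at this
    exact this
  · exfalso
    obtain ⟨ω, hK, hred, hprod⟩ := exists_reduced_word_mem_parabolic cs hzmem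
    have hωne : ω ≠ [] := by
      rintro rfl
      exact hz1 (by rw [← hprod]; simp)
    set i := ω.getLast hωne with hidef
    have hsplit : ω.dropLast ++ [i] = ω := List.dropLast_append_getLast hωne
    set z' := π ω.dropLast with hz'def
    have hz'mem : z' ∈ cs.parabolic K :=
      mem_parabolic_of_forall_mem cs (fun b hb => hK b (List.dropLast_subset ω hb))
    have hiK : i ∈ K := hK i (List.getLast_mem hωne)
    have hωpos : 0 < ω.length := List.length_pos_iff.mpr hωne
    have hlz : ℓ z = ω.length := by rw [← hprod]; exact hred
    have hlz' : ℓ z' = ω.length - 1 := by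
      rw [hz'def]
      have hred' : cs.IsReduced ω.dropLast := by
        rw [List.dropLast_eq_take]
        exact hred.take _
      rw [hred', List.length_dropLast]
    have hzz' : z = z' * s i := by
      rw [← hprod, ← hsplit, cs.wordProd_append, cs.wordProd_singleton]
    have hu₀u : u = u₀ * z := by rw [hz]; group
    have husi : u * s i = u₀ * z' := by
      rw [hu₀u, hzz', mul_assoc, mul_assoc, cs.simple_mul_simple_self, mul_one]
    have h1 : ℓ (u * s i) = ℓ u₀ + ℓ z' := by
      rw [husi]
      exact min_rep_mul_length cs hu₀ hmin z' hz'mem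
    have h2 : ℓ u = ℓ u₀ + ℓ z := by
      rw [hu₀u]
      exact min_rep_mul_length cs hu₀ hmin z hzmem
    have h3 := hu i hiK
    omega

lemma proj_char {P : Set B → W → W} (hP : cs.IsProjFamily P) {K : Set B} {w u : W}
    (hu : u ∈ cs.minReps K) (huw : u⁻¹ * w ∈ cs.parabolic K) : u = P K w := by
  obtain ⟨u₀, h1, h2⟩ := exists_min_rep cs w K
  rw [min_rep_unique cs h1 h2 hu huw, ← min_rep_unique cs h1 h2 (hP K w).1 (hP K w).2]

lemma proj_mul_length {P : Set B → W → W} (hP : cs.IsProjFamily P) (K : Set B) (w : W) :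
    ∀ v ∈ cs.parabolic K, ℓ (P K w * v) = ℓ (P K w) + ℓ v := by
  obtain ⟨u₀, h1, h2⟩ := exists_min_rep cs w K
  have he : P K w = u₀ := min_rep_unique cs h1 h2 (hP K w).1 (hP K w).2
  intro v hv
  rw [he]
  exact min_rep_mul_length cs h1 h2 v hv

/-! ### Elements are determined by their inversion parities -/

lemma eta_ext : ∀ (n : ℕ) (u v : W), ℓ u ≤ n →
    (∀ t, cs.IsReflection t → eta cs u t = eta cs v t) → u = v := by
  have base : ∀ v : W, (∀ t, cs.IsReflection t → eta cs 1 t = eta cs v t) → 1 = v := by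
    intro v h
    by_contra hv1
    obtain ⟨i, hi⟩ := cs.exists_rightDescent_of_ne_one (fun hh => hv1 hh.symm)
    have h1 : eta cs v (s i) = 1 :=
      eta_one_of_inversion cs (cs.isReflection_simple i) hi
    have h0 := h (s i) (cs.isReflection_simple i)
    rw [eta_one, h1] at h0
    exact absurd h0 (by decide)
  intro n
  induction n with
  | zero =>
    intro u v hl h
    have hu1 : u = 1 := cs.length_eq_zero_iff.mp (by omega)
    subst hu1
    exact base v h
  | succ n ih =>
    intro u v hl h
    by_cases hu1 : u = 1
    · subst hu1
      exact base v h
    obtain ⟨i, hi⟩ := cs.exists_rightDescent_of_ne_one hu1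
    have hui : eta cs u (s i) = 1 :=
      eta_one_of_inversion cs (cs.isReflection_simple i) hi
    have hvi : ℓ (v * s i) < ℓ v := by
      refine inversion_of_eta_one cs ?_
      rw [← h (s i) (cs.isReflection_simple i)]
      exact hui
    have hstep : ∀ t, cs.IsReflection t → eta cs (u * s i) t = eta cs (v * s i) t := by
      intro t ht
      rw [eta_mul, eta_mul, h _ (ht.conj (s i))]
    have hlen : ℓ (u * s i) ≤ n := by
      have : ℓ (u * s i) < ℓ u := hi
      omega
    exact mul_right_cancel (ih (u * s i) (v * s i) hlen hstep)

lemma max_parabolic_unique {K : Set B} {x y : W}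
    (hx : x ∈ cs.parabolic K) (hy : y ∈ cs.parabolic K)
    (hxmax : ∀ z ∈ cs.parabolic K, ℓ z ≤ ℓ x)
    (hymax : ∀ z ∈ cs.parabolic K, ℓ z ≤ ℓ y) : x = y := by
  have key : ∀ {g : W}, g ∈ cs.parabolic K → (∀ z ∈ cs.parabolic K, ℓ z ≤ ℓ g) →
      ∀ t, cs.IsReflection t → (eta cs g t = 1 ↔ t ∈ cs.parabolic K) := by
    intro g hg hgmax t ht
    constructor
    · intro h1
      exact inversion_mem_parabolic cs hg ht (inversion_of_eta_one cs h1)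
    · intro htK
      refine eta_one_of_inversion cs ht ?_
      have hgt : g * t ∈ cs.parabolic K := mul_mem hg htK
      have hne := ht.length_mul_left_ne g
      have := hgmax _ hgt
      omega
  refine eta_ext cs (ℓ x) x y le_rfl (fun t ht => ?_)
  rcases zmod2_cases (eta cs x t) with h0 | h1
  · rcases zmod2_cases (eta cs y t) with g0 | g1
    · rw [h0, g0]
    · exfalso
      have : eta cs x t = 1 := (key hx hxmax t ht).mpr ((key hy hymax t ht).mp g1)
      rw [h0] at this
      exact absurd this (by decide)
  · rw [h1, ((key hy hymax t ht).mpr ((key hx hxmax t ht).mp h1)).symm]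

end StExch

theorem stmt_6 (cs : CoxeterSystem M W) [Finite W] (P : Set B → W → W)
    (hP : cs.IsProjFamily P) (I J : Set B)
    (w₀ : W) (hw₀ : ∀ u : W, cs.length u ≤ cs.length w₀)
    (w₀IJ : W) (hw₀IJ : w₀IJ ∈ cs.parabolic (I ∪ J))
    (hw₀IJmax : ∀ u ∈ cs.parabolic (I ∪ J), cs.length u ≤ cs.length w₀IJ) :
    P I (P J w₀) = P (I ∪ J) w₀ * P I (P J w₀IJ) := by
  classical
  set K := I ∪ J with hK
  have hIK : cs.parabolic I ≤ cs.parabolic K :=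
    Subgroup.closure_mono (Set.image_mono (fun x hx => Or.inl hx))
  have hJK : cs.parabolic J ≤ cs.parabolic K :=
    Subgroup.closure_mono (Set.image_mono (fun x hx => Or.inr hx))
  set u := P K w₀ with hu
  have huMin : u ∈ cs.minReps K := (hP K w₀).1
  have huPar : u⁻¹ * w₀ ∈ cs.parabolic K := (hP K w₀).2
  set v := u⁻¹ * w₀ with hv
  have hw₀uv : w₀ = u * v := by rw [hv]; group
  have hadd := StExch.proj_mul_length cs hP K w₀
  rw [← hu] at hadd
  have hvmax : ∀ z ∈ cs.parabolic K, cs.length z ≤ cs.length v := by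
    intro z hz
    have h1 : cs.length (u * z) = cs.length u + cs.length z := hadd z hz
    have h2 : cs.length (u * v) = cs.length u + cs.length v := hadd v huPar
    have h3 := hw₀ (u * z)
    rw [← hw₀uv] at h2
    omega
  have hveq : v = w₀IJ := StExch.max_parabolic_unique cs huPar hw₀IJ hvmax hw₀IJmax
  set a := P J w₀IJ with ha
  have haMin : a ∈ cs.minReps J := (hP J w₀IJ).1
  have haPar : a⁻¹ * w₀IJ ∈ cs.parabolic J := (hP J w₀IJ).2
  have haK : a ∈ cs.parabolic K := by
    have h1 : a = w₀IJ * (a⁻¹ * w₀IJ)⁻¹ := by group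
    rw [h1]
    exact mul_mem hw₀IJ (inv_mem (hJK haPar))
  set b := P I a with hb
  have hbMin : b ∈ cs.minReps I := (hP I a).1
  have hbPar : b⁻¹ * a ∈ cs.parabolic I := (hP I a).2
  have hbK : b ∈ cs.parabolic K := by
    have h1 : b = a * (b⁻¹ * a)⁻¹ := by group
    rw [h1]
    exact mul_mem haK (inv_mem (hIK hbPar))
  have hstep1 : u * a = P J w₀ := by
    refine StExch.proj_char cs hP ?_ ?_
    · intro j hj
      have hjK : j ∈ K := Or.inr hj
      have hasj : a * cs.simple j ∈ cs.parabolic K :=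
        mul_mem haK (Subgroup.subset_closure ⟨j, hjK, rfl⟩)
      have h1 : cs.length (u * (a * cs.simple j))
          = cs.length u + cs.length (a * cs.simple j) := hadd _ hasj
      have h2 : cs.length (u * a) = cs.length u + cs.length a := hadd a haK
      have h3 := haMin j hj
      rw [show u * a * cs.simple j = u * (a * cs.simple j) by group]
      omega
    · have h1 : (u * a)⁻¹ * w₀ = a⁻¹ * v := by rw [hv]; group
      rw [h1, hveq]
      exact haPar
  have hstep2 : u * b = P I (u * a) := by
    refine StExch.proj_char cs hP ?_ ?_
    · intro j hj
      have hjK : j ∈ K := Or.inl hj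
      have hbsj : b * cs.simple j ∈ cs.parabolic K :=
        mul_mem hbK (Subgroup.subset_closure ⟨j, hjK, rfl⟩)
      have h1 : cs.length (u * (b * cs.simple j))
          = cs.length u + cs.length (b * cs.simple j) := hadd _ hbsj
      have h2 : cs.length (u * b) = cs.length u + cs.length b := hadd b hbK
      have h3 := hbMin j hj
      rw [show u * b * cs.simple j = u * (b * cs.simple j) by group]
      omega
    · have h1 : (u * b)⁻¹ * (u * a) = b⁻¹ * a := by group
      rw [h1]
      exact hbPar
  rw [← hstep1, ← hstep2]
end

section
/- Let (W,S) be a finite Coxeter system with longest element w₀ and I, J ⊆ S. Then P^I and P^J commute as functions on W if and only if P^I(P^J(w₀)) = P^J(P^I(w₀)). -/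
open CoxeterSystem

variable {B W : Type*} [Group W] {M : CoxeterMatrix B}

section Aux
open List
open scoped Classical
variable (cs : CoxeterSystem M W)
local prefix:100 "s" => cs.simple
local prefix:100 "π" => cs.wordProd
local prefix:100 "ℓ" => cs.length
local prefix:100 "ris" => cs.rightInvSeq

namespace Aux

lemma simp_conj_self (i : B) (t : W) : s i * (s i * t * s i) * s i = t := by
  have h := cs.simple_mul_simple_self i
  calc s i * (s i * t * s i) * s i = (s i * s i) * t * (s i * s i) := by group
  _ = t := by rw [h]; group

lemma conj_eq_simple_iff (i : B) (t : W) : (s i * t * s i = s i) ↔ (t = s i) := by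
  constructor
  · intro h
    have h2 := congrArg (fun x => s i * x * s i) h
    simp only [simp_conj_self] at h2
    rw [h2, cs.simple_mul_simple_self, one_mul]
  · rintro rfl; rw [cs.simple_mul_simple_self, one_mul]

/-- The Tits reflection-sign permutation for a simple generator. -/
noncomputable def permS (i : B) : Equiv.Perm (W × ZMod 2) :=
  Function.Involutive.toPerm
    (fun p => (s i * p.1 * s i, p.2 + if p.1 = s i then 1 else 0))
    (by
      rintro ⟨t, e⟩
      simp only [Prod.mk.injEq, simp_conj_self, conj_eq_simple_iff]
      refine ⟨trivial, ?_⟩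
      rcases eq_or_ne t (s i) with h | h <;>
        simp [h, add_assoc, CharTwo.add_self_eq_zero])

lemma permS_apply (i : B) (t : W) (e : ZMod 2) :
    permS cs i (t, e) = (s i * t * s i, e + if t = s i then 1 else 0) := rfl

end Aux

namespace Aux

lemma invol_pow_comm {G : Type*} [Group G] {a b : G} (hb : b * b = 1) (r : ℕ) :
    (a * b) ^ r * b = b * (b * a) ^ r := by
  induction r with
  | zero => simp
  | succ n ih =>
      calc (a * b) ^ (n + 1) * b = (a * b) ^ n * (a * (b * b)) := by
            rw [pow_succ]; simp [mul_assoc]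
      _ = (a * b) ^ n * a := by rw [hb, mul_one]
      _ = ((a * b) ^ n * b) * (b * a) := by
            simp only [mul_assoc]; rw [← mul_assoc b b, hb, one_mul]
      _ = b * ((b * a) ^ n * (b * a)) := by rw [ih, mul_assoc]
      _ = b * (b * a) ^ (n + 1) := by rw [← pow_succ]

lemma conj_pow_succ {G : Type*} [Group G] (p q t : G) (r : ℕ) :
    p ^ r * (p * t * q) * q ^ r = p ^ (r + 1) * t * q ^ (r + 1) := by
  rw [pow_succ, pow_succ']; simp [mul_assoc]

lemma eq_simple_mul_iff (j : B) (t x : W) : (t = s j * x) ↔ (s j * t = x) := by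
  constructor
  · rintro rfl; rw [← mul_assoc, cs.simple_mul_simple_self, one_mul]
  · rintro rfl; rw [← mul_assoc, cs.simple_mul_simple_self, one_mul]

lemma sum_double {Mo : Type*} [AddCommMonoid Mo] (f : ℕ → Mo) (m : ℕ) :
    ∑ r ∈ Finset.range m, (f (2 * r) + f (2 * r + 1)) = ∑ k ∈ Finset.range (2 * m), f k := by
  induction m with
  | zero => simp
  | succ n ih =>
      rw [Finset.sum_range_succ, ih, mul_add, mul_one, ← add_assoc,
        Finset.sum_range_succ, Finset.sum_range_succ]

lemma sum_range_add' {Mo : Type*} [AddCommMonoid Mo] (f : ℕ → Mo) (m n : ℕ) :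
    ∑ k ∈ Finset.range (m + n), f k
      = ∑ k ∈ Finset.range m, f k + ∑ k ∈ Finset.range n, f (m + k) := by
  induction n with
  | zero => simp
  | succ n ih => rw [← add_assoc, Finset.sum_range_succ, ih, Finset.sum_range_succ, add_assoc]

/-- The explicit formula for powers of `permS i * permS j`. -/
lemma permS_mul_pow (i j : B) (k : ℕ) (t : W) (e : ZMod 2) :
    ((permS cs i * permS cs j) ^ k) (t, e) =
      ((s i * s j) ^ k * t * (s j * s i) ^ k,
        e + ∑ r ∈ Finset.range k,
          ((if (s i * s j) ^ r * t * (s j * s i) ^ r = s j then 1 else 0)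
            + (if (s i * s j) ^ r * t * (s j * s i) ^ r = s j * s i * s j then (1 : ZMod 2)
                else 0))) := by
  induction k generalizing t e with
  | zero => simp
  | succ n ih =>
      have happ : ((permS cs i * permS cs j) ^ (n + 1)) (t, e)
          = ((permS cs i * permS cs j) ^ n) ((permS cs i * permS cs j) (t, e)) := by
        rw [pow_succ]; rfl
      have hstep : (permS cs i * permS cs j) (t, e)
          = (s i * s j * t * (s j * s i),
              e + ((if t = s j then 1 else 0)
                + (if t = s j * s i * s j then (1 : ZMod 2) else 0))) := by
        show permS cs i (permS cs j (t, e)) = _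
        rw [permS_apply, permS_apply]
        have h1 : s i * (s j * t * s j) * s i = s i * s j * t * (s j * s i) := by
          simp [mul_assoc]
        have h2 : (s j * t * s j = s i) ↔ (t = s j * s i * s j) := by
          constructor
          · intro h
            have h3 := congrArg (fun x => s j * x * s j) h
            simp only [simp_conj_self] at h3
            exact h3
          · rintro rfl
            calc s j * (s j * s i * s j) * s j
                = s j * (s j * (s i * (s j * s j))) := by simp [mul_assoc]
            _ = s i := by rw [cs.simple_mul_simple_self, mul_one, ← mul_assoc,
                  cs.simple_mul_simple_self, one_mul]
        rw [h1]
        congr 1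
        rw [if_congr h2 rfl rfl, add_assoc]
      rw [happ, hstep, ih, Prod.mk.injEq]
      refine ⟨conj_pow_succ _ _ _ _, ?_⟩
      simp only [conj_pow_succ]
      rw [Finset.sum_range_succ' (fun r =>
        (if (s i * s j) ^ r * t * (s j * s i) ^ r = s j then 1 else 0)
          + (if (s i * s j) ^ r * t * (s j * s i) ^ r = s j * s i * s j then (1 : ZMod 2) else 0))]
      simp only [pow_zero, one_mul, mul_one]
      ring

lemma permS_liftable : M.IsLiftable (permS cs) := by
  intro i j
  set p := s i * s j with hp
  have hm : p ^ M i j = 1 := cs.simple_mul_simple_pow i j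
  have hq : s j * s i = p⁻¹ := by
    rw [hp, mul_inv_rev, cs.inv_simple, cs.inv_simple]
  have hsj : s j * s j = 1 := cs.simple_mul_simple_self j
  refine Equiv.ext ?_
  rintro ⟨t, e⟩
  rw [Equiv.Perm.one_apply, permS_mul_pow, ← hp, hm]
  have hm' : (s j * s i) ^ M.M i j = 1 := cs.simple_mul_simple_pow' i j
  rw [hm', one_mul, mul_one, Prod.mk.injEq]
  refine ⟨rfl, ?_⟩
  have hqp : ∀ r : ℕ, (p ^ r)⁻¹ * s j = s j * p ^ r := by
    intro r
    have h1 : p ^ r * s j = s j * (p ^ r)⁻¹ := by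
      have h0 := invol_pow_comm (a := s i) (b := s j) hsj r
      rw [← hp] at h0
      rw [h0, hq, inv_pow]
    have h2 := congrArg (fun x => (p ^ r)⁻¹ * x * p ^ r) h1
    simpa [mul_assoc] using h2.symm
  have hinv : ∀ r : ℕ, (s j * s i) ^ r = (p ^ r)⁻¹ := by
    intro r; rw [hq, inv_pow]
  have hsjp : s j * s i * s j = s j * p := by rw [hp, mul_assoc]
  have cond1 : ∀ r : ℕ, (p ^ r * t * (s j * s i) ^ r = s j) ↔ (t = s j * p ^ (2 * r)) := by
    intro r
    have hr : (p ^ r)⁻¹ * (s j * p ^ r) = s j * p ^ (2 * r) := by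
      rw [← mul_assoc, hqp, mul_assoc, ← pow_add, two_mul]
    rw [hinv, mul_inv_eq_iff_eq_mul, ← hr, eq_comm, eq_inv_mul_iff_mul_eq, eq_comm]
  have cond2 : ∀ r : ℕ,
      (p ^ r * t * (s j * s i) ^ r = s j * s i * s j) ↔ (t = s j * p ^ (2 * r + 1)) := by
    intro r
    have hr : (p ^ r)⁻¹ * (s j * s i * s j * p ^ r) = s j * p ^ (2 * r + 1) := by
      have harith : r + (r + 1) = 2 * r + 1 := by omega
      rw [hsjp, mul_assoc (s j) p (p ^ r), ← pow_succ', ← mul_assoc, hqp, mul_assoc,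
        ← pow_add, harith]
    rw [hinv, mul_inv_eq_iff_eq_mul, ← hr, eq_comm, eq_inv_mul_iff_mul_eq, eq_comm]
  simp only [cond1, cond2]
  rw [sum_double (fun k => if t = s j * p ^ k then (1 : ZMod 2) else 0) (M i j), two_mul,
    sum_range_add' (fun k => if t = s j * p ^ k then (1 : ZMod 2) else 0) (M i j) (M i j)]
  simp only [pow_add, hm, one_mul]
  rw [CharTwo.add_self_eq_zero, add_zero]

end Aux
namespace Aux

/-- The Tits sign representation. -/
noncomputable def toPermHom : W →* Equiv.Perm (W × ZMod 2) :=
  cs.lift ⟨permS cs, permS_liftable cs⟩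

lemma toPermHom_simple (i : B) : toPermHom cs (s i) = permS cs i :=
  cs.lift_apply_simple (permS_liftable cs) i

/-- `eta cs w t` is `1` iff `t` occurs an odd number of times in the right inversion
sequence of any word for `w`. -/
noncomputable def eta (w t : W) : ZMod 2 := ((toPermHom cs w) (t, 0)).2

lemma toPermHom_apply (w : W) : ∀ (t : W) (e : ZMod 2),
    toPermHom cs w (t, e) = (w * t * w⁻¹, e + eta cs w t) := by
  induction w using cs.simple_induction_left with
  | one => intro t e; simp [eta, Equiv.Perm.one_apply]
  | mul_simple_left w' i ih =>
      have key : ∀ (t : W) (e : ZMod 2), toPermHom cs (s i * w') (t, e)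
          = (s i * (w' * t * w'⁻¹) * s i,
              e + (eta cs w' t + if w' * t * w'⁻¹ = s i then 1 else 0)) := by
        intro t e
        rw [map_mul, Equiv.Perm.mul_apply, ih t e, toPermHom_simple, permS_apply, add_assoc]
      intro t e
      rw [key t e]
      have h2 : eta cs (s i * w') t
          = eta cs w' t + if w' * t * w'⁻¹ = s i then 1 else 0 := by
        have h3 := key t 0
        simp only [eta, h3, zero_add]
      rw [h2, Prod.mk.injEq]
      refine ⟨?_, rfl⟩
      rw [mul_inv_rev, cs.inv_simple]
      simp [mul_assoc]

lemma eta_one (t : W) : eta cs 1 t = 0 := by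
  simp [eta, Equiv.Perm.one_apply]

lemma eta_mul (u v t : W) : eta cs (u * v) t = eta cs v t + eta cs u (v * t * v⁻¹) := by
  have h : toPermHom cs (u * v) (t, 0) = toPermHom cs u (toPermHom cs v (t, 0)) := by
    rw [map_mul, Equiv.Perm.mul_apply]
  have h2 : (toPermHom cs (u * v) (t, 0)).2 = eta cs (u * v) t := rfl
  rw [toPermHom_apply cs v t 0, toPermHom_apply cs u] at h
  rw [← h2, h, zero_add]

lemma eta_simple (i : B) (t : W) : eta cs (s i) t = if t = s i then 1 else 0 := by
  simp [eta, toPermHom_simple, permS_apply]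

lemma eta_wordProd (ω : List B) (t : W) :
    eta cs (π ω) t = ((ris ω).count t : ZMod 2) := by
  induction ω with
  | nil => simp [eta_one]
  | cons i τ ih =>
      rw [cs.wordProd_cons, eta_mul, ih, eta_simple]
      have hris : ris (i :: τ) = ((π τ)⁻¹ * (s i) * (π τ)) :: ris τ := rfl
      rw [hris, List.count_cons]
      have hcond : (π τ * t * (π τ)⁻¹ = s i) ↔ (t = (π τ)⁻¹ * s i * π τ) := by
        constructor
        · intro h; rw [← h]; group
        · intro h; rw [h]; group
      rw [if_congr hcond rfl rfl, Nat.cast_add]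
      congr 1
      rcases eq_or_ne t ((π τ)⁻¹ * s i * π τ) with h | h
      · simp [h]
      · simp [beq_iff_eq, Ne.symm h]; exact h

lemma eta_refl_self {t : W} (ht : cs.IsReflection t) : eta cs t t = 1 := by
  obtain ⟨u, i, rfl⟩ := ht
  set T := u * s i * u⁻¹ with hT
  nth_rewrite 1 [show T = u * (s i * u⁻¹) by rw [hT, mul_assoc]]
  rw [eta_mul]
  have c1 : s i * u⁻¹ * T * (s i * u⁻¹)⁻¹ = s i := by rw [hT]; group
  rw [c1]
  rw [eta_mul cs (s i) u⁻¹ T]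
  have c2 : u⁻¹ * T * u⁻¹⁻¹ = s i := by rw [hT]; group
  rw [c2, eta_simple, if_pos rfl]
  have h5 := eta_mul cs u⁻¹ u (s i)
  rw [inv_mul_cancel, eta_one, ← hT] at h5
  have hre : eta cs u⁻¹ T + 1 + eta cs u (s i) = (eta cs u (s i) + eta cs u⁻¹ T) + 1 := by
    ring
  rw [hre, ← h5, zero_add]

/-- `eta` detects right inversions. -/
lemma lt_of_eta_eq_one {w t : W} (h : eta cs w t = 1) : ℓ (w * t) < ℓ w := by
  obtain ⟨ω, hred, rfl⟩ := cs.exists_reduced_word' w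
  rw [eta_wordProd] at h
  have hmem : t ∈ ris ω := by
    rw [← List.count_pos_iff, Nat.pos_iff_ne_zero]
    intro hc
    rw [hc] at h; simp at h
  exact (cs.isRightInversion_of_mem_rightInvSeq hred hmem).2

lemma eta_mul_refl {w t : W} (ht : cs.IsReflection t) :
    eta cs (w * t) t = eta cs w t + 1 := by
  rw [eta_mul]
  have h1 : t * t * t⁻¹ = t := by rw [ht.mul_self, one_mul, ht.inv]
  rw [h1, eta_refl_self cs ht, add_comm]

lemma eta_eq_one_of_inversion {w t : W} (ht : cs.IsRightInversion w t) : eta cs w t = 1 := by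
  by_contra h
  have h0 : eta cs w t = 0 := by
    have h01 : ∀ x : ZMod 2, x = 0 ∨ x = 1 := by decide
    rcases h01 (eta cs w t) with hv | hv
    · exact hv
    · exact absurd hv h
  have h1 : eta cs (w * t) t = 1 := by rw [eta_mul_refl cs ht.1, h0, zero_add]
  have h2 := lt_of_eta_eq_one cs h1
  rw [mul_assoc, ht.1.mul_self, mul_one] at h2
  exact absurd ht.2 (by omega)

lemma eta_eq_one_iff {w t : W} (ht : cs.IsReflection t) :
    eta cs w t = 1 ↔ cs.IsRightInversion w t := by
  constructor
  · intro h; exact ⟨ht, lt_of_eta_eq_one cs h⟩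
  · exact eta_eq_one_of_inversion cs

/-- Strong exchange. -/
lemma mem_rightInvSeq_of_inversion {ω : List B} (hred : cs.IsReduced ω) {t : W}
    (h : cs.IsRightInversion (π ω) t) : t ∈ ris ω := by
  have h1 := eta_eq_one_of_inversion cs h
  rw [eta_wordProd] at h1
  rw [← List.count_pos_iff, Nat.pos_iff_ne_zero]
  intro hc
  rw [hc] at h1; simp at h1

end Aux
namespace Aux

lemma length_eq_ncard_inversions (w : W) :
    ℓ w = Set.ncard {t | cs.IsRightInversion w t} := by
  obtain ⟨ω, hred, rfl⟩ := cs.exists_reduced_word' w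
  have hset : {t | cs.IsRightInversion (π ω) t} = ↑(ris ω).toFinset := by
    ext t
    simp only [Set.mem_setOf_eq, Finset.coe_sort_coe, List.coe_toFinset, Set.mem_setOf_eq,
      List.mem_toFinset]
    constructor
    · exact mem_rightInvSeq_of_inversion cs hred
    · exact cs.isRightInversion_of_mem_rightInvSeq hred
  rw [hset, Set.ncard_coe_finset, List.toFinset_card_of_nodup hred.nodup_rightInvSeq,
    cs.length_rightInvSeq, hred]

lemma eta_eq_eta_of_inversions {x y : W}
    (h : ∀ t, cs.IsRightInversion x t ↔ cs.IsRightInversion y t)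
    {r : W} (hr : cs.IsReflection r) : eta cs x r = eta cs y r := by
  have h01 : ∀ z : ZMod 2, z = 0 ∨ z = 1 := by decide
  rcases h01 (eta cs x r) with hx | hx <;> rcases h01 (eta cs y r) with hy | hy <;>
    rw [hx, hy]
  · exfalso
    have := (eta_eq_one_iff cs hr).mp hy
    rw [← h r, ← eta_eq_one_iff cs hr, hx] at this
    simp at this
  · exfalso
    have := (eta_eq_one_iff cs hr).mp hx
    rw [h r, ← eta_eq_one_iff cs hr, hy] at this
    simp at this

lemma eq_of_inversions_eq_aux (n : ℕ) : ∀ x y : W, ℓ x ≤ n →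
    (∀ t, cs.IsRightInversion x t ↔ cs.IsRightInversion y t) → x = y := by
  induction n with
  | zero =>
      intro x y hx h
      have hx1 : x = 1 := by
        rw [← cs.length_eq_zero_iff]; omega
      subst hx1
      by_contra hy
      obtain ⟨i, hi⟩ := cs.exists_rightDescent_of_ne_one (fun hh => hy hh.symm)
      have : cs.IsRightInversion 1 (s i) := (h (s i)).mpr ⟨cs.isReflection_simple i, hi⟩
      have h2 := this.2
      simp only [cs.length_one, one_mul] at h2
      omega
  | succ n ih =>
      intro x y hx h
      rcases eq_or_ne x 1 with rfl | hx1
      · by_contra hy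
        obtain ⟨i, hi⟩ := cs.exists_rightDescent_of_ne_one (fun hh => hy hh.symm)
        have : cs.IsRightInversion 1 (s i) := (h (s i)).mpr ⟨cs.isReflection_simple i, hi⟩
        have h2 := this.2
        simp only [cs.length_one, one_mul] at h2
        omega
      · obtain ⟨i, hi⟩ := cs.exists_rightDescent_of_ne_one hx1
        have hyi : cs.IsRightDescent y i :=
          ((h (s i)).mp ⟨cs.isReflection_simple i, hi⟩).2
        have hstep : ∀ t, cs.IsRightInversion (x * s i) t ↔ cs.IsRightInversion (y * s i) t := by
          intro t
          rcases Classical.em (cs.IsReflection t) with hrt | hrt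
          · have hetaeq : eta cs (x * s i) t = eta cs (y * s i) t := by
              rw [eta_mul, eta_mul]
              congr 1
              exact eta_eq_eta_of_inversions cs h (hrt.conj (s i))
            constructor
            · intro hin
              rw [← eta_eq_one_iff cs hrt] at hin ⊢
              rw [← hetaeq]; exact hin
            · intro hin
              rw [← eta_eq_one_iff cs hrt] at hin ⊢
              rw [hetaeq]; exact hin
          · constructor
            · intro hin; exact absurd hin.1 hrt
            · intro hin; exact absurd hin.1 hrt
        have hlen : ℓ (x * s i) ≤ n := by
          have := hi
          unfold CoxeterSystem.IsRightDescent at this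
          omega
        have := ih (x * s i) (y * s i) hlen hstep
        have h2 := congrArg (fun z => z * s i) this
        simpa only [cs.simple_mul_simple_cancel_right] using h2

lemma eq_of_inversions_eq {x y : W}
    (h : ∀ t, cs.IsRightInversion x t ↔ cs.IsRightInversion y t) : x = y :=
  eq_of_inversions_eq_aux cs (ℓ x) x y le_rfl h

section W0
variable [Finite W]

lemma inversion_w₀ (w₀ : W) (hw₀ : ∀ u : W, ℓ u ≤ ℓ w₀) {t : W} (ht : cs.IsReflection t) : cs.IsRightInversion w₀ t := by
  refine ⟨ht, ?_⟩
  have h1 := ht.length_mul_left_ne w₀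
  have h2 := hw₀ (w₀ * t)
  omega

lemma inversions_w₀ (w₀ : W) (hw₀ : ∀ u : W, ℓ u ≤ ℓ w₀) : {t | cs.IsRightInversion w₀ t} = {t | cs.IsReflection t} := by
  ext t
  exact ⟨fun h => h.1, fun h => inversion_w₀ cs w₀ hw₀ h⟩

lemma eq_w₀_of_length_eq (w₀ : W) (hw₀ : ∀ u : W, ℓ u ≤ ℓ w₀) {y : W} (hy : ℓ y = ℓ w₀) : y = w₀ := by
  apply eq_of_inversions_eq cs
  intro t
  constructor
  · intro h
    exact inversion_w₀ cs w₀ hw₀ h.1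
  · intro h
    refine ⟨h.1, ?_⟩
    have h1 := h.1.length_mul_left_ne y
    have h2 := hw₀ (y * t)
    omega

lemma length_w₀_mul (w₀ : W) (hw₀ : ∀ u : W, ℓ u ≤ ℓ w₀) (v : W) : ℓ (w₀ * v) + ℓ v = ℓ w₀ := by
  have hTfin : {t | cs.IsReflection t}.Finite := Set.toFinite _
  have hsub : {t | cs.IsRightInversion v t} ⊆ {t | cs.IsReflection t} := fun t h => h.1
  have hset : {t | cs.IsRightInversion (w₀ * v) t}
      = {t | cs.IsReflection t} \ {t | cs.IsRightInversion v t} := by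
    ext t
    simp only [Set.mem_setOf_eq, Set.mem_diff]
    constructor
    · intro h
      refine ⟨h.1, fun hin => ?_⟩
      have he := (eta_eq_one_iff cs h.1).mpr h
      rw [eta_mul, (eta_eq_one_iff cs (h.1.conj v)).mpr (inversion_w₀ cs w₀ hw₀ (h.1.conj v)),
        (eta_eq_one_iff cs h.1).mpr hin] at he
      simp at he
    · rintro ⟨hrt, hnin⟩
      rw [← eta_eq_one_iff cs hrt]
      rw [eta_mul, (eta_eq_one_iff cs (hrt.conj v)).mpr (inversion_w₀ cs w₀ hw₀ (hrt.conj v))]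
      have h01 : ∀ z : ZMod 2, z = 0 ∨ z = 1 := by decide
      rcases h01 (eta cs v t) with hv | hv
      · rw [hv]; rfl
      · exact absurd ((eta_eq_one_iff cs hrt).mp hv) hnin
  have hcard : ℓ (w₀ * v) = {t | cs.IsReflection t}.ncard - ℓ v := by
    rw [length_eq_ncard_inversions cs (w₀ * v), hset,
      Set.ncard_diff hsub (Set.toFinite _), ← length_eq_ncard_inversions]
  have hw0card : ℓ w₀ = {t | cs.IsReflection t}.ncard := by
    rw [length_eq_ncard_inversions cs w₀, inversions_w₀ cs w₀ hw₀]
  have hle : ℓ v ≤ {t | cs.IsReflection t}.ncard := by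
    rw [length_eq_ncard_inversions cs v]
    exact Set.ncard_le_ncard hsub hTfin
  omega

lemma exists_ascent (w₀ : W) (hw₀ : ∀ u : W, ℓ u ≤ ℓ w₀) {w : W} (hw : ℓ w < ℓ w₀) : ∃ i : B, ℓ (s i * w) = ℓ w + 1 := by
  have hz := length_w₀_mul cs w₀ hw₀ w⁻¹
  rw [cs.length_inv] at hz
  obtain ⟨β, hβlen, hβ⟩ := cs.exists_reduced_word (w₀ * w⁻¹)
  have hβlen : β.length = ℓ (w₀ * w⁻¹) := by rw [hβ]; exact (hβlen : ℓ (π β) = β.length).symm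
  obtain ⟨α, hαlen, hα⟩ := cs.exists_reduced_word w
  have hαlen : α.length = ℓ w := by rw [hα]; exact (hαlen : ℓ (π α) = α.length).symm
  have hfull : π (β ++ α) = w₀ := by
    rw [cs.wordProd_append, ← hβ, ← hα]
    group
  have hfullred : cs.IsReduced (β ++ α) := by
    unfold CoxeterSystem.IsReduced
    rw [hfull, List.length_append, hβlen, hαlen]
    omega
  have hβne : β ≠ [] := by
    intro hnil
    rw [hnil] at hβlen
    simp at hβlen
    omega
  set i := β.getLast hβne with hi
  set β' := β.dropLast with hβ'
  have hβeq : β' ++ [i] = β := List.dropLast_append_getLast hβne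
  have hdrop : (β ++ α).drop β'.length = [i] ++ α := by
    rw [← hβeq, List.append_assoc, List.drop_left]
  have hred2 : cs.IsReduced ([i] ++ α) := by
    have h3 := hfullred.drop β'.length
    rwa [hdrop] at h3
  refine ⟨i, ?_⟩
  have h4 : ℓ (π (i :: α)) = α.length + 1 := by
    have := hred2
    unfold CoxeterSystem.IsReduced at this
    simpa using this
  rw [cs.wordProd_cons, ← hα] at h4
  omega

end W0
end Aux
namespace Aux

lemma mem_parabolic_of_word {J : Set B} {ω : List B} (hω : ∀ i ∈ ω, i ∈ J) :
    π ω ∈ cs.parabolic J := by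
  induction ω with
  | nil => simp [one_mem]
  | cons i τ ih =>
      rw [cs.wordProd_cons]
      exact mul_mem
        (Subgroup.subset_closure (Set.mem_image_of_mem _ (hω i (List.mem_cons_self))))
        (ih fun x hx => hω x (List.mem_cons_of_mem _ hx))

lemma simple_mem_parabolic {J : Set B} {j : B} (hj : j ∈ J) : s j ∈ cs.parabolic J :=
  Subgroup.subset_closure (Set.mem_image_of_mem _ hj)

lemma exists_word_of_mem_parabolic {J : Set B} {w : W} (hw : w ∈ cs.parabolic J) :
    ∃ ω : List B, (∀ i ∈ ω, i ∈ J) ∧ w = π ω := by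
  induction hw using Subgroup.closure_induction with
  | mem x hx =>
      obtain ⟨i, hi, rfl⟩ := hx
      exact ⟨[i], by simpa using hi, by simp⟩
  | one => exact ⟨[], by simp, by simp⟩
  | mul x y hx hy ihx ihy =>
      obtain ⟨ω₁, h1, rfl⟩ := ihx
      obtain ⟨ω₂, h2, rfl⟩ := ihy
      exact ⟨ω₁ ++ ω₂, by
        intro i hi
        rcases List.mem_append.mp hi with h | h
        exacts [h1 i h, h2 i h], (cs.wordProd_append ω₁ ω₂).symm⟩
  | inv x hx ihx =>
      obtain ⟨ω, h1, rfl⟩ := ihx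
      exact ⟨ω.reverse, fun i hi => h1 i (List.mem_reverse.mp hi),
        (cs.wordProd_reverse ω).symm⟩

/-- Exchange property for simple reflections. -/
lemma exchange_simple {ω : List B} (hred : cs.IsReduced ω) {j : B}
    (h : ℓ (π ω * s j) < ℓ (π ω)) :
    ∃ k, k < ω.length ∧ π ω * s j = π (ω.eraseIdx k) := by
  have hmem : s j ∈ ris ω :=
    mem_rightInvSeq_of_inversion cs hred ⟨cs.isReflection_simple j, h⟩
  obtain ⟨k, hk, hEq⟩ := List.getElem_of_mem hmem
  have hk' : k < ω.length := by rwa [cs.length_rightInvSeq] at hk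
  refine ⟨k, hk', ?_⟩
  have := cs.wordProd_mul_getD_rightInvSeq ω k
  rwa [List.getD_eq_getElem _ _ hk, hEq] at this

lemma word_shorten {J : Set B} : ∀ n (ω : List B), ω.length ≤ n → (∀ i ∈ ω, i ∈ J) →
    ∃ ω' : List B, (∀ i ∈ ω', i ∈ J) ∧ cs.IsReduced ω' ∧ π ω' = π ω := by
  intro n
  induction n with
  | zero =>
      intro ω hlen _
      have : ω = [] := by
        cases ω with
        | nil => rfl
        | cons a l => simp at hlen
      exact ⟨[], by simp, by simp [CoxeterSystem.IsReduced], by rw [this]⟩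
  | succ n ih =>
      intro ω hlen hJ
      rcases Classical.em (cs.IsReduced ω) with hred | hred
      · exact ⟨ω, hJ, hred, rfl⟩
      · have hne : ω ≠ [] := by
          intro h; subst h; exact hred (by simp [CoxeterSystem.IsReduced])
        have hex : ∃ k, ¬ cs.IsReduced (ω.take (k + 1)) := by
          refine ⟨ω.length - 1, ?_⟩
          have hlen1 : 1 ≤ ω.length := by
            cases ω with
            | nil => exact absurd rfl hne
            | cons a l => simp
          rw [show ω.length - 1 + 1 = ω.length from by omega, List.take_length]
          exact hred
        set k := Nat.find hex with hkdef
        have hknot : ¬ cs.IsReduced (ω.take (k + 1)) := Nat.find_spec hex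
        have hkred : cs.IsReduced (ω.take k) := by
          rcases Nat.eq_zero_or_pos k with h0 | h0
          · rw [h0]; simp [CoxeterSystem.IsReduced]
          · have := Nat.find_min hex (m := k - 1) (by omega)
            rw [show k - 1 + 1 = k from by omega] at this
            exact not_not.mp this
        have hklt : k < ω.length := by
          rcases lt_or_ge k ω.length with h | h
          · exact h
          · exfalso
            rw [List.take_of_length_le (by omega)] at hknot
            exact hknot (by rwa [List.take_of_length_le h] at hkred)
        have htake : ω.take (k + 1) = ω.take k ++ [ω[k]] := by
          rw [List.take_succ, List.getElem?_eq_getElem hklt]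
          rfl
        have hlentake : (ω.take k).length = k := by
          rw [List.length_take]; omega
        have hx : ℓ (π (ω.take k)) = k := by rw [hkred, hlentake]
        have hdesc : ℓ (π (ω.take k) * s (ω[k])) < ℓ (π (ω.take k)) := by
          rcases cs.length_mul_simple (π (ω.take k)) (ω[k]) with h | h
          · exfalso
            apply hknot
            unfold CoxeterSystem.IsReduced
            rw [htake, cs.wordProd_append, List.length_append, hlentake]
            simpa [hx] using h
          · omega
        obtain ⟨m, hm, hmeq⟩ := exchange_simple cs hkred hdesc
        set ω' : List B := ((ω.take k).eraseIdx m) ++ ω.drop (k + 1) with hω'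
        have hω'J : ∀ i ∈ ω', i ∈ J := by
          intro i hi
          rcases List.mem_append.mp hi with h | h
          · exact hJ i (List.take_subset _ _ ((List.eraseIdx_sublist _ m).subset h))
          · exact hJ i (List.drop_subset _ _ h)
        have hω'prod : π ω' = π ω := by
          rw [hω', cs.wordProd_append, ← hmeq]
          have : π ω = π (ω.take (k + 1)) * π (ω.drop (k + 1)) := by
            rw [← cs.wordProd_append, List.take_append_drop]
          rw [this, htake, cs.wordProd_append, cs.wordProd_singleton]
        have hω'len : ω'.length ≤ n := by
          rw [hω', List.length_append, List.length_eraseIdx, hlentake, if_pos (by omega),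
            List.length_drop]
          omega
        obtain ⟨ω'', h1, h2, h3⟩ := ih ω' hω'len hω'J
        exact ⟨ω'', h1, h2, by rw [h3, hω'prod]⟩

lemma exists_reduced_word_parabolic {J : Set B} {w : W} (hw : w ∈ cs.parabolic J) :
    ∃ ω : List B, (∀ i ∈ ω, i ∈ J) ∧ cs.IsReduced ω ∧ w = π ω := by
  obtain ⟨ω, hJ, rfl⟩ := exists_word_of_mem_parabolic cs hw
  obtain ⟨ω', h1, h2, h3⟩ := word_shorten cs ω.length ω le_rfl hJ
  exact ⟨ω', h1, h2, h3.symm⟩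

lemma exists_rightDescent_parabolic {J : Set B} {v : W} (hv : v ∈ cs.parabolic J)
    (hv1 : v ≠ 1) :
    ∃ j ∈ J, (ℓ (v * s j) + 1 = ℓ v ∧ v * s j ∈ cs.parabolic J) := by
  obtain ⟨ω, hJ, hred, rfl⟩ := exists_reduced_word_parabolic cs hv
  have hne : ω ≠ [] := by
    intro h; subst h; exact hv1 (by simp)
  set j := ω.getLast hne with hj
  set β := ω.dropLast with hβ
  have hβeq : β ++ [j] = ω := List.dropLast_append_getLast hne
  refine ⟨j, hJ j (List.getLast_mem hne), ?_, ?_⟩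
  · have h1 : π ω * s j = π β := by
      rw [← hβeq, cs.wordProd_append, cs.wordProd_singleton, mul_assoc,
        cs.simple_mul_simple_self, mul_one]
    rw [h1]
    have h2 : ℓ (π β) ≤ β.length := cs.length_wordProd_le β
    have h3 : β.length + 1 = ω.length := by
      rw [← hβeq, List.length_append]; simp
    have h4 : ℓ (π ω) = ω.length := hred
    have h5 : ℓ (π ω) ≤ ℓ (π β) + 1 := by
      have := cs.length_mul_le (π β) (s j)
      rw [← hβeq, cs.wordProd_append, cs.wordProd_singleton] at h4 ⊢
      calc ℓ (π β * s j) ≤ ℓ (π β) + ℓ (s j) := cs.length_mul_le _ _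
      _ = ℓ (π β) + 1 := by rw [cs.length_simple]
    omega
  · have h1 : π ω * s j = π β := by
      rw [← hβeq, cs.wordProd_append, cs.wordProd_singleton, mul_assoc,
        cs.simple_mul_simple_self, mul_one]
    rw [h1]
    exact mem_parabolic_of_word cs fun i hi => hJ i (by rw [← hβeq]; exact List.mem_append_left _ hi)

end Aux
namespace Aux

lemma coset_trans {J : Set B} {u x w : W} (hu : u⁻¹ * w ∈ cs.parabolic J)
    (hx : x⁻¹ * w ∈ cs.parabolic J) : u⁻¹ * x ∈ cs.parabolic J := by
  have : u⁻¹ * x = (u⁻¹ * w) * (x⁻¹ * w)⁻¹ := by group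
  rw [this]
  exact mul_mem hu (inv_mem hx)

lemma exists_min_coset (J : Set B) (w : W) :
    ∃ u : W, u⁻¹ * w ∈ cs.parabolic J ∧
      ∀ x : W, x⁻¹ * w ∈ cs.parabolic J → ℓ u ≤ ℓ x := by
  set S : Set ℕ := {n | ∃ x : W, x⁻¹ * w ∈ cs.parabolic J ∧ ℓ x = n} with hS
  have hne : S.Nonempty := ⟨ℓ w, w, by simp [one_mem], rfl⟩
  obtain ⟨u, hu, hlen⟩ := Nat.sInf_mem hne
  exact ⟨u, hu, fun x hx => hlen ▸ Nat.sInf_le ⟨x, hx, rfl⟩⟩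

/-- Length additivity for the minimal coset representative. -/
lemma min_coset_additive {J : Set B} {w u : W} (hu : u⁻¹ * w ∈ cs.parabolic J)
    (hmin : ∀ x : W, x⁻¹ * w ∈ cs.parabolic J → ℓ u ≤ ℓ x) :
    ∀ v ∈ cs.parabolic J, ℓ (u * v) = ℓ u + ℓ v := by
  have key : ∀ n, ∀ v ∈ cs.parabolic J, ℓ v ≤ n → ℓ (u * v) = ℓ u + ℓ v := by
    intro n
    induction n with
    | zero =>
        intro v hv hlen
        have : v = 1 := by rw [← cs.length_eq_zero_iff]; omega
        subst this; simp
    | succ n ih =>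
        intro v hv hlen
        rcases eq_or_ne v 1 with rfl | hv1
        · simp
        obtain ⟨j, hjJ, hvj, hvmem⟩ := exists_rightDescent_parabolic cs hv hv1
        set v' := v * s j with hv'def
        have hv'back : v' * s j = v := by
          rw [hv'def, mul_assoc, cs.simple_mul_simple_self, mul_one]
        have ihv : ℓ (u * v') = ℓ u + ℓ v' := ih v' hvmem (by omega)
        have hkey : ℓ (u * v' * s j) = ℓ (u * v') + 1 := by
          by_contra hcon
          have hlt : ℓ (u * v' * s j) < ℓ (u * v') := by
            rcases cs.length_mul_simple (u * v') j with h | h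
            · exact absurd h hcon
            · omega
          obtain ⟨α, hαlen, hα⟩ := cs.exists_reduced_word u
          have hαlen : α.length = ℓ u := by rw [hα]; exact (hαlen : ℓ (π α) = α.length).symm
          obtain ⟨ω', hω'J, hω'red, hω'⟩ := exists_reduced_word_parabolic cs hvmem
          have hcat : π (α ++ ω') = u * v' := by
            rw [cs.wordProd_append, ← hα, ← hω']
          have hcatred : cs.IsReduced (α ++ ω') := by
            unfold CoxeterSystem.IsReduced
            rw [hcat, List.length_append, ihv, hαlen]
            have : ℓ v' = ω'.length := by rw [hω']; exact hω'red
            omega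
          have hlt2 : ℓ (π (α ++ ω') * s j) < ℓ (π (α ++ ω')) := by rwa [hcat]
          obtain ⟨k, hk, hkeq⟩ := exchange_simple cs hcatred hlt2
          rw [hcat] at hkeq
          rcases lt_or_ge k α.length with hkα | hkα
          · rw [List.eraseIdx_append_of_lt_length hkα, cs.wordProd_append, ← hω'] at hkeq
            set x := π (α.eraseIdx k) with hx
            have hxw : x⁻¹ * w ∈ cs.parabolic J := by
              have hxu : x = u * (v' * s j * v'⁻¹) := by
                have h1 : x * v' = u * v' * s j := hkeq.symm
                have := congrArg (fun z => z * v'⁻¹) h1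
                simp only [mul_assoc, mul_inv_cancel, mul_one] at this
                rw [this]
                group
              rw [hxu]
              have hc : v' * s j * v'⁻¹ ∈ cs.parabolic J :=
                mul_mem (mul_mem hvmem (simple_mem_parabolic cs hjJ)) (inv_mem hvmem)
              have : (u * (v' * s j * v'⁻¹))⁻¹ * w
                  = (v' * s j * v'⁻¹)⁻¹ * (u⁻¹ * w) := by group
              rw [this]
              exact mul_mem (inv_mem hc) hu
            have hxlen : ℓ x ≤ α.length - 1 := by
              have := cs.length_wordProd_le (α.eraseIdx k)
              rwa [List.length_eraseIdx, if_pos hkα] at this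
            have := hmin x hxw
            omega
          · rw [List.eraseIdx_append_of_length_le hkα, cs.wordProd_append, ← hα] at hkeq
            rw [mul_assoc] at hkeq
            have hcancel : v' * s j = π (ω'.eraseIdx (k - α.length)) :=
              mul_left_cancel hkeq
            have hlenv : ℓ (v' * s j) ≤ ω'.length - 1 := by
              have h1 := cs.length_wordProd_le (ω'.eraseIdx (k - α.length))
              rw [← hcancel] at h1
              rw [List.length_eraseIdx] at h1
              have hklt : k - α.length < ω'.length := by
                rw [List.length_append] at hk
                omega
              rwa [if_pos hklt] at h1
            have hω'len : ℓ v' = ω'.length := by rw [hω']; exact hω'red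
            rw [hv'back] at hlenv
            omega
        rw [← hv'back, ← mul_assoc, hkey, ihv, hv'back]
        omega
  exact fun v hv => key (ℓ v) v hv le_rfl

lemma min_coset_minRep {J : Set B} {w u : W} (hu : u⁻¹ * w ∈ cs.parabolic J)
    (hmin : ∀ x : W, x⁻¹ * w ∈ cs.parabolic J → ℓ u ≤ ℓ x) : u ∈ cs.minReps J := by
  intro j hj
  have := min_coset_additive cs hu hmin (s j) (simple_mem_parabolic cs hj)
  rw [this, cs.length_simple]
  omega

lemma minRep_eq_min {J : Set B} {w x u : W} (hx : x ∈ cs.minReps J)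
    (hxw : x⁻¹ * w ∈ cs.parabolic J) (hu : u⁻¹ * w ∈ cs.parabolic J)
    (hmin : ∀ y : W, y⁻¹ * w ∈ cs.parabolic J → ℓ u ≤ ℓ y) : x = u := by
  have hv : u⁻¹ * x ∈ cs.parabolic J := coset_trans cs hu hxw
  have hxu : x = u * (u⁻¹ * x) := by group
  rcases eq_or_ne (u⁻¹ * x) 1 with h1 | h1
  · rw [hxu, h1, mul_one]
  exfalso
  obtain ⟨j, hjJ, hdesc, hmem⟩ := exists_rightDescent_parabolic cs hv h1
  have hadd := min_coset_additive cs hu hmin (u⁻¹ * x) hv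
  have hadd2 := min_coset_additive cs hu hmin ((u⁻¹ * x) * s j) hmem
  have hxj : x * s j = u * (u⁻¹ * x * s j) := by group
  have h2 : ℓ x = ℓ u + ℓ (u⁻¹ * x) := by
    conv_lhs => rw [hxu]
    exact hadd
  have h3 : ℓ (x * s j) = ℓ u + ℓ (u⁻¹ * x * s j) := by
    rw [hxj]; exact hadd2
  have hlt : ℓ (x * s j) < ℓ x := by omega
  exact absurd (hx j hjJ) (by omega)

/-- Uniqueness of the minimal coset representative. -/
lemma minRep_unique {J : Set B} {w x y : W} (hx : x ∈ cs.minReps J)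
    (hxw : x⁻¹ * w ∈ cs.parabolic J) (hy : y ∈ cs.minReps J)
    (hyw : y⁻¹ * w ∈ cs.parabolic J) : x = y := by
  obtain ⟨u, hu, hmin⟩ := exists_min_coset cs J w
  rw [minRep_eq_min cs hx hxw hu hmin, minRep_eq_min cs hy hyw hu hmin]

/-- Length additivity for any minimal coset representative. -/
lemma minRep_additive {J : Set B} {w x : W} (hx : x ∈ cs.minReps J)
    (hxw : x⁻¹ * w ∈ cs.parabolic J) :
    ∀ v ∈ cs.parabolic J, ℓ (x * v) = ℓ x + ℓ v := by
  obtain ⟨u, hu, hmin⟩ := exists_min_coset cs J w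
  rw [minRep_eq_min cs hx hxw hu hmin]
  exact min_coset_additive cs hu hmin

/-- The projection is a prefix: lengths add. -/
lemma minRep_prefix {J : Set B} {w x : W} (hx : x ∈ cs.minReps J)
    (hxw : x⁻¹ * w ∈ cs.parabolic J) : ℓ w = ℓ x + ℓ (x⁻¹ * w) := by
  have := minRep_additive cs hx hxw (x⁻¹ * w) hxw
  rwa [show x * (x⁻¹ * w) = w from by group] at this

end Aux
namespace Aux

/-- Deodhar's lemma: the projection of `s i * w` is the projection of `w` or `s i` times it. -/
lemma deodhar {J : Set B} {w x y : W} (i : B) (hx : x ∈ cs.minReps J)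
    (hxw : x⁻¹ * w ∈ cs.parabolic J) (hy : y ∈ cs.minReps J)
    (hyw : y⁻¹ * (s i * w) ∈ cs.parabolic J) : y = x ∨ y = s i * x := by
  have hcoset : y⁻¹ * (s i * x) ∈ cs.parabolic J := by
    have h0 : y⁻¹ * (s i * x) = (y⁻¹ * (s i * w)) * (x⁻¹ * w)⁻¹ := by group
    rw [h0]; exact mul_mem hyw (inv_mem hxw)
  have hsixcoset : (s i * x)⁻¹ * (s i * w) ∈ cs.parabolic J := by
    have h0 : (s i * x)⁻¹ * (s i * w) = x⁻¹ * w := by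
      rw [mul_inv_rev, cs.inv_simple, mul_assoc, cs.simple_mul_simple_cancel_left]
    rw [h0]; exact hxw
  rcases cs.length_simple_mul x i with hup | hdown
  · -- ℓ (s i * x) = ℓ x + 1
    rcases Classical.em (s i * x ∈ cs.minReps J) with hmem | hmem
    · right
      exact minRep_unique cs hy hyw hmem hsixcoset
    · -- there is a J-descent of s i * x
      have hex : ∃ j ∈ J, ℓ (s i * x * s j) < ℓ (s i * x) := by
        by_contra hcon
        push_neg at hcon
        apply hmem
        intro j hj
        have h1 := hcon j hj
        have h2 := cs.length_mul_simple_ne (s i * x) j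
        omega
      obtain ⟨j, hjJ, hjdesc⟩ := hex
      obtain ⟨α, hαlen, hα⟩ := cs.exists_reduced_word x
      have hαlen : α.length = ℓ x := by rw [hα]; exact (hαlen : ℓ (π α) = α.length).symm
      have hredcons : cs.IsReduced (i :: α) := by
        unfold CoxeterSystem.IsReduced
        rw [cs.wordProd_cons, ← hα, List.length_cons, hup, hαlen]
      have hjdesc' : ℓ (π (i :: α) * s j) < ℓ (π (i :: α)) := by
        rw [cs.wordProd_cons, ← hα]; exact hjdesc
      obtain ⟨k, hk, hkeq⟩ := exchange_simple cs hredcons hjdesc'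
      rw [cs.wordProd_cons, ← hα] at hkeq
      cases k with
      | zero =>
          -- s i * x * s j = x, so s i * x = x * s j
          rw [List.eraseIdx_cons_zero, ← hα] at hkeq
          left
          have h0 : y⁻¹ * x = (y⁻¹ * (s i * x)) * s j := by
            conv_lhs => rw [← hkeq]
            simp [mul_assoc]
          have h0mem : y⁻¹ * x ∈ cs.parabolic J := by
            rw [h0]
            exact mul_mem hcoset (simple_mem_parabolic cs hjJ)
          exact minRep_unique cs hy h0mem hx (by simpa using (one_mem (cs.parabolic J)))
      | succ m =>
          exfalso
          rw [List.eraseIdx_cons_succ, cs.wordProd_cons] at hkeq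
          have hcancel : x * s j = π (α.eraseIdx m) := by
            have h0 : s i * (x * s j) = s i * π (α.eraseIdx m) := by
              rw [← mul_assoc]; exact hkeq
            exact mul_left_cancel h0
          have hm : m < α.length := by
            rw [List.length_cons] at hk; omega
          have hlen1 : ℓ (x * s j) ≤ α.length - 1 := by
            have h1 := cs.length_wordProd_le (α.eraseIdx m)
            rw [← hcancel] at h1
            rwa [List.length_eraseIdx, if_pos hm] at h1
          have h6 := hx j hjJ
          omega
  · -- ℓ (s i * x) + 1 = ℓ x : then s i * x is automatically a minimal representative
    right
    have hmem : s i * x ∈ cs.minReps J := by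
      intro j hj
      by_contra hcon
      push_neg at hcon
      have h2 := cs.length_mul_simple_ne (s i * x) j
      have h3 : ℓ (s i * x * s j) + 1 = ℓ (s i * x) := by
        rcases cs.length_mul_simple (s i * x) j with h | h
        · omega
        · exact h
      have h4 : ℓ (x * s j) ≤ ℓ (s i * x * s j) + 1 := by
        have h5 : x * s j = s i * (s i * x * s j) := by
          rw [← mul_assoc, cs.simple_mul_simple_cancel_left]
        rw [h5]
        calc ℓ (s i * (s i * x * s j)) ≤ ℓ (s i) + ℓ (s i * x * s j) := cs.length_mul_le _ _
        _ = ℓ (s i * x * s j) + 1 := by rw [cs.length_simple]; omega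
      have := hx j hj
      omega
    exact minRep_unique cs hy hyw hmem hsixcoset

/-- Two prefixes of `w` cannot differ by a left ascent of `w`. -/
lemma no_cross {w x y : W} {i : B} (hasc : ℓ w < ℓ (s i * w))
    (hxp : ℓ w = ℓ x + ℓ (x⁻¹ * w)) (hyp : ℓ w = ℓ y + ℓ (y⁻¹ * w))
    (hxy : x = s i * y) : False := by
  have hne : ℓ x ≠ ℓ y := by
    rw [hxy]; exact cs.length_simple_mul_ne y i
  rcases lt_or_gt_of_ne hne with hlt | hgt
  · have h1 : ℓ (s i * w) ≤ ℓ (s i * y) + ℓ (y⁻¹ * w) := by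
      have h0 : s i * w = (s i * y) * (y⁻¹ * w) := by group
      rw [h0]; exact cs.length_mul_le _ _
    rw [← hxy] at h1
    omega
  · have hyx : y = s i * x := by
      rw [hxy, ← mul_assoc, cs.simple_mul_simple_self, one_mul]
    have h1 : ℓ (s i * w) ≤ ℓ (s i * x) + ℓ (x⁻¹ * w) := by
      have h0 : s i * w = (s i * x) * (x⁻¹ * w) := by group
      rw [h0]; exact cs.length_mul_le _ _
    rw [← hyx] at h1
    omega

lemma prefix_trans {w x y : W} (h1 : ℓ w = ℓ x + ℓ (x⁻¹ * w))
    (h2 : ℓ x = ℓ y + ℓ (y⁻¹ * x)) : ℓ w = ℓ y + ℓ (y⁻¹ * w) := by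
  have hub : ℓ (y⁻¹ * w) ≤ ℓ (y⁻¹ * x) + ℓ (x⁻¹ * w) := by
    have h0 : y⁻¹ * w = (y⁻¹ * x) * (x⁻¹ * w) := by group
    rw [h0]; exact cs.length_mul_le _ _
  have hlb : ℓ w ≤ ℓ y + ℓ (y⁻¹ * w) := by
    have h0 : w = y * (y⁻¹ * w) := by group
    calc ℓ w = ℓ (y * (y⁻¹ * w)) := by rw [← h0]
    _ ≤ ℓ y + ℓ (y⁻¹ * w) := cs.length_mul_le _ _
  omega

end Aux

end Aux

theorem stmt_7 (cs : CoxeterSystem M W) [Finite W] (P : Set B → W → W)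
    (hP : cs.IsProjFamily P) (I J : Set B)
    (w₀ : W) (hw₀ : ∀ u : W, cs.length u ≤ cs.length w₀) :
    (∀ w : W, P I (P J w) = P J (P I w)) ↔ P I (P J w₀) = P J (P I w₀) := by
  constructor
  · intro h; exact h w₀
  · intro h w
    have prefixP : ∀ (K : Set B) (u : W),
        cs.length u = cs.length (P K u) + cs.length ((P K u)⁻¹ * u) := fun K u =>
      Aux.minRep_prefix cs (hP K u).1 (hP K u).2
    have step : ∀ (i : B) (u : W), cs.length u < cs.length (cs.simple i * u) →
        P I (P J (cs.simple i * u)) = P J (P I (cs.simple i * u)) →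
        P I (P J u) = P J (P I u) := by
      intro i u hasc hcomm
      have hAB : P I (P J (cs.simple i * u)) = P I (P J u) ∨
          P I (P J (cs.simple i * u)) = cs.simple i * P I (P J u) := by
        rcases Aux.deodhar cs i (hP J u).1 (hP J u).2 (hP J (cs.simple i * u)).1
            (hP J (cs.simple i * u)).2 with h1 | h1
        · left; rw [h1]
        · rw [h1]
          exact Aux.deodhar cs i (hP I (P J u)).1 (hP I (P J u)).2
            (hP I (cs.simple i * P J u)).1 (hP I (cs.simple i * P J u)).2
      have hBA : P J (P I (cs.simple i * u)) = P J (P I u) ∨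
          P J (P I (cs.simple i * u)) = cs.simple i * P J (P I u) := by
        rcases Aux.deodhar cs i (hP I u).1 (hP I u).2 (hP I (cs.simple i * u)).1
            (hP I (cs.simple i * u)).2 with h1 | h1
        · left; rw [h1]
        · rw [h1]
          exact Aux.deodhar cs i (hP J (P I u)).1 (hP J (P I u)).2
            (hP J (cs.simple i * P I u)).1 (hP J (cs.simple i * P I u)).2
      have hprefAB : cs.length u
          = cs.length (P I (P J u)) + cs.length ((P I (P J u))⁻¹ * u) :=
        Aux.prefix_trans cs (prefixP J u) (prefixP I (P J u))
      have hprefBA : cs.length u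
          = cs.length (P J (P I u)) + cs.length ((P J (P I u))⁻¹ * u) :=
        Aux.prefix_trans cs (prefixP I u) (prefixP J (P I u))
      rcases hAB with h1 | h1 <;> rcases hBA with h2 | h2
      · rw [← h1, ← h2, hcomm]
      · exfalso
        exact Aux.no_cross cs hasc hprefAB hprefBA ((h1.symm.trans hcomm).trans h2)
      · exfalso
        exact Aux.no_cross cs hasc hprefBA hprefAB ((h2.symm.trans hcomm.symm).trans h1)
      · exact mul_left_cancel ((h1.symm.trans hcomm).trans h2)
    have main : ∀ n, ∀ u : W, cs.length w₀ - cs.length u ≤ n →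
        P I (P J u) = P J (P I u) := by
      intro n
      induction n with
      | zero =>
          intro u hu
          have hlen : cs.length u = cs.length w₀ := le_antisymm (hw₀ u) (by omega)
          rw [Aux.eq_w₀_of_length_eq cs w₀ hw₀ hlen]
          exact h
      | succ n ih =>
          intro u hu
          rcases eq_or_ne u w₀ with rfl | hne
          · exact h
          · have hlt : cs.length u < cs.length w₀ := by
              rcases lt_or_eq_of_le (hw₀ u) with h' | h'
              · exact h'
              · exact absurd (Aux.eq_w₀_of_length_eq cs w₀ hw₀ h') hne
            obtain ⟨i, hi⟩ := Aux.exists_ascent cs w₀ hw₀ hlt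
            exact step i u (by omega) (ih (cs.simple i * u) (by omega))
    exact main (cs.length w₀ - cs.length w) w le_rfl
end

section
/- Let (W,S) be a Coxeter system and let u, v ∈ W. For a reduced expression v = s₁s₂⋯s_k, define P^v := P^{{s₁}} ∘ P^{{s₂}} ∘ ⋯ ∘ P^{{s_k}} (composition of the one-generator projections). Then P^v(u) = e if and only if u ≤ v in the Bruhat order. -/
open CoxeterSystem

variable {B W : Type*} [Group W] {M : CoxeterMatrix B}

/-- The projection `P^{{s}}` onto `W^{{s}}`: removes a trailing `s` if that shortens `w`. -/
noncomputable def CoxeterSystem.projSimple (cs : CoxeterSystem M W) (s : B) (w : W) : W :=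
  if cs.length (w * cs.simple s) < cs.length w then w * cs.simple s else w

/-- For a word `ω = s₁ ⋯ s_k`, the composition `P^{{s₁}} ∘ ⋯ ∘ P^{{s_k}}`. -/
noncomputable def CoxeterSystem.projWord (cs : CoxeterSystem M W) (ω : List B) : W → W :=
  ω.foldr (fun s g => cs.projSimple s ∘ g) id

/-- The Bruhat order, via the subword property: `u ≤ v` iff some reduced word for `v`
has a subword whose product is `u`. -/
def CoxeterSystem.bruhatLE (cs : CoxeterSystem M W) (u v : W) : Prop :=
  ∃ ω : List B, cs.IsReduced ω ∧ cs.wordProd ω = v ∧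
    ∃ ω' : List B, ω'.Sublist ω ∧ cs.wordProd ω' = u

namespace BruhatAux

open List

attribute [local instance] Classical.propDecidable

variable (cs : CoxeterSystem M W)

local prefix:100 "s" => cs.simple
local prefix:100 "π" => cs.wordProd
local prefix:100 "ℓ" => cs.length
local prefix:100 "ris" => cs.rightInvSeq
local prefix:100 "lis" => cs.leftInvSeq

/-! ### Basic facts about inversion sequences -/

theorem ris_cons (a : B) (l : List B) :
    ris (a :: l) = ((π l)⁻¹ * s a * π l) :: ris l := rfl

theorem lis_cons (a : B) (l : List B) :
    lis (a :: l) = s a :: (lis l).map (MulAut.conj (s a)) := rfl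

theorem ris_append (α β : List B) :
    ris (α ++ β) = (ris α).map (fun z => (π β)⁻¹ * z * π β) ++ ris β := by
  induction α with
  | nil => simp
  | cons a α ih =>
      rw [cons_append, ris_cons, ris_cons, ih, map_cons, cons_append, wordProd_append]
      congr 1
      group

theorem conj_eq_iff (g z₁ z₂ : W) : g * z₁ * g⁻¹ = z₂ ↔ z₁ = g⁻¹ * z₂ * g := by
  constructor
  · intro h; rw [← h]; group
  · intro h; rw [h]; group

theorem count_lis_eq_count_ris (ρ : List B) (j : B) :
    (lis ρ).count ((π ρ) * s j * (π ρ)⁻¹) = (ris ρ).count (s j) := by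
  induction ρ generalizing j with
  | nil => simp
  | cons a ρ ih =>
      rw [lis_cons, ris_cons, count_cons, count_cons]
      have hkey : π (a :: ρ) * s j * (π (a :: ρ))⁻¹
          = (MulAut.conj (s a)) (π ρ * s j * (π ρ)⁻¹) := by
        rw [wordProd_cons, MulAut.conj_apply]
        group
      rw [hkey, List.count_map_of_injective _ _ (MulAut.conj (s a)).injective, ih]
      have hiff : (s a = (MulAut.conj (s a)) (π ρ * s j * (π ρ)⁻¹)) ↔
          ((π ρ)⁻¹ * s a * π ρ = s j) := by
        rw [MulAut.conj_apply]
        constructor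
        · intro h
          have h3 := (conj_eq_iff (s a) (π ρ * s j * (π ρ)⁻¹) (s a)).mp h.symm
          have h4 : π ρ * s j * (π ρ)⁻¹ = s a := by
            rw [h3]; group
          rw [← h4]; group
        · intro h
          rw [← h]; group
      simp only [beq_iff_eq, hiff]

/-! ### Inversion sequence of alternating words -/

theorem alt_odd_prod (i j : B) (k : ℕ) :
    π (alternatingWord i j (2 * k + 1)) = s j * (s i * s j) ^ k := by
  rw [prod_alternatingWord_eq_mul_pow]
  have h1 : ¬ Even (2 * k + 1) := by
    intro ⟨r, hr⟩; omega
  rw [if_neg h1]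
  have e : (2 * k + 1) / 2 = k := by omega
  rw [e]

theorem alt_conj (i j : B) (k : ℕ) :
    π (alternatingWord i j (2 * k + 3)) = s j * π (alternatingWord j i (2 * k + 1)) * s j := by
  have h1 : alternatingWord i j (2 * k + 3)
      = j :: (alternatingWord j i (2 * k + 1)).concat j := by
    have e1 : 2 * k + 3 = (2 * k + 2) + 1 := by ring
    rw [e1, alternatingWord_succ', if_pos (by exact ⟨k + 1, by ring⟩)]
    congr 1
  rw [h1, wordProd_cons, concat_eq_append, wordProd_append, wordProd_singleton, mul_assoc]

theorem ris_alt_perm (n : ℕ) (i j : B) :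
    (ris (alternatingWord i j n)).Perm
      ((List.range n).map (fun k => π (alternatingWord i j (2 * k + 1)))) := by
  induction n generalizing i j with
  | zero => simp [alternatingWord]
  | succ n ih =>
      rw [alternatingWord_succ, rightInvSeq_concat, range_succ_eq_map, map_cons, concat_eq_append]
      refine (perm_append_singleton _ _).trans ?_
      have h0 : π (alternatingWord i j (2 * 0 + 1)) = s j := by
        simp [alternatingWord]
      rw [h0]
      refine Perm.cons _ ?_
      have h1 := (ih j i).map (⇑(MulAut.conj (s j)))
      refine h1.trans ?_
      rw [map_map, map_map]
      apply Perm.of_eq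
      apply List.map_congr_left
      intro k _
      show (MulAut.conj (s j)) (π (alternatingWord j i (2 * k + 1)))
          = π (alternatingWord i j (2 * Nat.succ k + 1))
      have e2 : 2 * Nat.succ k + 1 = 2 * k + 3 := by omega
      rw [e2, alt_conj, MulAut.conj_apply, cs.inv_simple]

theorem count_ris_alt_even (i j : B) (t : W) :
    Even ((ris (alternatingWord i j (2 * M i j))).count t) := by
  rw [(ris_alt_perm cs (2 * M i j) i j).count_eq]
  have h2 : 2 * M i j = M i j + M i j := by ring
  rw [h2, List.range_add, map_append, count_append, map_map]
  have h3 : ((range (M i j)).map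
        ((fun k => π (alternatingWord i j (2 * k + 1))) ∘ (fun x => M i j + x)))
      = (range (M i j)).map (fun k => π (alternatingWord i j (2 * k + 1))) := by
    apply List.map_congr_left
    intro k _
    show π (alternatingWord i j (2 * (M i j + k) + 1)) = π (alternatingWord i j (2 * k + 1))
    rw [alt_odd_prod, alt_odd_prod, pow_add, cs.simple_mul_simple_pow, one_mul]
  rw [h3]
  exact ⟨_, rfl⟩

/-! ### The sign action and strong exchange -/

noncomputable def sigmaFun (i : B) : W × ZMod 2 → W × ZMod 2 :=
  fun p => (s i * p.1 * s i, p.2 + if p.1 = s i then 1 else 0)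

theorem sigmaFun_involutive (i : B) : Function.Involutive (sigmaFun cs i) := by
  rintro ⟨t, ε⟩
  unfold sigmaFun
  simp only
  have h1 : s i * (s i * t * s i) * s i = t := by
    calc s i * (s i * t * s i) * s i = (s i * s i) * t * (s i * s i) := by group
    _ = t := by rw [cs.simple_mul_simple_self]; group
  have h2 : (s i * t * s i = s i) ↔ (t = s i) := by
    constructor
    · intro h
      have h3 := congrArg (fun z => s i * z * s i) h
      rw [h1] at h3
      rw [h3]
      calc s i * s i * s i = (s i * s i) * s i := by group
      _ = s i := by rw [cs.simple_mul_simple_self, one_mul]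
    · intro h
      rw [h, cs.simple_mul_simple_self, one_mul]
  refine Prod.ext h1 ?_
  simp only [h2]
  by_cases ht : t = s i
  · rw [if_pos ht]
    have : (1 : ZMod 2) + 1 = 0 := rfl
    rw [add_assoc, this, add_zero]
  · rw [if_neg ht, add_zero, add_zero]

noncomputable def sigmaPerm (i : B) : Equiv.Perm (W × ZMod 2) :=
  (sigmaFun_involutive cs i).toPerm

theorem sigmaPerm_apply (i : B) (p : W × ZMod 2) : sigmaPerm cs i p = sigmaFun cs i p := rfl

theorem prod_map_sigma (ω : List B) (t : W) (ε : ZMod 2) :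
    ((ω.map (sigmaPerm cs)).prod) (t, ε)
      = (π ω * t * (π ω)⁻¹, ε + ((ris ω).count t : ZMod 2)) := by
  induction ω generalizing ε with
  | nil => simp
  | cons a ω ih =>
      rw [map_cons, prod_cons, Equiv.Perm.mul_apply, ih, sigmaPerm_apply]
      unfold sigmaFun
      simp only
      refine Prod.ext ?_ ?_
      · show s a * (π ω * t * (π ω)⁻¹) * s a = π (a :: ω) * t * (π (a :: ω))⁻¹
        rw [wordProd_cons, mul_inv_rev, cs.inv_simple]
        group
      · show ε + ((ris ω).count t : ZMod 2) + _ = ε + ((ris (a :: ω)).count t : ZMod 2)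
        rw [ris_cons, count_cons, add_assoc]
        congr 1
        push_cast
        congr 1
        have hiff : (π ω * t * (π ω)⁻¹ = s a) ↔ (((π ω)⁻¹ * s a * π ω) = t) := by
          rw [conj_eq_iff]
          constructor
          · intro h; rw [h]
          · intro h; rw [h]
        simp only [beq_iff_eq]
        by_cases hc : π ω * t * (π ω)⁻¹ = s a
        · rw [if_pos hc, if_pos (hiff.mp hc)]
        · rw [if_neg hc, if_neg (fun h => hc (hiff.mpr h))]

theorem prod_map_sigma_alt (i j : B) (m : ℕ) :
    ((alternatingWord i j (2 * m)).map (sigmaPerm cs)).prod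
      = (sigmaPerm cs i * sigmaPerm cs j) ^ m := by
  induction m with
  | zero => simp [alternatingWord]
  | succ m ih =>
      have h : alternatingWord i j (2 * (m + 1)) = i :: j :: alternatingWord i j (2 * m) := by
        have e1 : 2 * (m + 1) = (2 * m + 1) + 1 := by ring
        rw [e1, alternatingWord_succ', if_neg (by intro ⟨r, hr⟩; omega)]
        congr 1
        rw [alternatingWord_succ', if_pos ⟨m, by ring⟩]
      rw [h, map_cons, map_cons, prod_cons, prod_cons, ih, pow_succ', mul_assoc]

theorem isLiftable_sigma : M.IsLiftable (sigmaPerm cs) := by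
  intro i j
  rw [← prod_map_sigma_alt cs i j (M i j)]
  apply Equiv.ext
  rintro ⟨t, ε⟩
  rw [prod_map_sigma]
  have hπ : π (alternatingWord i j (2 * M i j)) = 1 := by
    rw [prod_alternatingWord_eq_mul_pow, if_pos ⟨M i j, by ring⟩, one_mul]
    have e : 2 * M i j / 2 = M i j := by omega
    rw [e, cs.simple_mul_simple_pow]
  have hc : (((ris (alternatingWord i j (2 * M i j))).count t : ℕ) : ZMod 2) = 0 := by
    obtain ⟨c, hceq⟩ := count_ris_alt_even cs i j t
    rw [hceq]
    push_cast
    rw [← two_mul, show (2 : ZMod 2) = 0 from rfl, zero_mul]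
  rw [hπ, hc, add_zero, one_mul, inv_one, mul_one]
  rfl

noncomputable def phi : W →* Equiv.Perm (W × ZMod 2) :=
  cs.lift ⟨sigmaPerm cs, isLiftable_sigma cs⟩

theorem phi_simple (i : B) : phi cs (s i) = sigmaPerm cs i :=
  cs.lift_apply_simple (isLiftable_sigma cs) i

theorem phi_wordProd (ω : List B) : phi cs (π ω) = (ω.map (sigmaPerm cs)).prod := by
  induction ω with
  | nil => simp [wordProd_nil]
  | cons a ω ih => rw [wordProd_cons, map_mul, ih, map_cons, prod_cons, phi_simple]

theorem count_ris_parity {ω ω' : List B} (h : π ω = π ω') (t : W) :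
    (((ris ω).count t : ℕ) : ZMod 2) = (((ris ω').count t : ℕ) : ZMod 2) := by
  have h3 : (ω.map (sigmaPerm cs)).prod = (ω'.map (sigmaPerm cs)).prod := by
    rw [← phi_wordProd, ← phi_wordProd, h]
  have h4 := congrArg (fun f : Equiv.Perm (W × ZMod 2) => f (t, 0)) h3
  rw [prod_map_sigma, prod_map_sigma] at h4
  have h5 := congrArg Prod.snd h4
  simpa using h5

theorem mem_rightInvSeq_of_isRightInversion (ω : List B) {t : W}
    (ht : cs.IsRightInversion (π ω) t) : t ∈ ris ω := by
  obtain ⟨hrefl, hlt⟩ := ht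
  obtain ⟨x0, j, hteq⟩ := hrefl
  obtain ⟨ρ, hρ⟩ := cs.wordProd_surjective x0
  obtain ⟨ω₀, hred₀, heq₀⟩ := cs.exists_reduced_word' (π ω * t)
  have hrefl' : cs.IsReflection t := ⟨x0, j, hteq⟩
  set τ : List B := ρ ++ ([j] ++ ρ.reverse) with hτ
  have hπτ : π τ = t := by
    rw [hτ, wordProd_append, wordProd_append, wordProd_singleton, wordProd_reverse, hρ, hteq]
    group
  have hw : π (ω₀ ++ τ) = π ω := by
    rw [wordProd_append, ← heq₀, hπτ, mul_assoc, hrefl'.mul_self, mul_one]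
  have hcount : (ris (ω₀ ++ τ)).count t = 2 * ((ris ρ).count (s j)) + 1 := by
    rw [ris_append, count_append]
    have hc0 : (((ris ω₀).map (fun z => (π τ)⁻¹ * z * π τ)).count t) = 0 := by
      rw [count_eq_zero]
      intro hmem
      obtain ⟨z, hz, hzt⟩ := mem_map.mp hmem
      have hz' : z = t := by
        rw [hπτ, hrefl'.inv] at hzt
        have h6 : t * (z * t) = t * 1 := by rw [mul_one, ← mul_assoc]; exact hzt
        have h7 := mul_left_cancel h6
        have h8 : z = t⁻¹ := eq_inv_of_mul_eq_one_left h7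
        rw [h8, hrefl'.inv]
      rw [hz'] at hz
      have h9 := cs.isRightInversion_of_mem_rightInvSeq hred₀ hz
      rw [← heq₀] at h9
      obtain ⟨-, h9l⟩ := h9
      have h10 : π ω * t * t = π ω := by rw [mul_assoc, hrefl'.mul_self, mul_one]
      rw [h10] at h9l
      omega
    rw [hc0, zero_add, hτ, ris_append, count_append]
    have hβ : π ([j] ++ ρ.reverse) = s j * x0⁻¹ := by
      rw [wordProd_append, wordProd_singleton, wordProd_reverse, hρ]
    have hmid : ris ([j] ++ ρ.reverse) = t :: (lis ρ).reverse := by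
      show ris (j :: ρ.reverse) = _
      rw [ris_cons, cs.rightInvSeq_reverse, wordProd_reverse, hρ, inv_inv, hteq]
    rw [hmid]
    have hcnt1 : ((ris ρ).map (fun z => (π ([j] ++ ρ.reverse))⁻¹ * z * π ([j] ++ ρ.reverse))).count t
        = (ris ρ).count (s j) := by
      have hinj : Function.Injective
          (fun z : W => (π ([j] ++ ρ.reverse))⁻¹ * z * π ([j] ++ ρ.reverse)) := by
        intro z₁ z₂ h
        simp only at h
        have := mul_right_cancel h
        exact mul_left_cancel this
      have hval : (fun z : W => (π ([j] ++ ρ.reverse))⁻¹ * z * π ([j] ++ ρ.reverse)) (s j) = t := by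
        simp only [hβ, hteq]
        group
      rw [← hval, List.count_map_of_injective _ _ hinj]
    rw [hcnt1, count_cons, if_pos (by simp), count_reverse]
    have hcnt2 : (lis ρ).count t = (ris ρ).count (s j) := by
      rw [hteq, ← hρ]
      exact count_lis_eq_count_ris cs ρ j
    rw [hcnt2]
    ring
  have hpar := count_ris_parity cs hw t
  rw [hcount] at hpar
  have hne : (ris ω).count t ≠ 0 := by
    intro h0
    rw [h0] at hpar
    push_cast at hpar
    rw [show ((2 : ZMod 2)) = 0 from rfl, zero_mul, zero_add] at hpar
    exact one_ne_zero hpar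
  exact count_pos_iff.mp (Nat.pos_of_ne_zero hne)

theorem strong_exchange (ω : List B) {t : W} (ht : cs.IsRightInversion (π ω) t) :
    ∃ n, n < ω.length ∧ π (ω.eraseIdx n) = π ω * t := by
  have hmem := mem_rightInvSeq_of_isRightInversion cs ω ht
  obtain ⟨n, hn, he⟩ := List.getElem_of_mem hmem
  have hn' : n < ω.length := by simpa using hn
  refine ⟨n, hn', ?_⟩
  rw [← cs.wordProd_mul_getD_rightInvSeq ω n]
  congr 1
  rw [List.getD_eq_getElem _ _ hn, he]

/-! ### The chain (reflection) order -/

def chainStep (x y : W) : Prop := ∃ t, cs.IsReflection t ∧ y = x * t ∧ ℓ x < ℓ y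

def chainLE : W → W → Prop := Relation.ReflTransGen (chainStep cs)

theorem chainLE_length_le {x y : W} (h : chainLE cs x y) : ℓ x ≤ ℓ y := by
  induction h with
  | refl => exact le_refl _
  | tail _ hstep ih =>
      obtain ⟨t, _, _, hlt⟩ := hstep
      omega

theorem chainStep_eraseIdx {ω : List B} (hred : cs.IsReduced ω) {n : ℕ} (hn : n < ω.length) :
    chainStep cs (π (ω.eraseIdx n)) (π ω) := by
  have hn2 : n < (ris ω).length := by simpa using hn
  have hmem : (ris ω).getD n 1 ∈ ris ω := by
    rw [List.getD_eq_getElem _ _ hn2]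
    exact List.getElem_mem _
  have hinv := cs.isRightInversion_of_mem_rightInvSeq hred hmem
  refine ⟨(ris ω).getD n 1, hinv.1, ?_, ?_⟩
  · rw [← cs.wordProd_mul_getD_rightInvSeq ω n, mul_assoc, hinv.1.mul_self, mul_one]
  · rw [← cs.wordProd_mul_getD_rightInvSeq ω n]
    exact hinv.2

/-! ### Deletion property -/

theorem exists_reduced_sublist_aux : ∀ n (ω : List B), ω.length = n →
    ∃ σ, σ.Sublist ω ∧ cs.IsReduced σ ∧ π σ = π ω := by
  intro n
  induction n using Nat.strong_induction_on with
  | _ n ih =>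
    intro ω hlen
    by_cases hred : cs.IsReduced ω
    · exact ⟨ω, Sublist.refl ω, hred, rfl⟩
    · have hex : ∃ k, ¬ cs.IsReduced (ω.take k) := ⟨ω.length, by rwa [List.take_length]⟩
      have hk : ¬ cs.IsReduced (ω.take (Nat.find hex)) := Nat.find_spec hex
      have hkle : Nat.find hex ≤ ω.length := Nat.find_min' hex (by rwa [List.take_length])
      have hk0 : Nat.find hex ≠ 0 := by
        intro h0
        rw [h0] at hk
        exact hk (by simp [CoxeterSystem.IsReduced])
      obtain ⟨k', hkeq⟩ : ∃ k', Nat.find hex = k' + 1 := ⟨Nat.find hex - 1, by omega⟩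
      have hmin : cs.IsReduced (ω.take k') :=
        not_not.mp (Nat.find_min hex (by omega))
      have hk'lt : k' < ω.length := by omega
      have htake : ω.take (k' + 1) = ω.take k' ++ [ω[k']] := by
        rw [List.take_succ, List.getElem?_eq_getElem hk'lt]
        rfl
      have hlentake : (ω.take k').length = k' := by
        rw [List.length_take]
        exact min_eq_left (le_of_lt hk'lt)
      have hw' : ℓ (π (ω.take k')) = k' := by
        have hmin' : ℓ (π (ω.take k')) = (ω.take k').length := hmin
        rwa [hlentake] at hmin'
      have hlt : ℓ (π (ω.take k') * s (ω[k'])) < ℓ (π (ω.take k')) := by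
        have hne : ℓ (π (ω.take k') * s (ω[k'])) ≠ k' + 1 := by
          intro hcon
          apply hk
          rw [hkeq]
          show ℓ (π (ω.take (k' + 1))) = (ω.take (k' + 1)).length
          rw [htake, wordProd_append, wordProd_singleton, List.length_append, hlentake]
          simpa using hcon
        rcases cs.length_mul_simple (π (ω.take k')) (ω[k']) with hh | hh
        · omega
        · omega
      obtain ⟨m, hm, hprm⟩ := strong_exchange cs (ω.take k')
        ⟨cs.isReflection_simple (ω[k']), hlt⟩
      have hπσ₀ : π ((ω.take k').eraseIdx m ++ ω.drop (k' + 1)) = π ω := by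
        rw [wordProd_append, hprm]
        conv_rhs => rw [← List.take_append_drop (k' + 1) ω]
        rw [wordProd_append, htake, wordProd_append, wordProd_singleton]
      have hσ₀sub : ((ω.take k').eraseIdx m ++ ω.drop (k' + 1)).Sublist ω := by
        have h1 : ((ω.take k').eraseIdx m).Sublist (ω.take (k' + 1)) := by
          rw [htake]
          exact (List.eraseIdx_sublist _ m).trans (List.sublist_append_left _ _)
        have h2 := List.Sublist.append h1 (List.Sublist.refl (ω.drop (k' + 1)))
        rwa [List.take_append_drop] at h2
      have hlen2 : ((ω.take k').eraseIdx m ++ ω.drop (k' + 1)).length < n := by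
        rw [List.length_append, List.length_eraseIdx, if_pos hm, hlentake, List.length_drop]
        rw [hlentake] at hm
        omega
      obtain ⟨σ, hs1, hs2, hs3⟩ := ih _ hlen2 _ rfl
      exact ⟨σ, hs1.trans hσ₀sub, hs2, by rw [hs3, hπσ₀]⟩

theorem exists_reduced_sublist (ω : List B) :
    ∃ σ, σ.Sublist ω ∧ cs.IsReduced σ ∧ π σ = π ω :=
  exists_reduced_sublist_aux cs ω.length ω rfl

/-! ### Chain order implies subword -/

theorem chain_to_sub_aux : ∀ n (ω : List B), ω.length = n → ∀ u, chainLE cs u (π ω) →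
    ∃ σ, σ.Sublist ω ∧ π σ = u := by
  intro n
  induction n using Nat.strong_induction_on with
  | _ n ih =>
    intro ω hlen u h
    obtain ⟨ρ, hρsub, hρred, hρπ⟩ := exists_reduced_sublist cs ω
    by_cases hcase : ρ.length = ω.length
    · have hρω : ρ = ω := hρsub.eq_of_length hcase
      rw [hρω] at hρred
      rcases Relation.ReflTransGen.cases_tail h with heq | ⟨c, hc, hstep⟩
      · exact ⟨ω, Sublist.refl ω, heq⟩
      · obtain ⟨t, htr, hct, hlt⟩ := hstep
        have hwt : π ω * t = c := by rw [hct, mul_assoc, htr.mul_self, mul_one]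
        have hinv : cs.IsRightInversion (π ω) t := ⟨htr, by rw [hwt]; exact hlt⟩
        obtain ⟨m, hm, hprm⟩ := strong_exchange cs ω hinv
        have hlen2 : (ω.eraseIdx m).length < n := by
          rw [List.length_eraseIdx, if_pos hm]
          omega
        have hc2 : chainLE cs u (π (ω.eraseIdx m)) := by
          rw [hprm, hwt]; exact hc
        obtain ⟨σ, hσ1, hσ2⟩ := ih _ hlen2 (ω.eraseIdx m) rfl u hc2
        exact ⟨σ, hσ1.trans (List.eraseIdx_sublist ω m), hσ2⟩
    · have hlt2 : ρ.length < n := by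
        have := hρsub.length_le
        omega
      obtain ⟨σ, h1, h2⟩ := ih _ hlt2 ρ rfl u (by rw [hρπ]; exact h)
      exact ⟨σ, h1.trans hρsub, h2⟩

theorem chain_to_sub (ω : List B) (u : W) (h : chainLE cs u (π ω)) :
    ∃ σ, σ.Sublist ω ∧ π σ = u :=
  chain_to_sub_aux cs ω.length ω rfl u h

/-! ### The lifting property for the chain order -/

theorem chain_lift (i : B) : ∀ n y, ℓ y = n → ∀ x, chainLE cs x y → ℓ x < ℓ (x * s i) →
    (ℓ y < ℓ (y * s i) → chainLE cs (x * s i) (y * s i)) ∧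
    (ℓ (y * s i) < ℓ y → chainLE cs (x * s i) y) := by
  intro n
  induction n using Nat.strong_induction_on with
  | _ n ihn =>
    intro y hy x hxy hx
    rcases Relation.ReflTransGen.cases_tail hxy with heq | ⟨y', hxy', hstep⟩
    · -- y = x
      subst heq
      constructor
      · intro _; exact Relation.ReflTransGen.refl
      · intro h2; omega
    · obtain ⟨t, htr, hyt, hlt⟩ := hstep
      have hy'lt : ℓ y' < n := by omega
      have IH := ihn (ℓ y') hy'lt y' rfl x hxy' hx
      constructor
      · -- part 1 : ℓ y < ℓ (y * s i)
        intro hyup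
        rcases (cs.length_mul_simple_ne y' i).lt_or_gt with hdown | hup
        · -- ℓ (y' * s i) < ℓ y'
          have hc := IH.2 hdown
          have st1 : chainStep cs y' y := ⟨t, htr, hyt, hlt⟩
          have st2 : chainStep cs y (y * s i) := ⟨s i, cs.isReflection_simple i, rfl, hyup⟩
          exact (hc.tail st1).tail st2
        · -- ℓ y' < ℓ (y' * s i)
          have hc := IH.1 hup
          have htr' : cs.IsReflection (s i * t * s i) := by
            have := htr.conj (s i)
            rwa [cs.inv_simple] at this
          have heq2 : y * s i = (y' * s i) * (s i * t * s i) := by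
            rw [hyt]
            have e : (y' * s i) * (s i * t * s i) = y' * (s i * s i) * (t * s i) := by group
            rw [e, cs.simple_mul_simple_self, mul_one, ← mul_assoc]
          have e1 : ℓ (y' * s i) = ℓ y' + 1 := by
            rcases cs.length_mul_simple y' i with hh | hh <;> omega
          have e2 : ℓ (y * s i) = ℓ y + 1 := by
            rcases cs.length_mul_simple y i with hh | hh <;> omega
          have st : chainStep cs (y' * s i) (y * s i) := ⟨s i * t * s i, htr', heq2, by omega⟩
          exact hc.tail st
      · -- part 2 : ℓ (y * s i) < ℓ y
        intro hydown
        rcases (cs.length_mul_simple_ne y' i).lt_or_gt with hdown | hup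
        · -- ℓ (y' * s i) < ℓ y'
          have hc := IH.2 hdown
          exact hc.tail ⟨t, htr, hyt, hlt⟩
        · -- ℓ y' < ℓ (y' * s i) : the strong exchange case
          have hc := IH.1 hup
          obtain ⟨ω1, hred1, heq1⟩ := cs.exists_reduced_word' (y * s i)
          have hveq : y = π (ω1 ++ [i]) := by
            rw [wordProd_append, wordProd_singleton, ← heq1, mul_assoc,
              cs.simple_mul_simple_self, mul_one]
          have hl1 : ℓ (y * s i) = ω1.length := by rw [heq1]; exact hred1
          have hly : ℓ y = ℓ (y * s i) + 1 := by
            rcases cs.length_mul_simple y i with hh | hh <;> omega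
          have hredv : cs.IsReduced (ω1 ++ [i]) := by
            show ℓ (π (ω1 ++ [i])) = (ω1 ++ [i]).length
            rw [← hveq, List.length_append]
            simpa using by omega
          have hyt2 : y * t = y' := by rw [hyt, mul_assoc, htr.mul_self, mul_one]
          have hinv : cs.IsRightInversion (π (ω1 ++ [i])) t := by
            rw [← hveq]
            exact ⟨htr, by rw [hyt2]; exact hlt⟩
          obtain ⟨m, hm, hprm⟩ := strong_exchange cs (ω1 ++ [i]) hinv
          rw [← hveq, hyt2] at hprm
          have hm' : m < ω1.length + 1 := by simpa using hm
          rcases Nat.lt_succ_iff_lt_or_eq.mp hm' with hmlt | hmeq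
          · -- erased inside ω1
            rw [List.eraseIdx_append_of_lt_length hmlt] at hprm
            have hz : y' * s i = π (ω1.eraseIdx m) := by
              rw [← hprm, wordProd_append, wordProd_singleton, mul_assoc,
                cs.simple_mul_simple_self, mul_one]
            have st1 : chainStep cs (π (ω1.eraseIdx m)) (π ω1) :=
              chainStep_eraseIdx cs hred1 hmlt
            have st2 : chainStep cs (π ω1) y := by
              refine ⟨s i, cs.isReflection_simple i, ?_, ?_⟩
              · rw [← heq1, mul_assoc, cs.simple_mul_simple_self, mul_one]
              · rw [← heq1]; omega
            have hfin : chainLE cs (π (ω1.eraseIdx m)) y :=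
              (Relation.ReflTransGen.single st1).tail st2
            rw [hz] at hc
            exact hc.trans hfin
          · -- erased the final letter : y' = y * s i
            have herase : (ω1 ++ [i]).eraseIdx m = ω1 := by
              rw [hmeq, List.eraseIdx_eq_take_drop_succ, List.take_left]
              have : List.drop (ω1.length + 1) (ω1 ++ [i]) = [] := by
                apply List.drop_eq_nil_of_le
                simp
              rw [this, List.append_nil]
            rw [herase] at hprm
            have : y' * s i = y := by
              rw [← hprm, ← heq1, mul_assoc, cs.simple_mul_simple_self, mul_one]
            rwa [this] at hc

/-! ### Subword implies chain order -/

theorem sub_to_chain_red (ω : List B) :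
    ∀ σ, cs.IsReduced ω → cs.IsReduced σ → σ.Sublist ω → chainLE cs (π σ) (π ω) := by
  induction ω using List.reverseRecOn with
  | nil =>
      intro σ _ _ hsub
      rw [List.sublist_nil] at hsub
      rw [hsub]
      exact Relation.ReflTransGen.refl
  | append_singleton ωa i ih =>
      intro σ hredω hredσ hsub
      have hredA : cs.IsReduced ωa := by
        have := CoxeterSystem.IsReduced.take hredω ωa.length
        rwa [List.take_left] at this
      have hπω : π (ωa ++ [i]) = π ωa * s i := by
        rw [wordProd_append, wordProd_singleton]
      have hlωa : ℓ (π ωa) = ωa.length := hredA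
      have hlω : ℓ (π (ωa ++ [i])) = ωa.length + 1 := by
        have h' : ℓ (π (ωa ++ [i])) = (ωa ++ [i]).length := hredω
        rwa [List.length_append, List.length_singleton] at h'
      rcases List.sublist_append_iff.mp hsub with ⟨l₁, l₂, rfl, h₁, h₂⟩
      have hl2 : l₂ = [] ∨ l₂ = [i] := sublist_singleton.mp h₂
      rcases hl2 with rfl | rfl
      · -- σ = l₁
        rw [List.append_nil] at hredσ ⊢
        have hch := ih l₁ hredA hredσ h₁
        refine hch.tail ⟨s i, cs.isReflection_simple i, hπω, ?_⟩
        omega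
      · -- σ = l₁ ++ [i]
        have hredl₁ : cs.IsReduced l₁ := by
          have := CoxeterSystem.IsReduced.take hredσ l₁.length
          rwa [List.take_left] at this
        have hch := ih l₁ hredA hredl₁ h₁
        have hπσ : π (l₁ ++ [i]) = π l₁ * s i := by
          rw [wordProd_append, wordProd_singleton]
        have hll₁ : ℓ (π l₁) = l₁.length := hredl₁
        have hlσ : ℓ (π (l₁ ++ [i])) = l₁.length + 1 := by
          have h' : ℓ (π (l₁ ++ [i])) = (l₁ ++ [i]).length := hredσ
          rwa [List.length_append, List.length_singleton] at h'
        have hx : ℓ (π l₁) < ℓ (π l₁ * s i) := by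
          rw [← hπσ] at *
          omega
        have hy : ℓ (π ωa) < ℓ (π ωa * s i) := by
          rw [← hπω] at *
          omega
        have := (chain_lift cs i (ℓ (π ωa)) (π ωa) rfl (π l₁) hch hx).1 hy
        rw [hπσ, hπω]
        exact this

theorem sub_to_chain (ω σ : List B) (hredω : cs.IsReduced ω) (hsub : σ.Sublist ω) :
    chainLE cs (π σ) (π ω) := by
  obtain ⟨σ', h1, h2, h3⟩ := exists_reduced_sublist cs σ
  rw [← h3]
  exact sub_to_chain_red cs ω σ' hredω h2 (h1.trans hsub)

/-! ### The projection operators -/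

theorem projWord_cons (a : B) (ω : List B) (u : W) :
    cs.projWord (a :: ω) u = cs.projSimple a (cs.projWord ω u) := rfl

theorem projWord_foldr (α : List B) (g : W → W) :
    List.foldr (fun b g => cs.projSimple b ∘ g) g α = (cs.projWord α) ∘ g := by
  induction α with
  | nil => rfl
  | cons a α ih =>
      show cs.projSimple a ∘ (List.foldr _ g α) = _
      rw [ih]
      rfl

theorem projWord_append (α β : List B) (u : W) :
    cs.projWord (α ++ β) u = cs.projWord α (cs.projWord β u) := by
  show (List.foldr (fun b g => cs.projSimple b ∘ g) id (α ++ β)) u = _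
  rw [List.foldr_append, projWord_foldr]
  rfl

theorem projWord_singleton (i : B) (u : W) :
    cs.projWord [i] u = cs.projSimple i u := rfl

theorem exists_sublist_projWord (ω : List B) (u : W) :
    ∃ σ, σ.Sublist ω ∧ u = cs.projWord ω u * π σ := by
  induction ω with
  | nil => exact ⟨[], Sublist.refl [], by simp [CoxeterSystem.projWord]⟩
  | cons a ω ih =>
      obtain ⟨σ', hσ', ihe⟩ := ih
      by_cases h : ℓ (cs.projWord ω u * s a) < ℓ (cs.projWord ω u)
      · refine ⟨a :: σ', List.Sublist.cons₂ a hσ', ?_⟩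
        rw [projWord_cons, CoxeterSystem.projSimple, if_pos h, wordProd_cons]
        calc u = cs.projWord ω u * π σ' := ihe
        _ = cs.projWord ω u * (s a * s a) * π σ' := by
            rw [cs.simple_mul_simple_self, mul_one]
        _ = cs.projWord ω u * s a * (s a * π σ') := by group
      · refine ⟨σ', List.Sublist.cons a hσ', ?_⟩
        rw [projWord_cons, CoxeterSystem.projSimple, if_neg h]
        exact ihe

theorem proj_le (u v : W) (i : B) (h : chainLE cs u v) (hv : ℓ (v * s i) < ℓ v) :
    chainLE cs (cs.projSimple i u) (v * s i) := by
  obtain ⟨ω1, hred1, heq1⟩ := cs.exists_reduced_word' (v * s i)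
  have hveq : v = π (ω1 ++ [i]) := by
    rw [wordProd_append, wordProd_singleton, ← heq1, mul_assoc,
      cs.simple_mul_simple_self, mul_one]
  have hl1 : ℓ (v * s i) = ω1.length := by rw [heq1]; exact hred1
  have hlv : ℓ v = ℓ (v * s i) + 1 := by
    rcases cs.length_mul_simple v i with hh | hh <;> omega
  have hredv : cs.IsReduced (ω1 ++ [i]) := by
    show ℓ (π (ω1 ++ [i])) = (ω1 ++ [i]).length
    rw [← hveq, List.length_append]
    simpa using by omega
  obtain ⟨σ, hσsub, hσπ⟩ := chain_to_sub cs (ω1 ++ [i]) u (by rw [← hveq]; exact h)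
  obtain ⟨σ', hs1, hs2, hs3⟩ := exists_reduced_sublist cs σ
  have hσ'sub : σ'.Sublist (ω1 ++ [i]) := hs1.trans hσsub
  have hπσ' : π σ' = u := by rw [hs3, hσπ]
  rcases List.sublist_append_iff.mp hσ'sub with ⟨l₁, l₂, hdecomp, h₁, h₂⟩
  rcases sublist_singleton.mp h₂ with rfl | rfl
  · -- σ' = l₁ : u is a subword product of ω1
    rw [List.append_nil] at hdecomp
    rw [hdecomp] at hs2 hπσ'
    have hu_le : chainLE cs u (v * s i) := by
      have := sub_to_chain_red cs ω1 l₁ hred1 hs2 h₁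
      rwa [hπσ', ← heq1] at this
    by_cases hui : ℓ (u * s i) < ℓ u
    · rw [CoxeterSystem.projSimple, if_pos hui]
      refine Relation.ReflTransGen.head ⟨s i, cs.isReflection_simple i, ?_, hui⟩ hu_le
      rw [mul_assoc, cs.simple_mul_simple_self, mul_one]
    · rw [CoxeterSystem.projSimple, if_neg hui]
      exact hu_le
  · -- σ' = l₁ ++ [i]
    rw [hdecomp] at hs2 hπσ'
    have hredl₁ : cs.IsReduced l₁ := by
      have := CoxeterSystem.IsReduced.take hs2 l₁.length
      rwa [List.take_left] at this
    have hπσ2 : π (l₁ ++ [i]) = π l₁ * s i := by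
      rw [wordProd_append, wordProd_singleton]
    have hll₁ : ℓ (π l₁) = l₁.length := hredl₁
    have hlσ : ℓ (π (l₁ ++ [i])) = l₁.length + 1 := by
      have h' : ℓ (π (l₁ ++ [i])) = (l₁ ++ [i]).length := hs2
      rwa [List.length_append, List.length_singleton] at h'
    have husi : u * s i = π l₁ := by
      rw [← hπσ', hπσ2, mul_assoc, cs.simple_mul_simple_self, mul_one]
    have hui : ℓ (u * s i) < ℓ u := by
      rw [husi, ← hπσ']
      omega
    rw [CoxeterSystem.projSimple, if_pos hui, husi]
    have := sub_to_chain_red cs ω1 l₁ hred1 hredl₁ h₁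
    rwa [← heq1] at this

theorem projWord_eq_one (ω : List B) : cs.IsReduced ω → ∀ u, chainLE cs u (π ω) →
    cs.projWord ω u = 1 := by
  induction ω using List.reverseRecOn with
  | nil =>
      intro _ u h
      have h1 : ℓ u ≤ 0 := by
        have := chainLE_length_le cs h
        simpa using this
      have h2 : u = 1 := cs.length_eq_zero_iff.mp (by omega)
      rw [h2]
      rfl
  | append_singleton ωa i ih =>
      intro hred u h
      have hredA : cs.IsReduced ωa := by
        have := CoxeterSystem.IsReduced.take hred ωa.length
        rwa [List.take_left] at this
      have hπ : π (ωa ++ [i]) = π ωa * s i := by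
        rw [wordProd_append, wordProd_singleton]
      have hback : π (ωa ++ [i]) * s i = π ωa := by
        rw [hπ, mul_assoc, cs.simple_mul_simple_self, mul_one]
      have hlω : ℓ (π (ωa ++ [i])) = ωa.length + 1 := by
        have h' : ℓ (π (ωa ++ [i])) = (ωa ++ [i]).length := hred
        rwa [List.length_append, List.length_singleton] at h'
      have hlωa : ℓ (π ωa) = ωa.length := hredA
      have hlt : ℓ (π (ωa ++ [i]) * s i) < ℓ (π (ωa ++ [i])) := by
        rw [hback]
        omega
      have hp := proj_le cs u (π (ωa ++ [i])) i h hlt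
      rw [hback] at hp
      have := ih hredA (cs.projSimple i u) hp
      rw [projWord_append, projWord_singleton]
      exact this

end BruhatAux

theorem stmt_8 (cs : CoxeterSystem M W) (u v : W)
    (ω : List B) (hred : cs.IsReduced ω) (hprod : cs.wordProd ω = v) :
    cs.projWord ω u = 1 ↔ cs.bruhatLE u v := by
  constructor
  · intro h1
    obtain ⟨σ, hs, he⟩ := BruhatAux.exists_sublist_projWord cs ω u
    rw [h1, one_mul] at he
    exact ⟨ω, hred, hprod, σ, hs, he.symm⟩
  · rintro ⟨ω₂, hred₂, hprod₂, σ, hs, hpσ⟩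
    have hchain : BruhatAux.chainLE cs u (cs.wordProd ω) := by
      have := BruhatAux.sub_to_chain cs ω₂ σ hred₂ hs
      rwa [hpσ, hprod₂, ← hprod] at this
    exact BruhatAux.projWord_eq_one cs ω hred u hchain
end
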